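/- arXiv:1902.00188 — 3 statements merged into one kernel-verified Lean document; each statement's English description precedes it below -/
import Mathlib

section
/- Let T be a tent map whose critical point c has infinite orbit and let x be an endpoint of the core inverse limit X′. Then the full σ-orbit {σ^n(x) : n ∈ ℤ} is dense in the set F of folding points. Consequently, each of the σ-invariant subsets E_S, E_N, E_F (spiral, nasty, flat endpoints) is not closed in F unless it is empty or equal to F. -/
open Set Filter Topology

/-- The inverse limit `lim←(K, T)`, as the space of backward orbits. -/
abbrev InvLim (T : ℝ → ℝ) (K : Set ℝ) :=
  {x : ℕ → ℝ // (∀ n, x n ∈ K) ∧ ∀ n, T (x (n + 1)) = x n}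

/-- The shift homeomorphism `σ(…,x₋₁,x₀) = (…,x₋₁,x₀,T x₀)`. -/
def shiftMap (T : ℝ → ℝ) (K : Set ℝ) (hK : Set.MapsTo T K K)
    (x : InvLim T K) : InvLim T K :=
  ⟨fun n => match n with
    | 0 => T (x.1 0)
    | (m + 1) => x.1 m,
   ⟨fun n => by
      cases n with
      | zero => exact hK (x.2.1 0)
      | succ m => exact x.2.1 m,
    fun n => by
      cases n with
      | zero => rfl
      | succ m => exact x.2.2 m⟩⟩

/-- The inverse of the shift homeomorphism. -/
def shiftInv (T : ℝ → ℝ) (K : Set ℝ) (x : InvLim T K) : InvLim T K :=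
  ⟨fun n => x.1 (n + 1), ⟨fun n => x.2.1 (n + 1), fun n => x.2.2 (n + 1)⟩⟩

/-- A subset of a topological space is an arc if it is the image of `[0,1]` under a
topological embedding. -/
def IsArc {Z : Type*} [TopologicalSpace Z] (A : Set Z) : Prop :=
  ∃ f : Set.Icc (0:ℝ) 1 → Z, Topology.IsEmbedding f ∧ Set.range f = A

/-- A point `x` is an endpoint if for any two subcontinua `A`, `B` containing `x`,
either `A ⊆ B` or `B ⊆ A`. -/
def IsEndpointPt {Z : Type*} [TopologicalSpace Z] (x : Z) : Prop :=
  ∀ A B : Set Z, IsCompact A → IsConnected A → IsCompact B → IsConnected B →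
    x ∈ A → x ∈ B → A ⊆ B ∨ B ⊆ A

/-- The ω-limit set of `c` under `T`. -/
def omegaSet (T : ℝ → ℝ) (c : ℝ) : Set ℝ :=
  {y | ∃ φ : ℕ → ℕ, StrictMono φ ∧
    Filter.Tendsto (fun n => T^[φ n] c) Filter.atTop (nhds y)}

/-- The basic arc of `x`: the closure of the set of points sharing the backward
itinerary of `x`. -/
def basicArcOf (T : ℝ → ℝ) (K : Set ℝ) (c : ℝ) (x : InvLim T K) : Set (InvLim T K) :=
  closure {y : InvLim T K | ∀ i, 1 ≤ i → y.1 i = c ∨ (c < y.1 i ↔ c < x.1 i)}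


namespace Stmt12Aux

variable {s : ℝ} {T : ℝ → ℝ} {c : ℝ} {K : Set ℝ}

section Tlemmas

lemma contT (hT : ∀ x, T x = min (s * x) (s * (1 - x))) : Continuous T := by
  have : T = fun x => min (s * x) (s * (1 - x)) := funext hT
  rw [this]; fun_prop

lemma T_left (hT : ∀ x, T x = min (s * x) (s * (1 - x))) (hs0 : 0 ≤ s) (hc : c = 1/2)
    {u : ℝ} (h : u ≤ c) : T u = s * u := by
  rw [hT]
  refine min_eq_left ?_
  subst hc; nlinarith

lemma T_right (hT : ∀ x, T x = min (s * x) (s * (1 - x))) (hs0 : 0 ≤ s) (hc : c = 1/2)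
    {u : ℝ} (h : c ≤ u) : T u = s * (1 - u) := by
  rw [hT]
  refine min_eq_right ?_
  subst hc; nlinarith

lemma Tc_sub (hT : ∀ x, T x = min (s * x) (s * (1 - x))) (hs0 : 0 ≤ s) (hc : c = 1/2)
    (u : ℝ) : T c - T u = s * |u - c| := by
  rcases le_total u c with h | h
  · rw [T_left hT hs0 hc h, T_left hT hs0 hc le_rfl, abs_of_nonpos (by linarith)]
    ring
  · rw [T_right hT hs0 hc h, T_right hT hs0 hc le_rfl, abs_of_nonneg (by linarith)]
    ring

lemma T_monoOn (hT : ∀ x, T x = min (s * x) (s * (1 - x))) (hs0 : 0 ≤ s) (hc : c = 1/2) :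
    MonotoneOn T (Iic c) := by
  intro u hu v hv huv
  rw [T_left hT hs0 hc hu, T_left hT hs0 hc hv]
  nlinarith

lemma T_antiOn (hT : ∀ x, T x = min (s * x) (s * (1 - x))) (hs0 : 0 ≤ s) (hc : c = 1/2) :
    AntitoneOn T (Ici c) := by
  intro u hu v hv huv
  rw [T_right hT hs0 hc hu, T_right hT hs0 hc hv]
  nlinarith

end Tlemmas

section Coords

lemma coord_iterate (z : InvLim T K) (n k : ℕ) : T^[k] (z.1 (n + k)) = z.1 n := by
  induction k with
  | zero => rfl
  | succ k ih =>
    rw [Function.iterate_succ_apply]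
    have h1 : T (z.1 ((n + k) + 1)) = z.1 (n + k) := z.2.2 (n + k)
    rw [show n + (k+1) = (n + k) + 1 from rfl, h1, ih]

lemma shiftInv_coord (z : InvLim T K) (j : ℕ) : (shiftInv T K z).1 j = z.1 (j + 1) := rfl

lemma shiftInv_iter_coord (z : InvLim T K) (M j : ℕ) :
    ((shiftInv T K)^[M] z).1 j = z.1 (j + M) := by
  induction M generalizing z with
  | zero => rfl
  | succ M ih =>
    rw [Function.iterate_succ_apply, ih (shiftInv T K z), shiftInv_coord]
    congr 1

lemma shiftMap_iter_coord_le (hK : Set.MapsTo T K K) (z : InvLim T K) (M i : ℕ) (h : i ≤ M) :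
    ((shiftMap T K hK)^[M] z).1 i = T^[M - i] (z.1 0) := by
  induction M generalizing i with
  | zero =>
    simp only [Nat.le_zero] at h
    subst h
    rfl
  | succ M ih =>
    rw [Function.iterate_succ_apply']
    cases i with
    | zero =>
      show T (((shiftMap T K hK)^[M] z).1 0) = T^[M + 1 - 0] (z.1 0)
      rw [ih 0 (Nat.zero_le _), show M + 1 - 0 = (M - 0) + 1 from by omega,
        Function.iterate_succ_apply']
    | succ i =>
      show ((shiftMap T K hK)^[M] z).1 i = T^[M + 1 - (i+1)] (z.1 0)
      rw [ih i (by omega)]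
      congr 1; omega

lemma shiftInv_shiftMap (hK : Set.MapsTo T K K) (z : InvLim T K) :
    shiftInv T K (shiftMap T K hK z) = z := by
  apply Subtype.ext; funext n; rfl

lemma shiftMap_shiftInv (hK : Set.MapsTo T K K) (z : InvLim T K) :
    shiftMap T K hK (shiftInv T K z) = z := by
  apply Subtype.ext; funext n
  cases n with
  | zero => exact z.2.2 0
  | succ m => rfl

lemma cont_shiftInv : Continuous (shiftInv T K) := by
  apply Continuous.subtype_mk
  exact continuous_pi fun n => (continuous_apply (n+1)).comp continuous_subtype_val

lemma cont_shiftMap (hT : ∀ x, T x = min (s * x) (s * (1 - x))) (hK : Set.MapsTo T K K) :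
    Continuous (shiftMap T K hK) := by
  apply Continuous.subtype_mk
  apply continuous_pi
  intro n
  cases n with
  | zero => exact (contT hT).comp ((continuous_apply 0).comp continuous_subtype_val)
  | succ m => exact (continuous_apply m).comp continuous_subtype_val

def shiftHomeo (hT : ∀ x, T x = min (s * x) (s * (1 - x))) (hK : Set.MapsTo T K K) :
    InvLim T K ≃ₜ InvLim T K where
  toFun := shiftMap T K hK
  invFun := shiftInv T K
  left_inv := shiftInv_shiftMap hK
  right_inv := shiftMap_shiftInv hK
  continuous_toFun := cont_shiftMap hT hK
  continuous_invFun := cont_shiftInv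

lemma shiftInv_iter_shiftMap_iter (hK : Set.MapsTo T K K) (z : InvLim T K) {M P : ℕ}
    (h : M ≤ P) : (shiftInv T K)^[M] ((shiftMap T K hK)^[P] z)
      = (shiftMap T K hK)^[P - M] z := by
  have hli : Function.LeftInverse (shiftInv T K) (shiftMap T K hK) := shiftInv_shiftMap hK
  calc (shiftInv T K)^[M] ((shiftMap T K hK)^[P] z)
      = (shiftInv T K)^[M] ((shiftMap T K hK)^[M] ((shiftMap T K hK)^[P-M] z)) := by
        rw [← Function.iterate_add_apply]
        congr 2
        omega
    _ = _ := (hli.iterate M) _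

lemma isEndpointPt_homeo {Z W : Type*} [TopologicalSpace Z] [TopologicalSpace W]
    (h : Z ≃ₜ W) {z : Z} (hz : IsEndpointPt z) : IsEndpointPt (h z) := by
  intro A B hAc hAconn hBc hBconn hmA hmB
  have key := hz (h.symm '' A) (h.symm '' B)
    (hAc.image h.symm.continuous) (hAconn.image _ h.symm.continuous.continuousOn)
    (hBc.image h.symm.continuous) (hBconn.image _ h.symm.continuous.continuousOn)
    ⟨h z, hmA, h.symm_apply_apply z⟩ ⟨h z, hmB, h.symm_apply_apply z⟩
  rcases key with k | k
  · left
    intro a ha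
    have : h.symm a ∈ h.symm '' B := k ⟨a, ha, rfl⟩
    rcases this with ⟨b, hb, hb2⟩
    rwa [← h.symm.injective hb2]
  · right
    intro a ha
    have : h.symm a ∈ h.symm '' A := k ⟨a, ha, rfl⟩
    rcases this with ⟨b, hb, hb2⟩
    rwa [← h.symm.injective hb2]

end Coords

end Stmt12Aux

namespace Stmt12Aux

section Recurrence

variable {s : ℝ} {T : ℝ → ℝ} {c : ℝ} {K : Set ℝ}

/-- M1: coordinates of an endpoint return near `c` at arbitrarily large indices. -/
lemma endpoint_coord_rec
    (hs1 : 1 < s) (hs2 : s < 2)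
    (hT : ∀ x, T x = min (s * x) (s * (1 - x))) (hc : c = 1/2)
    (hKdef : K = Set.Icc (T (T c)) (T c)) (hK : Set.MapsTo T K K)
    (z : InvLim T K) (hz : IsEndpointPt z) :
    ∀ ε > 0, ∀ N₀ : ℕ, ∃ n, N₀ ≤ n ∧ |z.1 n - c| < ε := by
  subst hKdef
  by_contra hcon
  push_neg at hcon
  obtain ⟨ε, hε, N, hN⟩ := hcon
  have hs0 : (0:ℝ) ≤ s := by linarith
  have hspos : (0:ℝ) < s := by linarith
  have hcc : c ≤ T c := by
    rw [T_left hT hs0 hc le_rfl, hc]; nlinarith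
  have haa : T (T c) = s * (1 - T c) := T_right hT hs0 hc hcc
  have hTTc_pos : 0 < T (T c) := by
    rw [haa, T_left hT hs0 hc le_rfl, hc]; nlinarith
  -- top margin
  have htop : ∀ n, N ≤ n → z.1 n ≤ T c - s * ε := by
    intro n hn
    have h1 : T c - z.1 n = s * |z.1 (n+1) - c| := by
      rw [← z.2.2 n]; exact Tc_sub hT hs0 hc _
    have h2 : ε ≤ |z.1 (n+1) - c| := hN (n+1) (by omega)
    nlinarith
  have hm'1 : (0:ℝ) < s * s * ε := by positivity
  have hm'2 : (0:ℝ) < (s - 1) * (T (T c)) := by nlinarith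
  set m' : ℝ := min (s * s * ε) ((s - 1) * (T (T c))) with hm'def
  have hm' : 0 < m' := lt_min hm'1 hm'2
  -- bottom margin
  have hbot : ∀ n, N ≤ n → T (T c) + m' ≤ z.1 n := by
    intro n hn
    have hmem := z.2.1 (n+1)
    rcases le_or_gt (z.1 (n+1)) c with hside | hside
    · have h1 : z.1 n = s * z.1 (n+1) := by rw [← z.2.2 n, T_left hT hs0 hc hside]
      have h2 : T (T c) ≤ z.1 (n+1) := hmem.1
      have h3 : m' ≤ (s - 1) * (T (T c)) := min_le_right _ _
      nlinarith
    · have h1 : z.1 n = s * (1 - z.1 (n+1)) := by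
        rw [← z.2.2 n, T_right hT hs0 hc hside.le]
      have h2 : z.1 (n+1) ≤ T c - s * ε := htop (n+1) (by omega)
      have h3 : m' ≤ s * s * ε := min_le_left _ _
      have h4 : T (T c) = s * (1 - T c) := haa
      nlinarith
  set δ : ℝ := min ε m' / 2 with hδdef
  have hδpos : 0 < δ := by
    have h0 : 0 < min ε m' := lt_min hε hm'
    rw [hδdef]; linarith
  have hδε : δ < ε := by
    have h1 : min ε m' ≤ ε := min_le_left _ _
    rw [hδdef]; linarith
  have hδm : δ ≤ m' := by
    have h1 : min ε m' ≤ m' := min_le_right _ _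
    rw [hδdef]; linarith
  have hδsε : δ ≤ s * ε := by nlinarith
  -- the multiplier sequence
  set r : ℕ → ℝ := fun k =>
    Nat.rec (1:ℝ) (fun k rk => if z.1 (N+k+1) < c then rk / s else -rk / s) k with hrdef
  have hr0 : r 0 = 1 := rfl
  have hrsucc : ∀ k, r (k+1) = if z.1 (N+k+1) < c then r k / s else -(r k) / s := by
    intro k; rfl
  have hrabs : ∀ k, |r k| ≤ 1 := by
    intro k
    induction k with
    | zero => simp [hr0]
    | succ k ih =>
      rw [hrsucc k]
      have hd : |r k / s| ≤ 1 := by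
        rw [abs_div, abs_of_nonneg hs0, div_le_one hspos]
        linarith
      split_ifs
      · exact hd
      · rw [neg_div, abs_neg]; exact hd
  -- the lifted family
  set w : ℝ → ℕ → ℝ := fun t n =>
    if n < N then T^[N - n] t else z.1 n + (t - z.1 N) * r (n - N) with hwdef
  have hwk : ∀ t k, w t (N + k) = z.1 (N+k) + (t - z.1 N) * r k := by
    intro t k
    simp only [hwdef]
    rw [if_neg (by omega), Nat.add_sub_cancel_left]
  have hwN : ∀ t, w t N = t := by
    intro t
    have h := hwk t 0
    rw [hr0] at h
    simpa using h
  have hwlow : ∀ t, ∀ n, n < N → w t n = T^[N - n] t := by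
    intro t n hn
    simp only [hwdef]
    rw [if_pos hn]
  -- distance control
  have hwdist : ∀ t, |t - z.1 N| ≤ δ → ∀ k, |w t (N+k) - z.1 (N+k)| ≤ δ := by
    intro t ht k
    rw [hwk, add_sub_cancel_left, abs_mul]
    calc |t - z.1 N| * |r k| ≤ δ * 1 :=
          mul_le_mul ht (hrabs k) (abs_nonneg _) hδpos.le
      _ = δ := mul_one δ
  -- membership
  have hmemb : ∀ t, |t - z.1 N| ≤ δ → ∀ n, w t n ∈ Set.Icc (T (T c)) (T c) := by
    intro t ht n
    have habs := abs_le.1 ht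
    rcases lt_or_ge n N with hn | hn
    · rw [hwlow t n hn]
      have htK : t ∈ Set.Icc (T (T c)) (T c) := by
        refine Set.mem_Icc.2 ⟨?_, ?_⟩
        · have := hbot N le_rfl; linarith [habs.1]
        · have := htop N le_rfl; linarith [habs.2]
      exact (hK.iterate (N - n)) htK
    · obtain ⟨k, rfl⟩ : ∃ k, n = N + k := ⟨n - N, by omega⟩
      have hd := abs_le.1 (hwdist t ht k)
      refine Set.mem_Icc.2 ⟨?_, ?_⟩
      · have := hbot (N+k) (by omega); linarith [hd.1]
      · have := htop (N+k) (by omega); linarith [hd.2]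
  -- relations
  have hrel : ∀ t, |t - z.1 N| ≤ δ → ∀ n, T (w t (n+1)) = w t n := by
    intro t ht n
    rcases lt_or_ge (n+1) N with hn | hn
    · rw [hwlow t (n+1) hn, hwlow t n (by omega)]
      rw [show N - n = (N - (n+1)) + 1 from by omega, Function.iterate_succ_apply']
    · rcases Nat.eq_or_lt_of_le hn with heq | _
      · -- N = n + 1
        rw [← heq, hwN, hwlow t n (by omega), show N - n = 1 from by omega]
        rfl
      · -- n ≥ N
        obtain ⟨k, rfl⟩ : ∃ k, n = N + k := ⟨n - N, by omega⟩
        have e1 : w t (N + k + 1) = z.1 (N+k+1) + (t - z.1 N) * r (k+1) := hwk t (k+1)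
        have e0 : w t (N + k) = z.1 (N+k) + (t - z.1 N) * r k := hwk t k
        rw [e1, e0]
        have hsidebig : ε ≤ |z.1 (N+k+1) - c| := hN (N+k+1) (by omega)
        have hdr : |(t - z.1 N) * r (k+1)| ≤ δ := by
          have h2 : |w t (N+k+1) - z.1 (N+k+1)| ≤ δ := hwdist t ht (k+1)
          rw [e1, add_sub_cancel_left] at h2
          exact h2
        have hdrr := abs_le.1 hdr
        have hzrel : T (z.1 (N+k+1)) = z.1 (N+k) := z.2.2 (N+k)
        rcases lt_or_ge (z.1 (N+k+1)) c with hside | hside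
        · have hside' : z.1 (N+k+1) ≤ c - ε := by
            rcases abs_cases (z.1 (N+k+1) - c) with ⟨h1, h2⟩ | ⟨h1, h2⟩
            · linarith
            · rw [h1] at hsidebig; linarith
          have hrr : r (k+1) = r k / s := by rw [hrsucc k, if_pos hside]
          have hwle : z.1 (N+k+1) + (t - z.1 N) * r (k+1) ≤ c := by
            linarith [hdrr.2]
          rw [T_left hT hs0 hc hwle, hrr]
          have hz2 : s * z.1 (N+k+1) = z.1 (N+k) := by
            rw [← T_left hT hs0 hc hside.le]; exact hzrel
          have hdd : s * ((t - z.1 N) * (r k / s)) = (t - z.1 N) * r k := by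
            field_simp
            try ring
          rw [mul_add, hdd, hz2]
        · have hside' : c + ε ≤ z.1 (N+k+1) := by
            rw [abs_of_nonneg (by linarith)] at hsidebig
            linarith
          have hrr : r (k+1) = -(r k) / s := by rw [hrsucc k, if_neg (not_lt.2 hside)]
          have hwge : c ≤ z.1 (N+k+1) + (t - z.1 N) * r (k+1) := by
            linarith [hdrr.1]
          rw [T_right hT hs0 hc hwge, hrr]
          have hz2 : s * (1 - z.1 (N+k+1)) = z.1 (N+k) := by
            rw [← T_right hT hs0 hc hside]; exact hzrel
          have hdd : s * ((t - z.1 N) * (-(r k) / s)) = -((t - z.1 N) * r k) := by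
            field_simp
            try ring
          calc s * (1 - (z.1 (N+k+1) + (t - z.1 N) * (-(r k) / s)))
              = s * (1 - z.1 (N+k+1)) - s * ((t - z.1 N) * (-(r k) / s)) := by ring
            _ = z.1 (N+k) + (t - z.1 N) * r k := by rw [hdd, hz2]; ring
  -- clamp
  set cl : ℝ → ℝ := fun t => max (z.1 N - δ) (min t (z.1 N + δ)) with hcldef
  have hclmem : ∀ t, |cl t - z.1 N| ≤ δ := by
    intro t
    rw [abs_le]
    constructor
    · have h : z.1 N - δ ≤ max (z.1 N - δ) (min t (z.1 N + δ)) := le_max_left _ _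
      simp only [hcldef]; linarith
    · have h1 : min t (z.1 N + δ) ≤ z.1 N + δ := min_le_right _ _
      have h2 : max (z.1 N - δ) (min t (z.1 N + δ)) ≤ z.1 N + δ :=
        max_le (by linarith) h1
      simp only [hcldef]; linarith
  have hcleq : ∀ t, t ∈ Set.Icc (z.1 N - δ) (z.1 N + δ) → cl t = t := by
    intro t ht
    simp only [hcldef]
    rw [min_eq_left ht.2, max_eq_right ht.1]
  have hclcont : Continuous cl := by
    simp only [hcldef]; fun_prop
  -- the map into the inverse limit
  set f : ℝ → InvLim T (Set.Icc (T (T c)) (T c)) := fun t =>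
    ⟨fun n => w (cl t) n, fun n => hmemb (cl t) (hclmem t) n,
      fun n => hrel (cl t) (hclmem t) n⟩ with hfdef
  have hfcoord : ∀ t n, (f t).1 n = w (cl t) n := fun t n => rfl
  have hfcont : Continuous f := by
    apply Continuous.subtype_mk
    apply continuous_pi
    intro n
    rcases lt_or_ge n N with hn | hn
    · have he : (fun t => w (cl t) n) = fun t => T^[N - n] (cl t) := by
        funext t; exact hwlow (cl t) n hn
      rw [he]
      exact ((contT hT).iterate (N-n)).comp hclcont
    · have he : (fun t => w (cl t) n) = fun t => z.1 n + (cl t - z.1 N) * r (n - N) := by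
        funext t
        simp only [hwdef]
        rw [if_neg (by omega)]
      rw [he]
      fun_prop
  have hfN : ∀ t, (f t).1 N = cl t := fun t => hwN (cl t)
  have hfz : f (z.1 N) = z := by
    apply Subtype.ext
    funext n
    have hclz : cl (z.1 N) = z.1 N := hcleq _ ⟨by linarith, by linarith⟩
    show w (cl (z.1 N)) n = z.1 n
    rw [hclz]
    rcases lt_or_ge n N with hn | hn
    · rw [hwlow _ n hn]
      have h := coord_iterate z n (N - n)
      rwa [show n + (N - n) = N from by omega] at h
    · obtain ⟨k, rfl⟩ : ∃ k, n = N + k := ⟨n - N, by omega⟩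
      rw [hwk]
      ring
  -- two incomparable continua
  set A : Set (InvLim T (Set.Icc (T (T c)) (T c))) := f '' Set.Icc (z.1 N - δ) (z.1 N)
    with hAdef
  set B : Set (InvLim T (Set.Icc (T (T c)) (T c))) := f '' Set.Icc (z.1 N) (z.1 N + δ)
    with hBdef
  have hzA : z ∈ A := ⟨z.1 N, ⟨by linarith, le_rfl⟩, hfz⟩
  have hzB : z ∈ B := ⟨z.1 N, ⟨le_rfl, by linarith⟩, hfz⟩
  have hAc : IsCompact A := isCompact_Icc.image hfcont
  have hBc : IsCompact B := isCompact_Icc.image hfcont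
  have hAconn : IsConnected A :=
    (isConnected_Icc (by linarith)).image f hfcont.continuousOn
  have hBconn : IsConnected B :=
    (isConnected_Icc (by linarith)).image f hfcont.continuousOn
  rcases hz A B hAc hAconn hBc hBconn hzA hzB with hsub | hsub
  · have hmem : f (z.1 N - δ) ∈ B := hsub ⟨z.1 N - δ, ⟨le_rfl, by linarith⟩, rfl⟩
    obtain ⟨t', ht', heq⟩ := hmem
    have h1 : (f t').1 N = t' := by rw [hfN, hcleq t' ⟨by linarith [ht'.1], ht'.2⟩]
    have h2 : (f (z.1 N - δ)).1 N = z.1 N - δ := by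
      rw [hfN, hcleq _ ⟨le_rfl, by linarith⟩]
    rw [← heq, h1] at h2
    have := ht'.1
    linarith
  · have hmem : f (z.1 N + δ) ∈ A := hsub ⟨z.1 N + δ, ⟨by linarith, le_rfl⟩, rfl⟩
    obtain ⟨t', ht', heq⟩ := hmem
    have h1 : (f t').1 N = t' := by rw [hfN, hcleq t' ⟨ht'.1, by linarith [ht'.2]⟩]
    have h2 : (f (z.1 N + δ)).1 N = z.1 N + δ := by
      rw [hfN, hcleq _ ⟨by linarith, le_rfl⟩]
    rw [← heq, h1] at h2
    have := ht'.2
    linarith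

end Recurrence

end Stmt12Aux

namespace Stmt12Aux

section Omega

variable {s : ℝ} {T : ℝ → ℝ} {c : ℝ}

lemma omega_Tmap (hcont : Continuous T) {u : ℝ} (hu : u ∈ omegaSet T c) :
    T u ∈ omegaSet T c := by
  obtain ⟨φ, hφ, hlim⟩ := hu
  refine ⟨fun n => φ n + 1, fun a b hab => by
    have h := hφ hab
    exact Nat.succ_lt_succ h, ?_⟩
  have h1 : Tendsto (fun n => T (T^[φ n] c)) atTop (nhds (T u)) :=
    (hcont.continuousAt.tendsto).comp hlim
  refine h1.congr fun n => ?_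
  rw [Function.iterate_succ_apply']

lemma omega_iterMap (hcont : Continuous T) (m : ℕ) {u : ℝ} (hu : u ∈ omegaSet T c) :
    T^[m] u ∈ omegaSet T c := by
  induction m with
  | zero => exact hu
  | succ m ih =>
    rw [Function.iterate_succ_apply']
    exact omega_Tmap hcont ih

lemma omega_closure : closure (omegaSet T c) ⊆ omegaSet T c := by
  intro u hu
  have H : ∀ e : ℝ, 0 < e → ∀ b : ℕ, ∃ n, b < n ∧ |T^[n] c - u| < e := by
    intro e he b
    obtain ⟨v, hv, hvd⟩ := Metric.mem_closure_iff.1 hu (e/2) (by linarith)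
    obtain ⟨φ, hφ, hlim⟩ := hv
    obtain ⟨L, hL⟩ := Metric.tendsto_atTop.1 hlim (e/2) (by linarith)
    refine ⟨φ (max (b+1) L), ?_, ?_⟩
    · have h1 : max (b+1) L ≤ φ (max (b+1) L) := hφ.le_apply
      have h2 : b + 1 ≤ max (b+1) L := le_max_left _ _
      omega
    · have h3 := hL (max (b+1) L) (le_max_right _ _)
      rw [Real.dist_eq] at h3 hvd
      calc |T^[φ (max (b+1) L)] c - u|
          ≤ |T^[φ (max (b+1) L)] c - v| + |v - u| := abs_sub_le _ _ _
        _ < e := by rw [abs_sub_comm u v] at hvd; linarith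
  have Hpos : ∀ i : ℕ, (0:ℝ) < 1/(i+1) := by
    intro i; positivity
  choose g hg1 hg2 using fun (i b : ℕ) => H (1/(i+1)) (Hpos i) b
  set ψ : ℕ → ℕ := fun i => Nat.rec (g 0 0) (fun i p => g (i+1) p) i with hψdef
  have hψsucc : ∀ i, ψ (i+1) = g (i+1) (ψ i) := fun i => rfl
  have hψmono : StrictMono ψ := by
    apply strictMono_nat_of_lt_succ
    intro i
    rw [hψsucc]
    exact hg1 (i+1) (ψ i)
  have hψgood : ∀ i, |T^[ψ i] c - u| < 1/(i+1) := by
    intro i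
    cases i with
    | zero => exact hg2 0 0
    | succ i => rw [hψsucc]; exact hg2 (i+1) (ψ i)
  refine ⟨ψ, hψmono, ?_⟩
  rw [Metric.tendsto_atTop]
  intro e he
  obtain ⟨I, hI⟩ := exists_nat_one_div_lt he
  refine ⟨I, fun i hi => ?_⟩
  rw [Real.dist_eq]
  calc |T^[ψ i] c - u| < 1/(i+1) := hψgood i
    _ ≤ 1/(I+1) := by
        apply one_div_le_one_div_of_le
        · positivity
        · exact_mod_cast by exact_mod_cast add_le_add_left (Nat.cast_le.2 hi) 1
    _ < e := hI

lemma omega_closed : IsClosed (omegaSet T c) :=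
  isClosed_of_closure_subset omega_closure

end Omega

end Stmt12Aux

namespace Stmt12Aux

section Density

variable {s : ℝ} {T : ℝ → ℝ} {c : ℝ} {K : Set ℝ}

/-- M2 (quantitative): approximation of points of `F` by backward shifts of an endpoint. -/
lemma endpoint_approx
    (hs1 : 1 < s) (hs2 : s < 2)
    (hT : ∀ x, T x = min (s * x) (s * (1 - x))) (hc : c = 1/2)
    (hKdef : K = Set.Icc (T (T c)) (T c)) (hK : Set.MapsTo T K K)
    (z : InvLim T K) (hz : IsEndpointPt z)
    (y : InvLim T K) (hy : ∀ n, y.1 n ∈ omegaSet T c)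
    (m : ℕ) {ε : ℝ} (hε : 0 < ε) (M₁ : ℕ) :
    ∃ M, M₁ ≤ M ∧ ∀ j, j ≤ m → |((shiftInv T K)^[M] z).1 j - y.1 j| < ε := by
  have hrec := endpoint_coord_rec hs1 hs2 hT hc hKdef hK z hz
  obtain ⟨φ, hφ, hlim⟩ := hy m
  -- uniform continuity data for the iterates at y.1 m
  have hcontIter : ∀ j : ℕ, ∃ d > 0, ∀ u, |u - y.1 m| < d →
      |T^[j] u - T^[j] (y.1 m)| < ε := by
    intro j
    have hcj : Continuous (T^[j]) := (contT hT).iterate j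
    have h := Metric.continuous_iff.1 hcj (y.1 m) ε hε
    obtain ⟨d, hd, h2⟩ := h
    exact ⟨d, hd, fun u hu => by
      have := h2 u (by rwa [Real.dist_eq])
      rwa [Real.dist_eq] at this⟩
  choose d hd1 hd2 using hcontIter
  have hne : (Finset.range (m+1)).Nonempty := ⟨0, by simp⟩
  set δ : ℝ := (Finset.range (m+1)).inf' hne d with hδdef
  have hδpos : 0 < δ := by
    rw [hδdef, Finset.lt_inf'_iff]
    intro j _
    exact hd1 j
  have hδle : ∀ j, j ≤ m → δ ≤ d j := by
    intro j hj
    rw [hδdef]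
    exact Finset.inf'_le d (Finset.mem_range.2 (by omega))
  -- pick k with T^[k] c close to y.1 m
  obtain ⟨L, hL⟩ := Metric.tendsto_atTop.1 hlim (δ/2) (by linarith)
  set k : ℕ := φ L with hkdef
  have hkc : |T^[k] c - y.1 m| < δ/2 := by
    have := hL L le_rfl
    rwa [Real.dist_eq] at this
  -- pick η from continuity of T^[k] at c
  have hcontk : ∃ η > 0, ∀ u, |u - c| < η → |T^[k] u - T^[k] c| < δ/2 := by
    have hck : Continuous (T^[k]) := (contT hT).iterate k
    obtain ⟨η, hη, h2⟩ := Metric.continuous_iff.1 hck c (δ/2) (by linarith)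
    exact ⟨η, hη, fun u hu => by
      have := h2 u (by rwa [Real.dist_eq])
      rwa [Real.dist_eq] at this⟩
  obtain ⟨η, hη, hηp⟩ := hcontk
  -- pick n
  obtain ⟨n, hn1, hn2⟩ := hrec η hη (M₁ + m + k)
  refine ⟨n - m - k, by omega, ?_⟩
  -- key estimate at coordinate m
  have hmM : m + (n - m - k) = n - k := by omega
  have hznk : z.1 (n - k) = T^[k] (z.1 n) := by
    have h := coord_iterate z (n - k) k
    rw [show (n - k) + k = n from by omega] at h
    exact h.symm
  have hkey : |z.1 (m + (n - m - k)) - y.1 m| < δ := by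
    rw [hmM, hznk]
    calc |T^[k] (z.1 n) - y.1 m|
        ≤ |T^[k] (z.1 n) - T^[k] c| + |T^[k] c - y.1 m| := abs_sub_le _ _ _
      _ < δ/2 + δ/2 := add_lt_add (hηp _ hn2) hkc
      _ = δ := by ring
  -- conclude for all j ≤ m
  intro j hj
  rw [shiftInv_iter_coord]
  have hzj : z.1 (j + (n - m - k)) = T^[m - j] (z.1 (m + (n - m - k))) := by
    have h := coord_iterate z (j + (n - m - k)) (m - j)
    rw [show j + (n - m - k) + (m - j) = m + (n - m - k) from by omega] at h
    exact h.symm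
  have hyj : y.1 j = T^[m - j] (y.1 m) := by
    have h := coord_iterate y j (m - j)
    rw [show j + (m - j) = m from by omega] at h
    exact h.symm
  rw [hzj, hyj]
  exact hd2 (m - j) _ (lt_of_lt_of_le hkey (hδle (m - j) (by omega)))

/-- M2 (topological): `F` is contained in the closure of the backward orbit. -/
lemma endpoint_dense
    (hs1 : 1 < s) (hs2 : s < 2)
    (hT : ∀ x, T x = min (s * x) (s * (1 - x))) (hc : c = 1/2)
    (hKdef : K = Set.Icc (T (T c)) (T c)) (hK : Set.MapsTo T K K)
    (z : InvLim T K) (hz : IsEndpointPt z)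
    (y : InvLim T K) (hy : ∀ n, y.1 n ∈ omegaSet T c) :
    y ∈ closure (Set.range fun M : ℕ => (shiftInv T K)^[M] z) := by
  have H : ∀ i : ℕ, ∃ M : ℕ, ∀ j, j ≤ i →
      |((shiftInv T K)^[M] z).1 j - y.1 j| < 1/(i+1) := by
    intro i
    obtain ⟨M, _, hM⟩ := endpoint_approx hs1 hs2 hT hc hKdef hK z hz y hy i
      (by positivity : (0:ℝ) < 1/(i+1)) 0
    exact ⟨M, hM⟩
  choose M hM using H
  have htend : Tendsto (fun i => (shiftInv T K)^[M i] z) atTop (nhds y) := by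
    rw [tendsto_subtype_rng, tendsto_pi_nhds]
    intro j
    rw [Metric.tendsto_atTop]
    intro e he
    obtain ⟨I, hI⟩ := exists_nat_one_div_lt he
    refine ⟨max j I, fun i hi => ?_⟩
    rw [Real.dist_eq]
    calc |((shiftInv T K)^[M i] z).1 j - y.1 j| < 1/(i+1) :=
          hM i j (le_trans (le_max_left _ _) hi)
      _ ≤ 1/(I+1) := by
          apply one_div_le_one_div_of_le
          · positivity
          · have : I ≤ i := le_trans (le_max_right _ _) hi
            exact_mod_cast add_le_add_left (Nat.cast_le.2 this) 1
      _ < e := hI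
  exact mem_closure_of_tendsto htend (Filter.Eventually.of_forall fun i => ⟨M i, rfl⟩)

end Density

end Stmt12Aux

namespace Stmt12Aux

section Structure

variable {s : ℝ} {T : ℝ → ℝ} {c : ℝ} {K : Set ℝ}

/-- the closed half-line on the side of `v` relative to `c` -/
def sideOf (c v : ℝ) : Set ℝ := if c < v then Set.Ici c else Set.Iic c

lemma sideOf_closed (c v : ℝ) : IsClosed (sideOf c v) := by
  unfold sideOf; split_ifs
  · exact isClosed_Ici
  · exact isClosed_Iic

lemma sideOf_ordConn (c v : ℝ) : (sideOf c v).OrdConnected := by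
  unfold sideOf; split_ifs
  · exact Set.ordConnected_Ici
  · exact Set.ordConnected_Iic

lemma mem_sideOf_self (c v : ℝ) : v ∈ sideOf c v := by
  unfold sideOf; split_ifs with h
  · exact le_of_lt h
  · exact le_of_not_gt h

lemma sideOf_iff (c u v : ℝ) : (u = c ∨ (c < u ↔ c < v)) ↔ u ∈ sideOf c v := by
  unfold sideOf
  split_ifs with h
  · simp only [Set.mem_Ici]
    constructor
    · rintro (rfl | hiff)
      · exact le_rfl
      · exact le_of_lt (hiff.2 h)
    · intro hcu
      rcases eq_or_lt_of_le hcu with heq | hlt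
      · exact Or.inl heq.symm
      · exact Or.inr ⟨fun _ => h, fun _ => hlt⟩
  · simp only [Set.mem_Iic]
    constructor
    · rintro (rfl | hiff)
      · exact le_rfl
      · by_contra hcon
        exact h (hiff.1 (lt_of_not_ge hcon))
    · intro huc
      rcases eq_or_lt_of_le huc with heq | hlt
      · exact Or.inl heq
      · exact Or.inr ⟨fun hc => absurd hc (not_lt_of_gt hlt), fun hc => absurd hc h⟩

/-- the (pre-closure) basic arc set -/
lemma basicArc_set_eq (z : InvLim T K) :
    {y : InvLim T K | ∀ i, 1 ≤ i → y.1 i = c ∨ (c < y.1 i ↔ c < z.1 i)}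
      = {y : InvLim T K | ∀ i, 1 ≤ i → y.1 i ∈ sideOf c (z.1 i)} := by
  ext y
  simp only [Set.mem_setOf_eq]
  constructor
  · intro h i hi; exact (sideOf_iff c _ _).1 (h i hi)
  · intro h i hi; exact (sideOf_iff c _ _).2 (h i hi)

lemma basicArc_set_closed (z : InvLim T K) :
    IsClosed {y : InvLim T K | ∀ i, 1 ≤ i → y.1 i ∈ sideOf c (z.1 i)} := by
  have : {y : InvLim T K | ∀ i, 1 ≤ i → y.1 i ∈ sideOf c (z.1 i)}
      = ⋂ i : ℕ, {y : InvLim T K | 1 ≤ i → y.1 i ∈ sideOf c (z.1 i)} := by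
    ext y; simp only [Set.mem_iInter, Set.mem_setOf_eq]
  rw [this]
  apply isClosed_iInter
  intro i
  by_cases hi : 1 ≤ i
  · have he : {y : InvLim T K | 1 ≤ i → y.1 i ∈ sideOf c (z.1 i)}
        = (fun y : InvLim T K => y.1 i) ⁻¹' (sideOf c (z.1 i)) := by
      ext y; simp [hi]
    rw [he]
    exact (sideOf_closed c _).preimage ((continuous_apply i).comp continuous_subtype_val)
  · have he : {y : InvLim T K | 1 ≤ i → y.1 i ∈ sideOf c (z.1 i)} = Set.univ := by
      ext y; simp [hi]
    rw [he]
    exact isClosed_univ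

lemma basicArcOf_eq (z : InvLim T K) :
    basicArcOf T K c z = {y : InvLim T K | ∀ i, 1 ≤ i → y.1 i ∈ sideOf c (z.1 i)} := by
  unfold basicArcOf
  rw [basicArc_set_eq z]
  exact (basicArc_set_closed z).closure_eq

lemma invLim_compactSpace (hT : ∀ x, T x = min (s * x) (s * (1 - x)))
    (hKcl : IsClosed K) (hKcpt : IsCompact K) :
    CompactSpace (InvLim T K) := by
  have h1 : IsCompact {f : ℕ → ℝ | (∀ n, f n ∈ K) ∧ ∀ n, T (f (n + 1)) = f n} := by
    apply IsCompact.of_isClosed_subset (isCompact_univ_pi fun _ : ℕ => hKcpt)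
    · have h2 : IsClosed {f : ℕ → ℝ | ∀ n, f n ∈ K} := by
        have he : {f : ℕ → ℝ | ∀ n, f n ∈ K} = ⋂ n : ℕ, (fun f : ℕ → ℝ => f n) ⁻¹' K := by
          ext f; simp
        rw [he]
        exact isClosed_iInter fun n => hKcl.preimage (continuous_apply n)
      have h3 : IsClosed {f : ℕ → ℝ | ∀ n, T (f (n+1)) = f n} := by
        have he : {f : ℕ → ℝ | ∀ n, T (f (n+1)) = f n}
            = ⋂ n : ℕ, {f : ℕ → ℝ | T (f (n+1)) = f n} := by
          ext f; simp
        rw [he]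
        exact isClosed_iInter fun n =>
          isClosed_eq ((contT hT).comp (continuous_apply (n+1))) (continuous_apply n)
      exact h2.inter h3
    · intro f hf
      exact fun n _ => hf.1 n
  exact isCompact_iff_compactSpace.1 h1

/-- nested intersection of compact connected sets is preconnected -/
lemma isPreconnected_iInter_nested {X : Type*} [TopologicalSpace X] [NormalSpace X]
    (C : ℕ → Set X) (hdec : ∀ n, C (n+1) ⊆ C n) (hcpt : ∀ n, IsCompact (C n))
    (hcl : ∀ n, IsClosed (C n)) (hconn : ∀ n, IsPreconnected (C n))
    (hne : ∀ n, (C n).Nonempty) :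
    IsPreconnected (⋂ n, C n) := by
  have hanti : ∀ {a b : ℕ}, a ≤ b → C b ⊆ C a := by
    intro a b hab
    induction b with
    | zero => have : a = 0 := by omega
              subst this; exact subset_rfl
    | succ b ih =>
      rcases Nat.eq_or_lt_of_le hab with heq | hlt
      · subst heq; exact subset_rfl
      · exact (hdec b).trans (ih (by omega))
  have hIcl : IsClosed (⋂ n, C n) := isClosed_iInter hcl
  rw [isPreconnected_iff_subset_of_fully_disjoint_closed hIcl]
  intro u v hu hv hcover hdisj
  obtain ⟨U, V, hUo, hVo, hsU, htV, hUV⟩ := NormalSpace.normal u v hu hv hdisj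
  have hstep : ∃ n, C n ⊆ U ∪ V := by
    by_contra hcon
    push_neg at hcon
    have hDne : ∀ n, (C n \ (U ∪ V)).Nonempty := by
      intro n
      rcases Set.not_subset.1 (hcon n) with ⟨p, hp1, hp2⟩
      exact ⟨p, hp1, hp2⟩
    have hDcl : ∀ n, IsClosed (C n \ (U ∪ V)) :=
      fun n => (hcl n).sdiff (hUo.union hVo)
    have hDcpt : ∀ n, IsCompact (C n \ (U ∪ V)) :=
      fun n => (hcpt n).inter_right (hUo.union hVo).isClosed_compl
    have hdir : Directed (fun x1 x2 : Set X => x1 ⊇ x2) (fun n => C n \ (U ∪ V)) := by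
      intro a b
      refine ⟨max a b, ?_, ?_⟩
      · exact Set.diff_subset_diff_left (hanti (le_max_left a b))
      · exact Set.diff_subset_diff_left (hanti (le_max_right a b))
    obtain ⟨p, hp⟩ := IsCompact.nonempty_iInter_of_directed_nonempty_isCompact_isClosed
      _ hdir hDne hDcpt hDcl
    rw [Set.mem_iInter] at hp
    have hpin : p ∈ ⋂ n, C n := Set.mem_iInter.2 fun n => (hp n).1
    have := hcover hpin
    rcases this with h | h
    · exact (hp 0).2 (Or.inl (hsU h))
    · exact (hp 0).2 (Or.inr (htV h))
  obtain ⟨n, hn⟩ := hstep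
  rcases (hconn n).subset_or_subset hUo hVo hUV hn with h | h
  · left
    intro p hp
    have hpC : p ∈ C n := Set.mem_iInter.1 hp n
    rcases hcover hp with hc | hc
    · exact hc
    · exact absurd (htV hc) (fun hpV => Set.disjoint_left.1 hUV (h hpC) hpV)
  · right
    intro p hp
    have hpC : p ∈ C n := Set.mem_iInter.1 hp n
    rcases hcover hp with hc | hc
    · exact absurd (hsU hc) (fun hpU => Set.disjoint_left.1 hUV hpU (h hpC))
    · exact hc

end Structure

end Stmt12Aux

namespace Stmt12Aux

section HalfConnected

variable {s : ℝ} {T : ℝ → ℝ} {c : ℝ} {K : Set ℝ}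

lemma half_connected
    (hs1 : 1 < s)
    (hT : ∀ x, T x = min (s * x) (s * (1 - x))) (hc : c = 1/2)
    (hKdef : K = Set.Icc (T (T c)) (T c))
    (z : InvLim T K) (E : Set ℝ) (hEo : E.OrdConnected) (hEc : IsClosed E)
    (hzE : z.1 0 ∈ E) :
    IsPreconnected {y : InvLim T K |
      (∀ i, 1 ≤ i → y.1 i ∈ sideOf c (z.1 i)) ∧ y.1 0 ∈ E} := by
  have hs0 : (0:ℝ) ≤ s := by linarith
  have hKcl : IsClosed K := hKdef ▸ isClosed_Icc
  have hKcpt : IsCompact K := hKdef ▸ isCompact_Icc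
  have hKord : K.OrdConnected := hKdef ▸ Set.ordConnected_Icc
  have hKconn : IsPreconnected K := hKdef ▸ isPreconnected_Icc
  -- the interval chain
  set W : ℕ → Set ℝ := fun m => Nat.rec (K ∩ E)
      (fun m Wm => (K ∩ sideOf c (z.1 (m+1))) ∩ T ⁻¹' Wm) m with hWdef
  have hW0 : W 0 = K ∩ E := rfl
  have hWsucc : ∀ m, W (m+1) = (K ∩ sideOf c (z.1 (m+1))) ∩ T ⁻¹' (W m) := fun m => rfl
  have hWsubK : ∀ m, W m ⊆ K := by
    intro m
    cases m with
    | zero => exact Set.inter_subset_left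
    | succ m => exact fun u hu => hu.1.1
  have hWside : ∀ i, 1 ≤ i → W i ⊆ sideOf c (z.1 i) := by
    intro i hi
    cases i with
    | zero => omega
    | succ i => exact fun u hu => hu.1.2
  have hWord : ∀ m, (W m).OrdConnected := by
    intro m
    induction m with
    | zero => exact hKord.inter hEo
    | succ m ih =>
      rw [Set.ordConnected_iff]
      intro x hx y hy hxy u hu
      have hxK := hx.1.1
      have hyK := hy.1.1
      have hxS := hx.1.2
      have hyS := hy.1.2
      have huK : u ∈ K := hKord.out hxK hyK hu
      have huS : u ∈ sideOf c (z.1 (m+1)) := (sideOf_ordConn c _).out hxS hyS hu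
      refine ⟨⟨huK, huS⟩, ?_⟩
      show T u ∈ W m
      have hTx : T x ∈ W m := hx.2
      have hTy : T y ∈ W m := hy.2
      by_cases hcz : c < z.1 (m+1)
      · -- side is Ici c, T antitone there
        have hIci : sideOf c (z.1 (m+1)) = Set.Ici c := by unfold sideOf; rw [if_pos hcz]
        rw [hIci] at hxS hyS huS
        have h1 : T y ≤ T u := T_antiOn hT hs0 hc huS hyS hu.2
        have h2 : T u ≤ T x := T_antiOn hT hs0 hc hxS huS hu.1
        exact ih.out hTy hTx ⟨h1, h2⟩
      · have hIic : sideOf c (z.1 (m+1)) = Set.Iic c := by unfold sideOf; rw [if_neg hcz]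
        rw [hIic] at hxS hyS huS
        have h1 : T x ≤ T u := T_monoOn hT hs0 hc hxS huS hu.1
        have h2 : T u ≤ T y := T_monoOn hT hs0 hc huS hyS hu.2
        exact ih.out hTx hTy ⟨h1, h2⟩
  have hWcl : ∀ m, IsClosed (W m) := by
    intro m
    induction m with
    | zero => exact hKcl.inter hEc
    | succ m ih =>
      rw [hWsucc]
      exact ((hKcl.inter (sideOf_closed c _)).inter (ih.preimage (contT hT)))
  have hWz : ∀ m, z.1 m ∈ W m := by
    intro m
    induction m with
    | zero => exact ⟨z.2.1 0, hzE⟩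
    | succ m ih =>
      refine ⟨⟨z.2.1 (m+1), mem_sideOf_self c _⟩, ?_⟩
      show T (z.1 (m+1)) ∈ W m
      rw [z.2.2 m]
      exact ih
  have hWiter : ∀ m, ∀ u ∈ W m, ∀ i, i ≤ m → T^[m-i] u ∈ W i := by
    intro m
    induction m with
    | zero =>
      intro u hu i hi
      have : i = 0 := by omega
      subst this
      exact hu
    | succ m ih =>
      intro u hu i hi
      rcases Nat.eq_or_lt_of_le hi with heq | hlt
      · subst heq
        simpa using hu
      · have hTu : T u ∈ W m := hu.2
        have h2 := ih (T u) hTu i (by omega)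
        rw [show m + 1 - i = (m - i) + 1 from by omega, Function.iterate_succ_apply]
        exact h2
  -- the approximating cylinders in the product space
  set B : ℕ → Set (ℕ → ℝ) := fun m => {f | (∀ n, f n ∈ K) ∧ (∀ n, n < m → T (f (n+1)) = f n)
      ∧ (∀ i, 1 ≤ i → i ≤ m → f i ∈ sideOf c (z.1 i)) ∧ f 0 ∈ E} with hBdef
  have hBconn : ∀ m, IsPreconnected (B m) := by
    intro m
    set g : (ℝ × (ℕ → ℝ)) → (ℕ → ℝ) := fun p n => if n ≤ m then T^[m-n] p.1 else p.2 n
      with hgdef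
    have hgcont : Continuous g := by
      apply continuous_pi
      intro n
      by_cases h : n ≤ m
      · simp only [hgdef, if_pos h]
        exact ((contT hT).iterate (m-n)).comp continuous_fst
      · simp only [hgdef, if_neg h]
        exact (continuous_apply n).comp continuous_snd
    have himg : B m = g '' ((W m) ×ˢ (Set.pi Set.univ fun _ : ℕ => K)) := by
      apply Set.Subset.antisymm
      · intro f hf
        obtain ⟨hf1, hf2, hf3, hf4⟩ := hf
        have hfW : ∀ p, p ≤ m → f p ∈ W p := by
          intro p hp
          induction p with
          | zero => exact ⟨hf1 0, hf4⟩
          | succ p ihp =>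
            refine ⟨⟨hf1 (p+1), hf3 (p+1) (by omega) hp⟩, ?_⟩
            show T (f (p+1)) ∈ W p
            rw [hf2 p (by omega)]
            exact ihp (by omega)
        have hIter2 : ∀ j, j ≤ m → T^[j] (f m) = f (m - j) := by
          intro j hj
          induction j with
          | zero => simp
          | succ j ihj =>
            rw [Function.iterate_succ_apply', ihj (by omega)]
            have hrel := hf2 (m - j - 1) (by omega)
            rw [show m - j - 1 + 1 = m - j from by omega] at hrel
            rw [hrel]
            congr 1
        refine ⟨(f m, f), ⟨hfW m le_rfl, fun n _ => hf1 n⟩, ?_⟩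
        funext n
        by_cases h : n ≤ m
        · simp only [hgdef, if_pos h]
          rw [hIter2 (m - n) (by omega), show m - (m - n) = n from by omega]
        · simp only [hgdef, if_neg h]
      · rintro f ⟨⟨u, h⟩, ⟨huW, hh⟩, rfl⟩
        have hgn : ∀ n, g (u, h) n = if n ≤ m then T^[m-n] u else h n := fun n => rfl
        refine ⟨?_, ?_, ?_, ?_⟩
        · intro n
          rw [hgn]
          by_cases hn : n ≤ m
          · rw [if_pos hn]
            exact hWsubK n (hWiter m u huW n hn)
          · rw [if_neg hn]
            exact hh n trivial
        · intro n hn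
          rw [hgn, hgn, if_pos (by omega : n + 1 ≤ m), if_pos (by omega : n ≤ m)]
          rw [show m - n = (m - (n+1)) + 1 from by omega, Function.iterate_succ_apply']
        · intro i h1 h2
          rw [hgn, if_pos h2]
          exact hWside i h1 (hWiter m u huW i h2)
        · rw [hgn, if_pos (by omega : 0 ≤ m)]
          have := hWiter m u huW 0 (by omega)
          exact this.2
    rw [himg]
    exact (((isPreconnected_iff_ordConnected).2 (hWord m)).prod
      (isPreconnected_univ_pi fun _ => hKconn)).image g hgcont.continuousOn
  have hBcl : ∀ m, IsClosed (B m) := by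
    intro m
    have hB4 : B m = {f : ℕ → ℝ | ∀ n, f n ∈ K} ∩ ({f | ∀ n, n < m → T (f (n+1)) = f n}
        ∩ ({f | ∀ i, 1 ≤ i → i ≤ m → f i ∈ sideOf c (z.1 i)} ∩ {f | f 0 ∈ E})) := by
      ext f
      simp only [hBdef, Set.mem_setOf_eq, Set.mem_inter_iff]
      try tauto
    rw [hB4]
    refine IsClosed.inter ?_ (IsClosed.inter ?_ (IsClosed.inter ?_ ?_))
    · have he : {f : ℕ → ℝ | ∀ n, f n ∈ K} = ⋂ n : ℕ, (fun f : ℕ → ℝ => f n) ⁻¹' K := by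
        ext f; simp
      rw [he]
      exact isClosed_iInter fun n => hKcl.preimage (continuous_apply n)
    · have he : {f : ℕ → ℝ | ∀ n, n < m → T (f (n+1)) = f n}
          = ⋂ n : ℕ, {f : ℕ → ℝ | n < m → T (f (n+1)) = f n} := by
        ext f; simp
      rw [he]
      apply isClosed_iInter
      intro n
      by_cases hn : n < m
      · have he2 : {f : ℕ → ℝ | n < m → T (f (n+1)) = f n}
            = {f : ℕ → ℝ | T (f (n+1)) = f n} := by
          ext f; simp [hn]
        rw [he2]
        exact isClosed_eq ((contT hT).comp (continuous_apply (n+1))) (continuous_apply n)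
      · have he2 : {f : ℕ → ℝ | n < m → T (f (n+1)) = f n} = Set.univ := by
          ext f; simp [hn]
        rw [he2]
        exact isClosed_univ
    · have he : {f : ℕ → ℝ | ∀ i, 1 ≤ i → i ≤ m → f i ∈ sideOf c (z.1 i)}
          = ⋂ i : ℕ, {f : ℕ → ℝ | 1 ≤ i → i ≤ m → f i ∈ sideOf c (z.1 i)} := by
        ext f; simp
      rw [he]
      apply isClosed_iInter
      intro i
      by_cases h1 : 1 ≤ i ∧ i ≤ m
      · have he2 : {f : ℕ → ℝ | 1 ≤ i → i ≤ m → f i ∈ sideOf c (z.1 i)}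
            = (fun f : ℕ → ℝ => f i) ⁻¹' (sideOf c (z.1 i)) := by
          ext f; simp [h1.1, h1.2]
        rw [he2]
        exact (sideOf_closed c _).preimage (continuous_apply i)
      · have he2 : {f : ℕ → ℝ | 1 ≤ i → i ≤ m → f i ∈ sideOf c (z.1 i)} = Set.univ := by
          ext f
          simp only [Set.mem_setOf_eq, Set.mem_univ, iff_true]
          intro hi1 hi2
          exact absurd ⟨hi1, hi2⟩ h1
        rw [he2]
        exact isClosed_univ
    · exact hEc.preimage (continuous_apply 0)
  have hBcpt : ∀ m, IsCompact (B m) := by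
    intro m
    apply IsCompact.of_isClosed_subset (isCompact_univ_pi fun _ : ℕ => hKcpt) (hBcl m)
    intro f hf n _
    exact hf.1 n
  have hBdec : ∀ m, B (m+1) ⊆ B m := by
    intro m f hf
    exact ⟨hf.1, fun n hn => hf.2.1 n (by omega), fun i h1 h2 => hf.2.2.1 i h1 (by omega),
      hf.2.2.2⟩
  have hBne : ∀ m, (B m).Nonempty := by
    intro m
    exact ⟨z.1, z.2.1, fun n _ => z.2.2 n, fun i h1 _ => mem_sideOf_self c _, hzE⟩
  have hInter : (⋂ m, B m) = Subtype.val '' {y : InvLim T K |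
      (∀ i, 1 ≤ i → y.1 i ∈ sideOf c (z.1 i)) ∧ y.1 0 ∈ E} := by
    apply Set.Subset.antisymm
    · intro f hf
      rw [Set.mem_iInter] at hf
      have hX1 : ∀ n, f n ∈ K := (hf 0).1
      have hX2 : ∀ n, T (f (n+1)) = f n := fun n => (hf (n+1)).2.1 n (by omega)
      refine ⟨⟨f, hX1, hX2⟩, ⟨?_, (hf 0).2.2.2⟩, rfl⟩
      intro i hi
      exact (hf i).2.2.1 i hi le_rfl
    · rintro f ⟨y, ⟨hy1, hy2⟩, rfl⟩
      rw [Set.mem_iInter]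
      intro m
      exact ⟨y.2.1, fun n _ => y.2.2 n, fun i h1 _ => hy1 i h1, hy2⟩
  have hp : IsPreconnected (⋂ m, B m) :=
    isPreconnected_iInter_nested B hBdec hBcpt hBcl hBconn hBne
  rw [hInter] at hp
  exact IsInducing.subtypeVal.isPreconnected_image.1 hp

/-- M5: any endpoint sits at the sup or inf of its basic arc. -/
lemma endpoint_extremal
    (hs1 : 1 < s)
    (hT : ∀ x, T x = min (s * x) (s * (1 - x))) (hc : c = 1/2)
    (hKdef : K = Set.Icc (T (T c)) (T c))
    (z : InvLim T K) (hz : IsEndpointPt z) :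
    z.1 0 = sSup ((fun w : InvLim T K => w.1 0) '' basicArcOf T K c z) ∨
      z.1 0 = sInf ((fun w : InvLim T K => w.1 0) '' basicArcOf T K c z) := by
  haveI : CompactSpace (InvLim T K) :=
    invLim_compactSpace hT (hKdef ▸ isClosed_Icc) (hKdef ▸ isCompact_Icc)
  rw [basicArcOf_eq]
  set S := {y : InvLim T K | ∀ i, 1 ≤ i → y.1 i ∈ sideOf c (z.1 i)} with hSdef
  set A₁ := {y : InvLim T K | (∀ i, 1 ≤ i → y.1 i ∈ sideOf c (z.1 i))
      ∧ y.1 0 ∈ Set.Iic (z.1 0)} with hA1def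
  set A₂ := {y : InvLim T K | (∀ i, 1 ≤ i → y.1 i ∈ sideOf c (z.1 i))
      ∧ y.1 0 ∈ Set.Ici (z.1 0)} with hA2def
  have hzS : z ∈ S := fun i _ => mem_sideOf_self c _
  have hzA1 : z ∈ A₁ := ⟨fun i _ => mem_sideOf_self c _, Set.mem_Iic.2 le_rfl⟩
  have hzA2 : z ∈ A₂ := ⟨fun i _ => mem_sideOf_self c _, Set.mem_Ici.2 le_rfl⟩
  have hcl : ∀ (E : Set ℝ), IsClosed E → IsClosed {y : InvLim T K |
      (∀ i, 1 ≤ i → y.1 i ∈ sideOf c (z.1 i)) ∧ y.1 0 ∈ E} := by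
    intro E hE
    rw [setOf_and]
    exact (basicArc_set_closed z).inter
      (hE.preimage ((continuous_apply 0).comp continuous_subtype_val))
  have h1cl : IsClosed A₁ := hcl _ isClosed_Iic
  have h2cl : IsClosed A₂ := hcl _ isClosed_Ici
  have h1conn : IsConnected A₁ :=
    ⟨⟨z, hzA1⟩, half_connected hs1 hT hc hKdef z _ Set.ordConnected_Iic isClosed_Iic (Set.mem_Iic.2 le_rfl)⟩
  have h2conn : IsConnected A₂ :=
    ⟨⟨z, hzA2⟩, half_connected hs1 hT hc hKdef z _ Set.ordConnected_Ici isClosed_Ici (Set.mem_Ici.2 le_rfl)⟩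
  have hKsub1 : ∀ v ∈ K, v ≤ T c := by rw [hKdef]; exact fun v hv => hv.2
  have hKsub2 : ∀ v ∈ K, T (T c) ≤ v := by rw [hKdef]; exact fun v hv => hv.1
  have hBdd : BddAbove ((fun w : InvLim T K => w.1 0) '' S)
      ∧ BddBelow ((fun w : InvLim T K => w.1 0) '' S) := by
    constructor
    · refine ⟨T c, ?_⟩
      rintro b ⟨y, _, rfl⟩
      exact hKsub1 _ (y.2.1 0)
    · refine ⟨T (T c), ?_⟩
      rintro b ⟨y, _, rfl⟩
      exact hKsub2 _ (y.2.1 0)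
  rcases hz A₁ A₂ (h1cl.isCompact) h1conn (h2cl.isCompact) h2conn hzA1 hzA2 with hsub | hsub
  · -- A₁ ⊆ A₂ : z.1 0 is the minimum
    right
    have hlb : ∀ y ∈ S, z.1 0 ≤ y.1 0 := by
      intro y hy
      rcases le_total (y.1 0) (z.1 0) with h | h
      · exact (hsub ⟨hy, Set.mem_Iic.2 h⟩).2
      · exact h
    apply le_antisymm
    · exact le_csInf ⟨z.1 0, z, hzS, rfl⟩ (by rintro b ⟨y, hyS, rfl⟩; exact hlb y hyS)
    · exact csInf_le hBdd.2 ⟨z, hzS, rfl⟩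
  · -- A₂ ⊆ A₁ : z.1 0 is the maximum
    left
    have hub : ∀ y ∈ S, y.1 0 ≤ z.1 0 := by
      intro y hy
      rcases le_total (y.1 0) (z.1 0) with h | h
      · exact h
      · exact (hsub ⟨hy, Set.mem_Ici.2 h⟩).2
    apply le_antisymm
    · exact le_csSup hBdd.1 ⟨z, hzS, rfl⟩
    · exact csSup_le ⟨z.1 0, z, hzS, rfl⟩ (by rintro b ⟨y, hyS, rfl⟩; exact hub y hyS)

end HalfConnected

end Stmt12Aux

namespace Stmt12Aux

section Steps

variable {s : ℝ} {T : ℝ → ℝ} {c : ℝ} {K : Set ℝ}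

lemma basicArc_inv_image (hT : ∀ x, T x = min (s * x) (s * (1 - x)))
    (hK : Set.MapsTo T K K) (z : InvLim T K) :
    shiftInv T K '' basicArcOf T K c z ⊆ basicArcOf T K c (shiftInv T K z) := by
  have himg : shiftInv T K '' basicArcOf T K c z
      = closure (shiftInv T K ''
        {y : InvLim T K | ∀ i, 1 ≤ i → y.1 i = c ∨ (c < y.1 i ↔ c < z.1 i)}) :=
    ((shiftHomeo hT hK).symm).image_closure _
  rw [himg]
  apply closure_mono
  rintro p ⟨y, hy, rfl⟩
  intro i hi
  exact hy (i+1) (by omega)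

lemma basicArc_map_subset (hT : ∀ x, T x = min (s * x) (s * (1 - x)))
    (hK : Set.MapsTo T K K) (z : InvLim T K) :
    basicArcOf T K c (shiftMap T K hK z) ⊆ shiftMap T K hK '' basicArcOf T K c z := by
  have h2 : shiftMap T K hK '' basicArcOf T K c z
      = closure (shiftMap T K hK ''
        {y : InvLim T K | ∀ i, 1 ≤ i → y.1 i = c ∨ (c < y.1 i ↔ c < z.1 i)}) :=
    (shiftHomeo hT hK).image_closure _
  rw [h2]
  unfold basicArcOf
  apply closure_mono
  intro y hy
  refine ⟨shiftInv T K y, ?_, shiftMap_shiftInv hK y⟩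
  intro i hi
  exact hy (i+1) (by omega)

lemma stepEF (hs1 : 1 < s)
    (hT : ∀ x, T x = min (s * x) (s * (1 - x))) (hc : c = 1/2)
    (hKdef : K = Set.Icc (T (T c)) (T c)) (hK : Set.MapsTo T K K)
    (z : InvLim T K)
    (h1 : IsEndpointPt z) (h2 : ¬ (basicArcOf T K c z).Subsingleton) :
    IsEndpointPt (shiftInv T K z) ∧ ¬ (basicArcOf T K c (shiftInv T K z)).Subsingleton ∧
      ((shiftInv T K z).1 0
          = sSup ((fun w : InvLim T K => w.1 0) '' basicArcOf T K c (shiftInv T K z)) ∨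
        (shiftInv T K z).1 0
          = sInf ((fun w : InvLim T K => w.1 0) '' basicArcOf T K c (shiftInv T K z))) := by
  have hept : IsEndpointPt (shiftInv T K z) :=
    isEndpointPt_homeo (shiftHomeo hT hK).symm h1
  have hns : ¬ (basicArcOf T K c (shiftInv T K z)).Subsingleton := by
    intro hss
    apply h2
    intro a ha b hb
    have h3 := hss (basicArc_inv_image hT hK z ⟨a, ha, rfl⟩)
      (basicArc_inv_image hT hK z ⟨b, hb, rfl⟩)
    have h4 := congrArg (shiftMap T K hK) h3
    rwa [shiftMap_shiftInv hK, shiftMap_shiftInv hK] at h4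
  exact ⟨hept, hns, endpoint_extremal hs1 hT hc hKdef _ hept⟩

lemma stepEN (hT : ∀ x, T x = min (s * x) (s * (1 - x))) (hK : Set.MapsTo T K K)
    (z : InvLim T K)
    (h1 : IsEndpointPt z) (h2 : ∀ A : Set (InvLim T K), IsArc A → z ∉ A) :
    IsEndpointPt (shiftInv T K z) ∧
      ∀ A : Set (InvLim T K), IsArc A → shiftInv T K z ∉ A := by
  refine ⟨isEndpointPt_homeo (shiftHomeo hT hK).symm h1, ?_⟩
  intro A hA hmem
  obtain ⟨f0, hemb, hrange⟩ := hA
  refine h2 (shiftMap T K hK '' A) ?_ ⟨_, hmem, shiftMap_shiftInv hK z⟩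
  exact ⟨shiftMap T K hK ∘ f0, ((shiftHomeo hT hK).isEmbedding).comp hemb,
    by rw [Set.range_comp, hrange]⟩

lemma stepES (hT : ∀ x, T x = min (s * x) (s * (1 - x))) (hK : Set.MapsTo T K K)
    (z : InvLim T K)
    (h1 : IsEndpointPt z) (h2 : (basicArcOf T K c z).Subsingleton)
    (h3 : ∃ A : Set (InvLim T K), IsArc A ∧ z ∈ A) :
    IsEndpointPt (shiftMap T K hK z) ∧ (basicArcOf T K c (shiftMap T K hK z)).Subsingleton ∧
      ∃ A : Set (InvLim T K), IsArc A ∧ shiftMap T K hK z ∈ A := by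
  refine ⟨isEndpointPt_homeo (shiftHomeo hT hK) h1, ?_, ?_⟩
  · intro a ha b hb
    obtain ⟨a', ha', rfl⟩ := basicArc_map_subset hT hK z ha
    obtain ⟨b', hb', rfl⟩ := basicArc_map_subset hT hK z hb
    rw [h2 ha' hb']
  · obtain ⟨A, ⟨f0, hemb, hrange⟩, hmem⟩ := h3
    exact ⟨shiftMap T K hK '' A,
      ⟨shiftMap T K hK ∘ f0, ((shiftHomeo hT hK).isEmbedding).comp hemb,
        by rw [Set.range_comp, hrange]⟩,
      ⟨z, hmem, rfl⟩⟩

lemma exists_accum (hT : ∀ x, T x = min (s * x) (s * (1 - x)))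
    (hKdef : K = Set.Icc (T (T c)) (T c))
    (q : ℕ → InvLim T K) :
    ∃ (w : InvLim T K) (φ : ℕ → ℕ), StrictMono φ ∧
      Tendsto (fun j => q (φ j)) atTop (nhds w) := by
  have hKcpt : IsCompact K := hKdef ▸ isCompact_Icc
  have hpi : IsCompact (Set.pi Set.univ fun _ : ℕ => K) := isCompact_univ_pi fun _ => hKcpt
  have hmem : ∀ M, (q M).1 ∈ Set.pi Set.univ fun _ : ℕ => K := fun M n _ => (q M).2.1 n
  obtain ⟨f, hfQ, φ, hφ, hlim⟩ := hpi.tendsto_subseq hmem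
  have hfK : ∀ n, f n ∈ K := fun n => hfQ n trivial
  have hfrel : ∀ n, T (f (n+1)) = f n := by
    intro n
    have h1 : Tendsto (fun j => (q (φ j)).1 (n+1)) atTop (nhds (f (n+1))) := by
      have h := hlim
      rw [tendsto_pi_nhds] at h
      exact h (n+1)
    have h2 : Tendsto (fun j => (q (φ j)).1 n) atTop (nhds (f n)) := by
      have h := hlim
      rw [tendsto_pi_nhds] at h
      exact h n
    have h3 : Tendsto (fun j => T ((q (φ j)).1 (n+1))) atTop (nhds (T (f (n+1)))) :=
      ((contT hT).tendsto _).comp h1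
    have h4 : (fun j => T ((q (φ j)).1 (n+1))) = fun j => (q (φ j)).1 n :=
      funext fun j => (q (φ j)).2.2 n
    rw [h4] at h3
    exact tendsto_nhds_unique h3 h2
  refine ⟨⟨f, hfK, hfrel⟩, φ, hφ, ?_⟩
  rw [tendsto_subtype_rng]
  exact hlim

end Steps

end Stmt12Aux

open Stmt12Aux

/-- Let `T` be a tent map whose critical point `c` has infinite orbit
and let `x` be an endpoint of the core inverse limit `X′`.  Then the full `σ`-orbit of
`x` is dense in the set `F` of folding points.  Consequently, each of the `σ`-invariant
sets `E_S`, `E_N`, `E_F` (spiral, nasty, flat endpoints) is not closed in `F` unless it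
is empty or equal to `F`. -/
theorem stmt12 (s : ℝ) (hs : s ∈ Set.Ioc (Real.sqrt 2) 2) (T : ℝ → ℝ)
    (hT : ∀ x, T x = min (s * x) (s * (1 - x))) (c : ℝ) (hc : c = 1/2)
    (hinf : Function.Injective fun n : ℕ => T^[n] c)
    (K : Set ℝ) (hKdef : K = Set.Icc (T^[2] c) (T c)) (hK : Set.MapsTo T K K)
    (F EF ES EN : Set (InvLim T K))
    (hF : F = {y : InvLim T K | ∀ n, y.1 n ∈ omegaSet T c})
    (hEF : EF = {y : InvLim T K | IsEndpointPt y ∧ ¬ (basicArcOf T K c y).Subsingleton ∧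
      (y.1 0 = sSup ((fun w : InvLim T K => w.1 0) '' basicArcOf T K c y) ∨
       y.1 0 = sInf ((fun w : InvLim T K => w.1 0) '' basicArcOf T K c y))})
    (hES : ES = {y : InvLim T K | IsEndpointPt y ∧ (basicArcOf T K c y).Subsingleton ∧
      ∃ A : Set (InvLim T K), IsArc A ∧ y ∈ A})
    (hEN : EN = {y : InvLim T K | IsEndpointPt y ∧
      ∀ A : Set (InvLim T K), IsArc A → y ∉ A})
    (x : InvLim T K) (hx : IsEndpointPt x) :
    F ⊆ closure {y : InvLim T K |
        ∃ n : ℕ, y = (shiftMap T K hK)^[n] x ∨ y = (shiftInv T K)^[n] x} ∧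
      (∀ W : Set (InvLim T K), (W = EF ∨ W = ES ∨ W = EN) →
        W.Nonempty → W ≠ F → W ≠ closure W ∩ F) := by
  -- basic slope facts
  have hsqrt : (1:ℝ) < Real.sqrt 2 := by
    have h : Real.sqrt 1 < Real.sqrt 2 := Real.sqrt_lt_sqrt (by norm_num) (by norm_num)
    rwa [Real.sqrt_one] at h
  have hs1 : 1 < s := lt_trans hsqrt hs.1
  have hs0 : (0:ℝ) ≤ s := by linarith
  have i2 : T^[2] c = T (T c) := by
    rw [show (2:ℕ) = 1 + 1 by norm_num, Function.iterate_add_apply]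
    rfl
  have i3 : T^[3] c = T (T (T c)) := by
    rw [show (3:ℕ) = 1 + 2 by norm_num, Function.iterate_add_apply, i2]
    rfl
  have hs2 : s < 2 := by
    rcases lt_or_eq_of_le hs.2 with h | h
    · exact h
    · exfalso
      have hTc1 : T c = 1 := by rw [hT, hc, h]; norm_num
      have hTT : T (T c) = 0 := by rw [hTc1, hT, h]; norm_num
      have hTTT : T (T (T c)) = 0 := by rw [hTT, hT, h]; norm_num
      have he : (fun n : ℕ => T^[n] c) 2 = (fun n : ℕ => T^[n] c) 3 := by
        show T^[2] c = T^[3] c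
        rw [i2, i3, hTTT, hTT]
      have := hinf he
      norm_num at this
  have hKdef2 : K = Set.Icc (T (T c)) (T c) := by rw [hKdef, i2]
  subst hF hEF hES hEN
  constructor
  · -- Part 1: density of the orbit of x
    intro y hy
    have hd := endpoint_dense hs1 hs2 hT hc hKdef2 hK x hx y hy
    refine closure_mono ?_ hd
    rintro p ⟨M, rfl⟩
    exact ⟨M, Or.inr rfl⟩
  · -- Part 2
    intro W hWcase hWne hWF hWeq
    have hWsubF : W ⊆ {y : InvLim T K | ∀ n, y.1 n ∈ omegaSet T c} := by
      rw [hWeq]; exact Set.inter_subset_right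
    obtain ⟨z, hzW⟩ := hWne
    -- seed: a point of W all of whose backward shifts stay in W
    have hseed : ∃ w, IsEndpointPt w ∧ ∀ M : ℕ, (shiftInv T K)^[M] w ∈ W := by
      rcases hWcase with hWc | hWc | hWc
      · -- flat endpoints: backward invariant
        refine ⟨z, ?_, ?_⟩
        · have h := hWc ▸ hzW
          exact h.1
        · intro M
          rw [hWc]
          rw [hWc] at hzW
          induction M with
          | zero => exact hzW
          | succ M ih =>
            rw [Function.iterate_succ_apply']
            exact stepEF hs1 hT hc hKdef2 hK _ ih.1 ih.2.1
      · -- spiral endpoints: forward invariance + accumulation point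
        rw [hWc] at hzW
        have hzF : ∀ n, z.1 n ∈ omegaSet T c := hWsubF (hWc ▸ hzW)
        have hfwd : ∀ M : ℕ, ((shiftMap T K hK)^[M] z) ∈
            {y : InvLim T K | IsEndpointPt y ∧ (basicArcOf T K c y).Subsingleton ∧
              ∃ A : Set (InvLim T K), IsArc A ∧ y ∈ A} := by
          intro M
          induction M with
          | zero => exact hzW
          | succ M ih =>
            rw [Function.iterate_succ_apply']
            exact stepES hT hK _ ih.1 ih.2.1 ih.2.2
        set q : ℕ → InvLim T K := fun M => (shiftMap T K hK)^[M] z with hqdef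
        obtain ⟨w, φ, hφ, hwlim⟩ := exists_accum hT hKdef2 q
        have hwF : ∀ n, w.1 n ∈ omegaSet T c := by
          intro i
          have hcoordlim : Tendsto (fun j => (q (φ j)).1 i) atTop (nhds (w.1 i)) := by
            have h := hwlim
            rw [tendsto_subtype_rng, tendsto_pi_nhds] at h
            exact h i
          apply omega_closure
          apply mem_closure_of_tendsto hcoordlim
          filter_upwards [Filter.eventually_ge_atTop i] with j hj
          have hphi : i ≤ φ j := le_trans hj hφ.le_apply
          rw [show (q (φ j)).1 i = T^[φ j - i] (z.1 0) from
            shiftMap_iter_coord_le hK z (φ j) i hphi]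
          exact omega_iterMap (contT hT) _ (hzF 0)
        have hback : ∀ M : ℕ, (shiftInv T K)^[M] w ∈ W := by
          intro M
          rw [hWeq]
          constructor
          · have hcont : Continuous ((shiftInv T K)^[M]) :=
              (cont_shiftInv (T := T) (K := K)).iterate M
            have hlim2 : Tendsto (fun j => (shiftInv T K)^[M] (q (φ j))) atTop
                (nhds ((shiftInv T K)^[M] w)) := (hcont.tendsto w).comp hwlim
            apply mem_closure_of_tendsto hlim2
            filter_upwards [Filter.eventually_ge_atTop M] with j hj
            have hphi : M ≤ φ j := le_trans hj hφ.le_apply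
            rw [show (shiftInv T K)^[M] (q (φ j)) = q (φ j - M) from
              shiftInv_iter_shiftMap_iter hK z hphi]
            have hqW : q (φ j - M) ∈ W := by rw [hWc]; exact hfwd _
            exact hqW
          · intro n
            rw [shiftInv_iter_coord]
            exact hwF (n + M)
        have hw0 : w ∈ W := by
          have h := hback 0
          rwa [Function.iterate_zero_apply] at h
        refine ⟨w, ?_, hback⟩
        have h := hWc ▸ hw0
        exact h.1
      · -- nasty endpoints: backward invariant
        refine ⟨z, ?_, ?_⟩
        · have h := hWc ▸ hzW
          exact h.1
        · intro M
          rw [hWc]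
          rw [hWc] at hzW
          induction M with
          | zero => exact hzW
          | succ M ih =>
            rw [Function.iterate_succ_apply']
            exact stepEN hT hK _ ih.1 ih.2
    obtain ⟨w, hwend, hworb⟩ := hseed
    have hFsub : {y : InvLim T K | ∀ n, y.1 n ∈ omegaSet T c} ⊆ closure W := by
      intro y hy
      have hd := endpoint_dense hs1 hs2 hT hc hKdef2 hK w hwend y hy
      refine closure_mono ?_ hd
      rintro p ⟨M, rfl⟩
      exact hworb M
    apply hWF
    apply Set.Subset.antisymm hWsubF
    intro y hy
    rw [hWeq]
    exact ⟨hFsub hy, hy⟩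
end

section
/- If the kneading map of a tent map does not tend to infinity (Q(k) ↛ ∞), then the core inverse limit X′ contains a folding point lying in a non-degenerate basic arc. -/
open Set Filter Topology

lemma aux_img_mono {f : ℝ → ℝ} {u v : ℝ} (hf : ContinuousOn f (uIcc u v))
    (hm : MonotoneOn f (uIcc u v)) : f '' uIcc u v = uIcc (f u) (f v) := by
  apply Subset.antisymm
  · rintro y ⟨x, hx, rfl⟩
    rcases le_total u v with h | h
    · have hx' : x ∈ Icc u v := uIcc_of_le h ▸ hx
      have hfu : f u ≤ f v := hm left_mem_uIcc right_mem_uIcc h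
      rw [uIcc_of_le hfu, mem_Icc]
      exact ⟨hm left_mem_uIcc hx hx'.1, hm hx right_mem_uIcc hx'.2⟩
    · have hx' : x ∈ Icc v u := uIcc_of_ge h ▸ hx
      have hfv : f v ≤ f u := hm right_mem_uIcc left_mem_uIcc h
      rw [uIcc_of_ge hfv, mem_Icc]
      exact ⟨hm right_mem_uIcc hx hx'.1, hm hx left_mem_uIcc hx'.2⟩
  · exact intermediate_value_uIcc hf

lemma aux_img_anti {f : ℝ → ℝ} {u v : ℝ} (hf : ContinuousOn f (uIcc u v))
    (hm : AntitoneOn f (uIcc u v)) : f '' uIcc u v = uIcc (f u) (f v) := by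
  apply Subset.antisymm
  · rintro y ⟨x, hx, rfl⟩
    rcases le_total u v with h | h
    · have hx' : x ∈ Icc u v := uIcc_of_le h ▸ hx
      have hfu : f v ≤ f u := hm left_mem_uIcc right_mem_uIcc h
      rw [uIcc_of_ge hfu, mem_Icc]
      exact ⟨hm hx right_mem_uIcc hx'.2, hm left_mem_uIcc hx hx'.1⟩
    · have hx' : x ∈ Icc v u := uIcc_of_ge h ▸ hx
      have hfv : f u ≤ f v := hm right_mem_uIcc left_mem_uIcc h
      rw [uIcc_of_le hfv, mem_Icc]
      exact ⟨hm hx left_mem_uIcc hx'.2, hm right_mem_uIcc hx hx'.1⟩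
  · exact intermediate_value_uIcc hf


set_option maxHeartbeats 1000000 in
/-- If the kneading map of a tent map does not tend to infinity, then
the core inverse limit `X′` contains a folding point lying in a non-degenerate basic
arc. -/
theorem stmt16 (s : ℝ) (hs : s ∈ Set.Ioc (Real.sqrt 2) 2) (T : ℝ → ℝ)
    (hT : ∀ x, T x = min (s * x) (s * (1 - x))) (c : ℝ) (hc : c = 1/2)
    (hnc : ∀ n, 1 ≤ n → T^[n] c ≠ c)
    (hinf : Function.Injective fun n : ℕ => T^[n] c)
    (D : ℕ → Set ℝ)
    (hD1 : D 1 = Set.uIcc c (T c))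
    (hDcut : ∀ n, 1 ≤ n → c ∈ D n → D (n + 1) = Set.uIcc (T^[n+1] c) (T c))
    (hDnot : ∀ n, 1 ≤ n → c ∉ D n → D (n + 1) = T '' D n)
    (S : ℕ → ℕ) (hS : StrictMono S) (hS0 : S 0 = 1)
    (hSrange : ∀ n, 1 ≤ n → (c ∈ D n ↔ n ∈ Set.range S))
    (Q : ℕ → ℕ) (hQ : ∀ k, 1 ≤ k → S k = S (k - 1) + S (Q k))
    (hQninf : ¬ Filter.Tendsto Q Filter.atTop Filter.atTop)
    (K : Set ℝ) (hK : K = Set.Icc (T^[2] c) (T c))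
    (F : Set (InvLim T K))
    (hF : F = {x : InvLim T K | ∀ n, x.1 n ∈ omegaSet T c}) :
    ∃ x ∈ F, ¬ (basicArcOf T K c x).Subsingleton := by
  classical
  -- basic numeric facts
  have hs1 : 1 < s := by
    have h2 : (1:ℝ) < Real.sqrt 2 := by
      nlinarith [Real.sq_sqrt (by norm_num : (0:ℝ) ≤ 2), Real.sqrt_nonneg 2]
    exact h2.trans hs.1
  have hs2 : s ≤ 2 := hs.2
  have hs0 : 0 < s := by linarith
  have Tleft : ∀ x : ℝ, x ≤ c → T x = s * x := by
    intro x hx; rw [hT]; apply min_eq_left; rw [hc] at hx; nlinarith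
  have Tright : ∀ x : ℝ, c ≤ x → T x = s * (1 - x) := by
    intro x hx; rw [hT]; apply min_eq_right; rw [hc] at hx; nlinarith
  have Tcont : Continuous T := by
    have : T = fun x => min (s * x) (s * (1 - x)) := funext hT
    rw [this]
    exact ((continuous_const.mul continuous_id).min
      (continuous_const.mul (continuous_const.sub continuous_id)))
  have cT : T c = s / 2 := by rw [Tleft c le_rfl, hc]; ring
  have hcTc : c < T c := by rw [cT, hc]; linarith
  have T2c : T^[2] c = s * (1 - s / 2) := by
    rw [show (2:ℕ) = 1 + 1 from rfl, Function.iterate_succ_apply', Function.iterate_one, cT]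
    rw [Tright (s/2) (by rw [hc]; linarith)]
  have hT2c_le : T^[2] c ≤ c := by rw [T2c, hc]; nlinarith
  have hT2c_0 : 0 ≤ T^[2] c := by rw [T2c]; nlinarith
  have hcK : c ∈ K := by rw [hK]; exact ⟨hT2c_le, hcTc.le⟩
  have hTcK : T c ∈ K := by rw [hK]; exact ⟨le_trans hT2c_le hcTc.le, le_rfl⟩
  have hIccK : Icc c (T c) ⊆ K := by rw [hK]; exact Icc_subset_Icc hT2c_le le_rfl
  have hTK : ∀ x ∈ K, T x ∈ K := by
    intro x hx
    rw [hK, mem_Icc] at hx ⊢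
    rw [T2c] at hx ⊢
    rw [cT] at hx ⊢
    rcases le_total x c with h | h
    · rw [Tleft x h]; rw [hc] at h; constructor <;> nlinarith [hx.1, hx.2]
    · rw [Tright x h]; rw [hc] at h; constructor <;> nlinarith [hx.1, hx.2]
  have horbK : ∀ n, 1 ≤ n → T^[n] c ∈ K := by
    intro n hn
    induction n with
    | zero => omega
    | succ k ih =>
      rcases Nat.eq_or_lt_of_le hn with h | h
      · rw [← h]; simpa using hTcK
      · rw [Function.iterate_succ_apply']
        exact hTK _ (ih (by omega))
  -- the right inverse g
  set g : ℝ → ℝ := fun z => 1 - z / s with hgdef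
  have hg1 : ∀ z ∈ K, T (g z) = z := by
    intro z hz
    rw [hK, mem_Icc, cT] at hz
    have hds : z / s ≤ 1/2 := by rw [div_le_iff₀ hs0]; nlinarith [hz.2]
    have hgc : c ≤ g z := by simp only [hgdef, hc]; linarith
    rw [Tright _ hgc]
    simp only [hgdef]
    field_simp
    ring
  have hg2 : ∀ z ∈ K, g z ∈ Icc c (T c) := by
    intro z hz
    rw [hK, mem_Icc, T2c] at hz
    rw [cT] at hz
    have hds : z / s ≤ 1/2 := by rw [div_le_iff₀ hs0]; nlinarith [hz.2]
    have hds2 : (1 - s/2) ≤ z / s := by rw [le_div_iff₀ hs0]; nlinarith [hz.1]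
    constructor
    · simp only [hgdef, hc]; linarith
    · simp only [hgdef, cT]; linarith
  have hgiter : ∀ t, 1 ≤ t → g^[t] c ∈ Icc c (T c) := by
    intro t ht
    induction t with
    | zero => omega
    | succ k ih =>
      rcases Nat.eq_or_lt_of_le ht with h | h
      · rw [← h]; simpa using hg2 c hcK
      · rw [Function.iterate_succ_apply']
        exact hg2 _ (hIccK (ih (by omega)))
  have hS1 : ∀ x, 1 ≤ S x := fun x => hS0 ▸ hS.monotone (Nat.zero_le x)
  have hKoc : K.OrdConnected := by rw [hK]; exact Set.ordConnected_Icc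
  -- invariants of the Hofbauer levels
  have DINV : ∀ n, 1 ≤ n → (D n ⊆ K ∧ T^[n] c ∈ D n ∧ IsPreconnected (D n)) := by
    intro n hn
    induction n with
    | zero => omega
    | succ k ih =>
      rcases Nat.eq_or_lt_of_le hn with h | h
      · rw [← h, hD1, uIcc_of_le hcTc.le]
        exact ⟨hIccK, by simpa using (right_mem_Icc.2 hcTc.le), isPreconnected_Icc⟩
      · have hk1 : 1 ≤ k := by omega
        obtain ⟨h1, h2, h3⟩ := ih hk1
        by_cases hcD : c ∈ D k
        · rw [hDcut k hk1 hcD]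
          refine ⟨hKoc.uIcc_subset (horbK _ (by omega)) hTcK, left_mem_uIcc, ?_⟩
          rw [uIcc_of_le (by rw [hK, mem_Icc] at *; exact (horbK (k+1) (by omega)).2)]
          exact isPreconnected_Icc
        · rw [hDnot k hk1 hcD]
          refine ⟨?_, ?_, h3.image T Tcont.continuousOn⟩
          · rintro y ⟨x, hx, rfl⟩; exact hTK x (h1 hx)
          · rw [Function.iterate_succ_apply']; exact mem_image_of_mem T h2
  -- the image formula for intervals avoiding c
  have himg : ∀ u v : ℝ, c ∉ uIcc u v → T '' uIcc u v = uIcc (T u) (T v) := by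
    intro u v hcn
    rcases le_total u c with hu | hu <;> rcases le_total v c with hv | hv
    · -- both ≤ c : left branch, monotone
      have hss : ∀ x ∈ uIcc u v, x ≤ c := by
        intro x hx
        rcases mem_uIcc.1 hx with ⟨h1, h2⟩ | ⟨h1, h2⟩
        · exact le_trans h2 hv
        · exact le_trans h2 hu
      have himgeq : T '' uIcc u v = (fun x => s * x) '' uIcc u v := by
        apply image_congr; intro x hx; exact Tleft x (hss x hx)
      rw [himgeq, aux_img_mono (by fun_prop)
        (fun x hx y hy hxy => by nlinarith [hs0]),
        Tleft u hu, Tleft v hv]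
    · exact absurd (mem_uIcc.2 (Or.inl ⟨hu, hv⟩)) hcn
    · exact absurd (mem_uIcc.2 (Or.inr ⟨hv, hu⟩)) hcn
    · -- both ≥ c : right branch, antitone
      have hss : ∀ x ∈ uIcc u v, c ≤ x := by
        intro x hx
        rcases mem_uIcc.1 hx with ⟨h1, h2⟩ | ⟨h1, h2⟩
        · exact le_trans hu h1
        · exact le_trans hv h1
      have himgeq : T '' uIcc u v = (fun x => s * (1 - x)) '' uIcc u v := by
        apply image_congr; intro x hx; exact Tright x (hss x hx)
      rw [himgeq, aux_img_anti (by fun_prop)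
        (fun x hx y hy hxy => by nlinarith [hs0]),
        Tright u hu, Tright v hv]
  -- the backward-step choice lemma
  have BC : ∀ n, 1 ≤ n → ∀ z ∈ D (n+1), ∃ u, u ∈ D n ∧ T u = z ∧
      ((u ≤ c ∧ T^[n] c ≤ c) ∨ (c ≤ u ∧ c ≤ T^[n] c)) := by
    intro n hn z hz
    obtain ⟨hDK, hcn, hpc⟩ := DINV n hn
    have hoc : (D n).OrdConnected := hpc.ordConnected
    by_cases hcD : c ∈ D n
    · -- cutting level
      rw [hDcut n hn hcD] at hz
      have hTn1K : T^[n+1] c ∈ K := horbK _ (by omega)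
      rw [uIcc_of_le (by rw [hK, mem_Icc] at hTn1K; exact hTn1K.2), mem_Icc] at hz
      have hne : T^[n] c ≠ c := hnc n hn
      have hTcsc : T c = s * c := by rw [cT, hc]; ring
      have hzu : z ≤ s * c := hTcsc ▸ hz.2
      rcases hne.lt_or_gt with hlt | hlt
      · -- T^[n] c < c, use left branch
        have hzl : s * T^[n] c ≤ z := by
          have he : T^[n+1] c = s * T^[n] c := by
            rw [Function.iterate_succ_apply', Tleft _ hlt.le]
          linarith [hz.1, he.symm.le, he.le]
        have hdc : z / s ≤ c := by rw [div_le_iff₀ hs0]; nlinarith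
        refine ⟨z / s, ?_, ?_, Or.inl ⟨hdc, hlt.le⟩⟩
        · apply hoc.uIcc_subset hcn hcD
          rw [uIcc_of_le hlt.le, mem_Icc]
          refine ⟨?_, hdc⟩
          rw [le_div_iff₀ hs0]; nlinarith
        · rw [Tleft _ hdc]; field_simp
      · -- c < T^[n] c, use right branch
        have hz2' : z / s ≤ 1/2 := by
          rw [div_le_iff₀ hs0]
          linarith [hz.2, cT.le]
        refine ⟨1 - z / s, ?_, ?_, Or.inr ⟨by rw [hc]; linarith, hlt.le⟩⟩
        · apply hoc.uIcc_subset hcD hcn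
          rw [uIcc_of_le hlt.le, mem_Icc]
          constructor
          · rw [hc]; linarith
          · have : T^[n+1] c = s * (1 - T^[n] c) := by
              rw [Function.iterate_succ_apply', Tright _ hlt.le]
            have h1 : s * (1 - T^[n] c) ≤ z := this ▸ hz.1
            have h2 : 1 - T^[n] c ≤ z / s := by rw [le_div_iff₀ hs0]; linarith
            linarith
        · rw [Tright _ (by rw [hc]; linarith)]
          field_simp
          ring
    · -- non-cutting level
      rw [hDnot n hn hcD] at hz
      obtain ⟨u, hu, hTu⟩ := hz
      refine ⟨u, hu, hTu, ?_⟩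
      rcases le_total u c with h | h <;> rcases le_total (T^[n] c) c with h' | h'
      · exact Or.inl ⟨h, h'⟩
      · exact absurd (hoc.uIcc_subset hu hcn (mem_uIcc.2 (Or.inl ⟨h, h'⟩))) hcD
      · exact absurd (hoc.uIcc_subset hcn hu (mem_uIcc.2 (Or.inl ⟨h', h⟩))) hcD
      · exact Or.inr ⟨h, h'⟩
  -- the interval formula between cutting times
  have hFORM : ∀ k, 1 ≤ k → ∀ t, 1 ≤ t → S (k-1) + t ≤ S k →
      D (S (k-1) + t) = uIcc (T^[S (k-1) + t] c) (T^[t] c) := by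
    intro k hk t
    induction t with
    | zero => omega
    | succ r ih =>
      intro hr1 hrS
      rcases Nat.eq_or_lt_of_le hr1 with h | h
      · rw [← h]
        have := hDcut (S (k-1)) (hS1 _) ((hSrange _ (hS1 _)).2 ⟨k-1, rfl⟩)
        rw [this]
        norm_num
      · have hr : 1 ≤ r := by omega
        have ihv := ih hr (by omega)
        have hnotc : c ∉ D (S (k-1) + r) := by
          intro hcc
          obtain ⟨j, hj⟩ := (hSrange _ (by omega)).1 hcc
          have hj1 : k - 1 < j := hS.lt_iff_lt.1 (by omega)
          have hj2 : j < k := hS.lt_iff_lt.1 (by omega)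
          omega
        have hstep := hDnot _ (by omega) hnotc
        have hnotc' : c ∉ uIcc (T^[S (k-1) + r] c) (T^[r] c) := ihv ▸ hnotc
        rw [show S (k-1) + (r+1) = (S (k-1) + r) + 1 from rfl, hstep, ihv,
          himg _ _ hnotc', ← Function.iterate_succ_apply' T,
          ← Function.iterate_succ_apply' T]
  -- pigeonhole: some value q of the kneading map is attained infinitely often
  have hpig : ∃ q : ℕ, {n | Q n = q ∧ 1 ≤ n}.Infinite := by
    have h1 : ∃ b, ∃ᶠ n in atTop, Q n < b := by
      by_contra h
      push_neg at h
      apply hQninf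
      rw [tendsto_atTop]
      intro b
      have h2 := h (b+1)
      filter_upwards [h2] with n hn
      omega
    obtain ⟨b, hb⟩ := h1
    have hinf2 : {n | Q n < b}.Infinite := by
      apply Set.infinite_of_not_bddAbove
      rintro ⟨x, hx⟩
      rw [frequently_atTop] at hb
      obtain ⟨n, hn1, hn2⟩ := hb (x+1)
      exact absurd (hx hn2) (by omega)
    by_contra hq
    push_neg at hq
    have hsub : {n | Q n < b} ⊆ (⋃ q ∈ {q : ℕ | q < b}, {n | Q n = q ∧ 1 ≤ n}) ∪ {0} := by
      intro n hn
      rcases Nat.eq_zero_or_pos n with rfl | hn1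
      · exact Or.inr rfl
      · refine Or.inl ?_
        simp only [Set.mem_iUnion]
        exact ⟨Q n, hn, rfl, hn1⟩
    exact hinf2 (Set.Finite.subset (((Set.finite_lt_nat b).biUnion
      (fun q _ => hq q)).union (Set.finite_singleton 0)) hsub)
  obtain ⟨q, hqinf⟩ := hpig
  have hkex : ∀ x : ℕ, ∃ y ∈ {n | Q n = q ∧ 1 ≤ n}, x < y := fun x => hqinf.exists_gt x
  set kfun : ℕ → ℕ := fun i => Nat.rec (hkex 0).choose (fun _ prev => (hkex prev).choose) i
    with hkfun
  have hksucc : ∀ i, kfun (i+1) = (hkex (kfun i)).choose := fun i => rfl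
  have hkmem : ∀ i, Q (kfun i) = q ∧ 1 ≤ kfun i := by
    intro i
    cases i with
    | zero => exact (hkex 0).choose_spec.1
    | succ j => rw [hksucc j]; exact (hkex (kfun j)).choose_spec.1
  have hkmono : StrictMono kfun := strictMono_nat_of_lt_succ (fun n => by
    rw [hksucc n]; exact (hkex (kfun n)).choose_spec.2)
  set m : ℕ → ℕ := fun i => S (kfun i) with hmdef
  have hmmono : StrictMono m := hS.comp hkmono
  have hm1 : ∀ i, 1 ≤ m i := fun i => hS1 _
  have hmge : ∀ i, i ≤ m i := fun i => le_trans hkmono.le_apply hS.le_apply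
  set a : ℝ := T^[S q] c with hadef
  have hSq1 : 1 ≤ S q := hS1 q
  have hane : a ≠ c := hnc _ hSq1
  have hDm : ∀ i, D (m i) = uIcc (T^[m i] c) a := by
    intro i
    have hk1 : 1 ≤ kfun i := (hkmem i).2
    have hqk : S (kfun i) = S (kfun i - 1) + S q := by
      have h3 := hQ (kfun i) hk1
      rw [(hkmem i).1] at h3
      exact h3
    have h4 := hFORM (kfun i) hk1 (S q) hSq1 (by omega)
    show D (S (kfun i)) = uIcc (T^[S (kfun i)] c) a
    rw [hadef, hqk]
    exact h4
  have hcDm : ∀ i, c ∈ D (m i) := fun i => (hSrange _ (hm1 i)).2 ⟨kfun i, rfl⟩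
  have haK : a ∈ K := horbK _ hSq1
  -- the reference backward orbit through the critical orbit
  set xi : ℕ → ℕ → ℝ := fun mm j => if j ≤ mm then T^[mm - j] c else g^[j - mm] c with hxidef
  have hxival : ∀ mm j, j ≤ mm → xi mm j = T^[mm - j] c := by
    intro mm j h; simp [hxidef, h]
  have hxitail : ∀ mm j, mm < j → xi mm j = g^[j - mm] c := by
    intro mm j h; simp [hxidef, Nat.not_le.2 h]
  have hxiK : ∀ mm j, xi mm j ∈ K := by
    intro mm j
    rcases le_or_gt j mm with h | h
    · rw [hxival mm j h]
      rcases Nat.lt_or_ge j mm with h2 | h2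
      · exact horbK _ (by omega)
      · have : mm - j = 0 := by omega
        rw [this]; simpa using hcK
    · rw [hxitail mm j h]; exact hIccK (hgiter _ (by omega))
  have hxichain : ∀ mm j, T (xi mm (j+1)) = xi mm j := by
    intro mm j
    rcases lt_or_ge (j+1) mm with h | h
    · rw [hxival mm (j+1) h.le, hxival mm j (by omega),
        show mm - j = (mm - (j+1)) + 1 by omega, Function.iterate_succ_apply' T]
    · rcases Nat.eq_or_lt_of_le h with he | hlt
      · -- mm = j + 1
        rw [hxival mm (j+1) he.ge, hxival mm j (by omega),
          show mm - (j+1) = 0 by omega, show mm - j = 1 by omega]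
        simp
      · -- mm ≤ j
        have hmj : mm ≤ j := by omega
        rw [hxitail mm (j+1) (by omega)]
        rcases Nat.eq_or_lt_of_le hmj with he2 | hlt2
        · rw [hxival mm j (by omega), show j + 1 - mm = 1 by omega,
            show mm - j = 0 by omega]
          simpa using hg1 c hcK
        · rw [hxitail mm j hlt2, show j + 1 - mm = (j - mm) + 1 by omega,
            Function.iterate_succ_apply' g]
          exact hg1 _ (hIccK (hgiter _ (by omega)))
  have hxitail_ge : ∀ mm j, mm ≤ j → c ≤ xi mm j := by
    intro mm j h
    rcases Nat.eq_or_lt_of_le h with he | hlt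
    · rw [hxival mm j he.ge, show mm - j = 0 by omega]; simp
    · rw [hxitail mm j hlt]; exact (hgiter _ (by omega)).1
  -- backward orbits through a with matching itineraries
  set zf : ℕ → ℕ → ℝ := fun i => fun j => Nat.rec a
    (fun j2 ih => if j2 + 2 ≤ m i then
        (if h : ∃ u, u ∈ D (m i - (j2+1)) ∧ T u = ih ∧
            ((u ≤ c ∧ T^[m i - (j2+1)] c ≤ c) ∨ (c ≤ u ∧ c ≤ T^[m i - (j2+1)] c))
          then h.choose else g ih)
      else g ih) j with hzfdef
  have hzf0 : ∀ i, zf i 0 = a := fun i => by rw [hzfdef]; rfl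
  have hzfsucc : ∀ i j, zf i (j+1) = (if j + 2 ≤ m i then
        (if h : ∃ u, u ∈ D (m i - (j+1)) ∧ T u = zf i j ∧
            ((u ≤ c ∧ T^[m i - (j+1)] c ≤ c) ∨ (c ≤ u ∧ c ≤ T^[m i - (j+1)] c))
          then h.choose else g (zf i j))
      else g (zf i j)) := fun i j => by rw [hzfdef]
  have hzfD : ∀ i j, j ≤ m i - 1 → zf i j ∈ D (m i - j) := by
    intro i j
    induction j with
    | zero => intro h; rw [hzf0, Nat.sub_zero, hDm i]; exact right_mem_uIcc
    | succ j2 ih =>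
      intro h
      have h2 : j2 + 2 ≤ m i := by omega
      have hDj : zf i j2 ∈ D (m i - j2) := ih (by omega)
      have hex : ∃ u, u ∈ D (m i - (j2+1)) ∧ T u = zf i j2 ∧
          ((u ≤ c ∧ T^[m i - (j2+1)] c ≤ c) ∨ (c ≤ u ∧ c ≤ T^[m i - (j2+1)] c)) := by
        apply BC (m i - (j2+1)) (by omega)
        rw [show m i - (j2+1) + 1 = m i - j2 by omega]
        exact hDj
      rw [hzfsucc, if_pos h2, dif_pos hex]
      exact hex.choose_spec.1
  have hzftail : ∀ i t, zf i (m i - 1 + t) ∈ Icc c (T c) := by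
    intro i t
    induction t with
    | zero =>
      have h0 := hzfD i (m i - 1) le_rfl
      rw [show m i - (m i - 1) = 1 by have := hm1 i; omega, hD1,
        uIcc_of_le hcTc.le] at h0
      simpa using h0
    | succ t2 ih =>
      rw [show m i - 1 + (t2+1) = (m i - 1 + t2) + 1 from rfl, hzfsucc,
        if_neg (by omega)]
      exact hg2 _ (hIccK ih)
  have hzfIcc : ∀ i j, m i - 1 ≤ j → zf i j ∈ Icc c (T c) := by
    intro i j h
    have h2 := hzftail i (j - (m i - 1))
    rwa [show m i - 1 + (j - (m i - 1)) = j by omega] at h2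
  have hzfK : ∀ i j, zf i j ∈ K := by
    intro i j
    rcases le_or_gt j (m i - 1) with h | h
    · exact (DINV (m i - j) (by have := hm1 i; omega)).1 (hzfD i j h)
    · exact hIccK (hzfIcc i j h.le)
  have hzfchain : ∀ i j, T (zf i (j+1)) = zf i j := by
    intro i j
    by_cases h2 : j + 2 ≤ m i
    · have hDj : zf i j ∈ D (m i - j) := hzfD i j (by omega)
      have hex : ∃ u, u ∈ D (m i - (j+1)) ∧ T u = zf i j ∧
          ((u ≤ c ∧ T^[m i - (j+1)] c ≤ c) ∨ (c ≤ u ∧ c ≤ T^[m i - (j+1)] c)) := by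
        apply BC (m i - (j+1)) (by omega)
        rw [show m i - (j+1) + 1 = m i - j by omega]
        exact hDj
      rw [hzfsucc, if_pos h2, dif_pos hex]
      exact hex.choose_spec.2.1
    · rw [hzfsucc, if_neg h2]
      exact hg1 _ (hzfK i j)
  have hzfside : ∀ i j, 1 ≤ j →
      ((xi (m i) j ≤ c ∧ zf i j ≤ c) ∨ (c ≤ xi (m i) j ∧ c ≤ zf i j)) := by
    intro i j hj
    rcases le_or_gt (j+1) (m i) with h | h
    · obtain ⟨j2, rfl⟩ : ∃ j2, j = j2 + 1 := ⟨j - 1, by omega⟩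
      have hDj : zf i j2 ∈ D (m i - j2) := hzfD i j2 (by omega)
      have hex : ∃ u, u ∈ D (m i - (j2+1)) ∧ T u = zf i j2 ∧
          ((u ≤ c ∧ T^[m i - (j2+1)] c ≤ c) ∨ (c ≤ u ∧ c ≤ T^[m i - (j2+1)] c)) := by
        apply BC (m i - (j2+1)) (by omega)
        rw [show m i - (j2+1) + 1 = m i - j2 by omega]
        exact hDj
      rw [hzfsucc, if_pos (by omega : j2 + 2 ≤ m i), dif_pos hex,
        hxival (m i) (j2+1) (by omega)]
      exact hex.choose_spec.2.2.imp (fun hh => ⟨hh.2, hh.1⟩) (fun hh => ⟨hh.2, hh.1⟩)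
    · right
      exact ⟨hxitail_ge _ _ (by omega), (hzfIcc i j (by omega)).1⟩
  -- compactness: extract simultaneous convergent subsequences
  set C : Set (ℕ → ℝ) := {f | ∀ n, f n ∈ K} with hCdef
  have hCc : IsCompact C := by
    have h1 : C = Set.pi univ (fun _ : ℕ => K) := by
      ext f; simp [hCdef, Set.mem_pi]
    rw [h1]
    exact isCompact_univ_pi (fun _ => hK ▸ isCompact_Icc)
  have hPmem : ∀ i, ((fun i => (xi (m i), zf i)) i) ∈ C ×ˢ C := by
    intro i
    exact ⟨fun n => hxiK (m i) n, fun n => hzfK i n⟩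
  obtain ⟨⟨X, Y⟩, hXYmem, φ, hφ, hconv⟩ := (hCc.prod hCc).tendsto_subseq hPmem
  have hXK : ∀ j, X j ∈ K := hXYmem.1
  have hYK : ∀ j, Y j ∈ K := hXYmem.2
  have hXconv : ∀ j, Tendsto (fun i => xi (m (φ i)) j) atTop (𝓝 (X j)) := by
    intro j
    have h1 : Tendsto (fun i => xi (m (φ i))) atTop (𝓝 X) :=
      (continuous_fst.tendsto ((X, Y) : (ℕ → ℝ) × (ℕ → ℝ))).comp hconv
    exact (tendsto_pi_nhds.1 h1) j
  have hYconv : ∀ j, Tendsto (fun i => zf (φ i) j) atTop (𝓝 (Y j)) := by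
    intro j
    have h1 : Tendsto (fun i => zf (φ i)) atTop (𝓝 Y) :=
      (continuous_snd.tendsto ((X, Y) : (ℕ → ℝ) × (ℕ → ℝ))).comp hconv
    exact (tendsto_pi_nhds.1 h1) j
  have hXchain : ∀ j, T (X (j+1)) = X j := by
    intro j
    have h1 : Tendsto (fun i => T (xi (m (φ i)) (j+1))) atTop (𝓝 (T (X (j+1)))) :=
      (Tcont.tendsto _).comp (hXconv (j+1))
    have h2 : (fun i => T (xi (m (φ i)) (j+1))) = fun i => xi (m (φ i)) j :=
      funext fun i => hxichain _ j
    rw [h2] at h1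
    exact tendsto_nhds_unique h1 (hXconv j)
  have hYchain : ∀ j, T (Y (j+1)) = Y j := by
    intro j
    have h1 : Tendsto (fun i => T (zf (φ i) (j+1))) atTop (𝓝 (T (Y (j+1)))) :=
      (Tcont.tendsto _).comp (hYconv (j+1))
    have h2 : (fun i => T (zf (φ i) (j+1))) = fun i => zf (φ i) j :=
      funext fun i => hzfchain _ j
    rw [h2] at h1
    exact tendsto_nhds_unique h1 (hYconv j)
  have hY0 : Y 0 = a := by
    have h2 := hYconv 0
    have h1 : (fun i => zf (φ i) 0) = fun _ => a := funext fun i => hzf0 (φ i)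
    rw [h1] at h2
    exact (tendsto_nhds_unique h2 tendsto_const_nhds)
  have homega : ∀ j, X j ∈ omegaSet T c := by
    intro j
    refine ⟨fun t => m (φ (t + j)) - j, ?_, ?_⟩
    · intro t1 t2 h
      have h1 : m (φ (t1 + j)) < m (φ (t2 + j)) := hmmono (hφ (by omega))
      have h2 : j ≤ m (φ (t1 + j)) :=
        le_trans (by omega : j ≤ t1 + j) (le_trans hφ.le_apply (hmge _))
      show m (φ (t1 + j)) - j < m (φ (t2 + j)) - j
      omega
    · have h3 : (fun t => T^[m (φ (t + j)) - j] c) = fun t => xi (m (φ (t + j))) j := by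
        funext t
        rw [hxival _ j (le_trans (by omega : j ≤ t + j) (le_trans hφ.le_apply (hmge _)))]
      rw [h3]
      exact (hXconv j).comp (tendsto_add_atTop_nat j)
  have hW : ∀ j, 1 ≤ j → ((X j ≤ c ∧ Y j ≤ c) ∨ (c ≤ X j ∧ c ≤ Y j)) := by
    intro j hj
    have hcl : IsClosed {p : ℝ × ℝ | (p.1 ≤ c ∧ p.2 ≤ c) ∨ (c ≤ p.1 ∧ c ≤ p.2)} :=
      IsClosed.union
        ((isClosed_le continuous_fst continuous_const).inter
          (isClosed_le continuous_snd continuous_const))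
        ((isClosed_le continuous_const continuous_fst).inter
          (isClosed_le continuous_const continuous_snd))
    have htt : Tendsto (fun i => (xi (m (φ i)) j, zf (φ i) j)) atTop (𝓝 (X j, Y j)) :=
      (hXconv j).prodMk_nhds (hYconv j)
    exact hcl.mem_of_tendsto htt (Eventually.of_forall (fun i => hzfside (φ i) j hj))
  have hX0ne : X 0 ≠ a := by
    have hopp : ∀ i, c ∈ uIcc (T^[m i] c) a := fun i => (hDm i) ▸ hcDm i
    have hX0t : Tendsto (fun i => T^[m (φ i)] c) atTop (𝓝 (X 0)) := by
      have h3 : (fun i => T^[m (φ i)] c) = fun i => xi (m (φ i)) 0 := by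
        funext i; rw [hxival _ 0 (by omega), Nat.sub_zero]
      rw [h3]; exact hXconv 0
    rcases hane.lt_or_gt with hac | hac
    · have hgt : ∀ i, c ≤ T^[m (φ i)] c := by
        intro i
        rcases mem_uIcc.1 (hopp (φ i)) with ⟨h1, h2⟩ | ⟨h1, h2⟩
        · exact absurd h2 (not_le.2 hac)
        · exact h2
      have h4 : c ≤ X 0 := ge_of_tendsto hX0t (Eventually.of_forall hgt)
      intro he; rw [he] at h4; exact absurd h4 (not_le.2 hac)
    · have hlt2 : ∀ i, T^[m (φ i)] c ≤ c := by
        intro i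
        rcases mem_uIcc.1 (hopp (φ i)) with ⟨h1, h2⟩ | ⟨h1, h2⟩
        · exact h1
        · exact absurd h1 (not_le.2 hac)
      have h4 : X 0 ≤ c := le_of_tendsto hX0t (Eventually.of_forall hlt2)
      intro he; rw [he] at h4; exact absurd h4 (not_le.2 hac)
  have hXit : ∀ n t, T^[t] (X (t + n)) = X n := by
    intro n t
    induction t with
    | zero => simp
    | succ t2 ih =>
      rw [show t2 + 1 + n = (t2 + n) + 1 by omega, Function.iterate_succ_apply,
        hXchain (t2 + n)]
      exact ih
  have hYit : ∀ n t, T^[t] (Y (t + n)) = Y n := by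
    intro n t
    induction t with
    | zero => simp
    | succ t2 ih =>
      rw [show t2 + 1 + n = (t2 + n) + 1 by omega, Function.iterate_succ_apply,
        hYchain (t2 + n)]
      exact ih
  have hkey : ∃ j0 : ℕ, ∀ i2, 1 ≤ i2 → X (i2 + j0) ≠ c := by
    by_cases hex2 : ∃ j, 1 ≤ j ∧ X j = c
    · obtain ⟨j0, hj01, hj0c⟩ := hex2
      refine ⟨j0, fun i2 hi2 hic => hnc i2 hi2 ?_⟩
      have h5 := hXit j0 i2
      rw [hic, hj0c] at h5
      exact h5
    · push_neg at hex2
      exact ⟨0, fun i2 hi2 => hex2 i2 hi2⟩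
  obtain ⟨j0, hj0⟩ := hkey
  have hxchain' : ∀ n, T (X (n + 1 + j0)) = X (n + j0) := fun n => by
    rw [show n + 1 + j0 = (n + j0) + 1 by omega]; exact hXchain (n + j0)
  have hychain' : ∀ n, T (Y (n + 1 + j0)) = Y (n + j0) := fun n => by
    rw [show n + 1 + j0 = (n + j0) + 1 by omega]; exact hYchain (n + j0)
  refine ⟨⟨fun n => X (n + j0), fun n => hXK _, fun n => hxchain' n⟩, ?_, ?_⟩
  · rw [hF]; exact fun n => homega (n + j0)
  · intro hsub
    set xp : InvLim T K := ⟨fun n => X (n + j0), fun n => hXK _, fun n => hxchain' n⟩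
      with hxpdef
    set yp : InvLim T K := ⟨fun n => Y (n + j0), fun n => hYK _, fun n => hychain' n⟩
      with hypdef
    have hxmem : xp ∈ basicArcOf T K c xp :=
      subset_closure (fun i2 hi2 => Or.inr Iff.rfl)
    have hymem : yp ∈ basicArcOf T K c xp := by
      apply subset_closure
      intro i2 hi2
      show Y (i2 + j0) = c ∨ (c < Y (i2 + j0) ↔ c < X (i2 + j0))
      by_cases hyc : Y (i2 + j0) = c
      · exact Or.inl hyc
      · right
        have hXne := hj0 i2 hi2
        rcases hW (i2 + j0) (by omega) with ⟨h1, h2⟩ | ⟨h1, h2⟩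
        · exact iff_of_false (not_lt.2 h2) (not_lt.2 h1)
        · exact iff_of_true (lt_of_le_of_ne h2 (Ne.symm hyc))
            (lt_of_le_of_ne h1 (Ne.symm hXne))
    have heq : xp = yp := hsub hxmem hymem
    have hfun : ∀ n, X (n + j0) = Y (n + j0) := by
      intro n
      have h6 := congrArg Subtype.val heq
      exact congrFun h6 n
    have hXY0 : X 0 = Y 0 := by
      have h6 := hXit 0 j0
      have h7 := hYit 0 j0
      rw [show j0 + 0 = 0 + j0 by omega] at h6 h7
      rw [← h6, ← h7, hfun 0]
    exact hX0ne (by rw [hXY0, hY0])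
end

section
/- If the critical orbit closure ω(c) of a tent map T is a Cantor set with c recurrent (in particular ω(c) ≠ [c_2,c_1]), then the inverse limit X of T does not contain a homeomorphic copy of every core tent-map inverse limit; specifically, X contains no subcontinuum homeomorphic to the core inverse limit of a tent map with critical orbit dense in its core. -/
open Set Filter Topology

noncomputable def tentm (σ x : ℝ) : ℝ := min (σ * x) (σ * (1 - x))

lemma tentm_of_le {σ x : ℝ} (hσ : 0 ≤ σ) (hx : x ≤ 1/2) : tentm σ x = σ * x := by
  unfold tentm
  apply min_eq_left
  nlinarith

lemma tentm_of_ge {σ x : ℝ} (hσ : 0 ≤ σ) (hx : 1/2 ≤ x) : tentm σ x = σ * (1 - x) := by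
  unfold tentm
  apply min_eq_right
  nlinarith

lemma tentm_mirror (σ x : ℝ) : tentm σ (1 - x) = tentm σ x := by
  unfold tentm
  rw [min_comm]
  ring_nf

lemma tentm_continuous (σ : ℝ) : Continuous (tentm σ) := by
  unfold tentm
  fun_prop

lemma tentm_lipschitz {σ : ℝ} (hσ : 0 ≤ σ) (x y : ℝ) :
    |tentm σ x - tentm σ y| ≤ σ * |x - y| := by
  unfold tentm
  refine (abs_min_sub_min_le_max _ _ _ _).trans ?_
  have h1 : |σ * x - σ * y| ≤ σ * |x - y| := by
    rw [← mul_sub, abs_mul, abs_of_nonneg hσ]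
  have h2 : |σ * (1 - x) - σ * (1 - y)| ≤ σ * |x - y| := by
    have : σ * (1 - x) - σ * (1 - y) = -(σ * x - σ * y) := by ring
    rw [this, abs_neg, ← mul_sub, abs_mul, abs_of_nonneg hσ]
  exact max_le h1 h2

lemma tentm_iter_lipschitz {σ : ℝ} (hσ : 0 ≤ σ) (k : ℕ) (x y : ℝ) :
    |(tentm σ)^[k] x - (tentm σ)^[k] y| ≤ σ ^ k * |x - y| := by
  induction k generalizing x y with
  | zero => simp
  | succ n ih =>
    rw [Function.iterate_succ_apply, Function.iterate_succ_apply]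
    calc |(tentm σ)^[n] (tentm σ x) - (tentm σ)^[n] (tentm σ y)|
        ≤ σ ^ n * |tentm σ x - tentm σ y| := ih _ _
      _ ≤ σ ^ n * (σ * |x - y|) := by
          exact mul_le_mul_of_nonneg_left (tentm_lipschitz hσ x y) (pow_nonneg hσ n)
      _ = σ ^ (n+1) * |x - y| := by ring

/-- The core interval of the tent map with slope `σ`. -/
noncomputable def tcore (σ : ℝ) : Set ℝ := Icc (σ * (1 - σ/2)) (σ/2)

lemma tentm_c1 {σ : ℝ} (hσ : 0 ≤ σ) : tentm σ (1/2) = σ/2 := by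
  rw [tentm_of_le hσ le_rfl]; ring

lemma tentm_c2 {σ : ℝ} (h1 : 1 ≤ σ) : (tentm σ)^[2] (1/2) = σ * (1 - σ/2) := by
  have hσ : (0:ℝ) ≤ σ := by linarith
  rw [Function.iterate_succ_apply, Function.iterate_one, tentm_c1 hσ,
    tentm_of_ge hσ (by linarith)]

lemma tcore_eq {σ : ℝ} (h1 : 1 ≤ σ) :
    Icc ((tentm σ)^[2] (1/2)) (tentm σ (1/2)) = tcore σ := by
  rw [tentm_c2 h1, tentm_c1 (by linarith)]; rfl

lemma c2_lt_half {σ : ℝ} (h1 : 1 < σ) (h2 : σ ≤ 2) : σ * (1 - σ/2) < 1/2 := by nlinarith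

lemma half_lt_c1 {σ : ℝ} (h1 : 1 < σ) : (1:ℝ)/2 < σ/2 := by linarith

lemma c2_nonneg {σ : ℝ} (h1 : 1 < σ) (h2 : σ ≤ 2) : 0 ≤ σ * (1 - σ/2) := by nlinarith

lemma half_mem_tcore {σ : ℝ} (h1 : 1 < σ) (h2 : σ ≤ 2) : (1:ℝ)/2 ∈ tcore σ :=
  ⟨le_of_lt (c2_lt_half h1 h2), le_of_lt (half_lt_c1 h1)⟩

lemma tcore_subset_unit {σ : ℝ} (h1 : 1 < σ) (h2 : σ ≤ 2) : tcore σ ⊆ Icc 0 1 := by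
  intro x hx
  rcases hx with ⟨hl, hr⟩
  constructor
  · linarith [c2_nonneg h1 h2]
  · linarith

/-- The tent map maps the core into the core. -/
lemma tentm_mem_tcore {σ : ℝ} (h1 : 1 < σ) (h2 : σ ≤ 2) {v : ℝ} (hv : v ∈ tcore σ) :
    tentm σ v ∈ tcore σ := by
  rcases hv with ⟨hl, hr⟩
  rcases le_or_gt v (1/2) with h | h
  · rw [tentm_of_le (by linarith) h]
    constructor
    · nlinarith
    · nlinarith
  · rw [tentm_of_ge (by linarith) (le_of_lt h)]
    constructor
    · nlinarith
    · nlinarith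

lemma tentm_iter_mem_tcore {σ : ℝ} (h1 : 1 < σ) (h2 : σ ≤ 2) {v : ℝ} (hv : v ∈ tcore σ) (k : ℕ) :
    (tentm σ)^[k] v ∈ tcore σ := by
  induction k with
  | zero => simpa
  | succ n ih => rw [Function.iterate_succ_apply']; exact tentm_mem_tcore h1 h2 ih

/-- Right inverse branch. -/
noncomputable def rbr (σ v : ℝ) : ℝ := 1 - v / σ

lemma rbr_continuous (σ : ℝ) : Continuous (rbr σ) := by unfold rbr; fun_prop

lemma rbr_mem_tcore {σ : ℝ} (h1 : 1 < σ) (h2 : σ ≤ 2) {v : ℝ} (hv : v ∈ tcore σ) :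
    rbr σ v ∈ tcore σ := by
  rcases hv with ⟨hl, hr⟩
  have hσ : (0:ℝ) < σ := by linarith
  unfold rbr
  have hd : v / σ ≤ 1/2 := by
    rw [div_le_iff₀ hσ]; nlinarith
  have hd2 : 0 ≤ v / σ := div_nonneg (by nlinarith) (le_of_lt hσ)
  have hd3 : 1 - σ/2 ≤ v / σ := by
    rw [le_div_iff₀ hσ]; nlinarith
  constructor
  · nlinarith
  · nlinarith

lemma tentm_rbr {σ : ℝ} (h1 : 1 < σ) {v : ℝ} (hv : v ≤ σ/2) : tentm σ (rbr σ v) = v := by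
  have hσ : (0:ℝ) < σ := by linarith
  have hge : (1:ℝ)/2 ≤ rbr σ v := by
    unfold rbr
    have hd : v / σ ≤ 1/2 := by rw [div_le_iff₀ hσ]; nlinarith
    linarith
  rw [tentm_of_ge (le_of_lt hσ) hge]
  unfold rbr
  field_simp; ring

lemma rbr_iter_mem_tcore {σ : ℝ} (h1 : 1 < σ) (h2 : σ ≤ 2) {v : ℝ} (hv : v ∈ tcore σ) (k : ℕ) :
    (rbr σ)^[k] v ∈ tcore σ := by
  induction k with
  | zero => simpa
  | succ n ih => rw [Function.iterate_succ_apply']; exact rbr_mem_tcore h1 h2 ih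

lemma tentm_le_half {σ x : ℝ} (hσ : 0 ≤ σ) : tentm σ x ≤ σ/2 := by
  rcases le_or_gt x (1/2) with h | h
  · calc tentm σ x ≤ σ * x := min_le_left _ _
      _ ≤ σ/2 := by nlinarith
  · calc tentm σ x ≤ σ * (1-x) := min_le_right _ _
      _ ≤ σ/2 := by nlinarith

lemma img_le {σ α β : ℝ} (hσ : 0 < σ) (hab : α ≤ β) (hβ : β ≤ 1/2) :
    tentm σ '' Icc α β = Icc (σ*α) (σ*β) := by
  ext y
  constructor
  · rintro ⟨x, ⟨hx1, hx2⟩, rfl⟩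
    rw [tentm_of_le (le_of_lt hσ) (le_trans hx2 hβ)]
    exact ⟨by nlinarith, by nlinarith⟩
  · rintro ⟨hy1, hy2⟩
    refine ⟨y/σ, ⟨?_, ?_⟩, ?_⟩
    · rw [le_div_iff₀ hσ]; linarith
    · rw [div_le_iff₀ hσ]; linarith
    · rw [tentm_of_le (le_of_lt hσ) (by rw [div_le_iff₀ hσ]; nlinarith)]
      field_simp

lemma img_ge {σ α β : ℝ} (hσ : 0 < σ) (hab : α ≤ β) (hα : 1/2 ≤ α) :
    tentm σ '' Icc α β = Icc (σ*(1-β)) (σ*(1-α)) := by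
  ext y
  constructor
  · rintro ⟨x, ⟨hx1, hx2⟩, rfl⟩
    rw [tentm_of_ge (le_of_lt hσ) (le_trans hα hx1)]
    exact ⟨by nlinarith, by nlinarith⟩
  · rintro ⟨hy1, hy2⟩
    refine ⟨1 - y/σ, ⟨?_, ?_⟩, ?_⟩
    · have : y/σ ≤ 1 - α := by rw [div_le_iff₀ hσ]; nlinarith
      linarith
    · have : 1 - β ≤ y/σ := by rw [le_div_iff₀ hσ]; nlinarith
      linarith
    · have h2 : 1/2 ≤ 1 - y/σ := by
        have : y/σ ≤ 1 - α := by rw [div_le_iff₀ hσ]; nlinarith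
        linarith
      rw [tentm_of_ge (le_of_lt hσ) h2]
      field_simp; ring

lemma img_mid {σ α β : ℝ} (hσ : 0 < σ) (hα : α ≤ 1/2) (hβ : 1/2 ≤ β) :
    tentm σ '' Icc α β = Icc (min (σ*α) (σ*(1-β))) (σ/2) := by
  ext y
  constructor
  · rintro ⟨x, ⟨hx1, hx2⟩, rfl⟩
    refine ⟨?_, tentm_le_half (le_of_lt hσ)⟩
    rcases le_or_gt x (1/2) with h | h
    · rw [tentm_of_le (le_of_lt hσ) h]
      exact le_trans (min_le_left _ _) (by nlinarith)
    · rw [tentm_of_ge (le_of_lt hσ) (le_of_lt h)]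
      exact le_trans (min_le_right _ _) (by nlinarith)
  · rintro ⟨hy1, hy2⟩
    rcases le_or_gt (σ*α) y with h | h
    · refine ⟨y/σ, ⟨?_, ?_⟩, ?_⟩
      · rw [le_div_iff₀ hσ]; linarith
      · have : y/σ ≤ 1/2 := by rw [div_le_iff₀ hσ]; nlinarith
        linarith
      · rw [tentm_of_le (le_of_lt hσ) (by rw [div_le_iff₀ hσ]; nlinarith)]
        field_simp
    · have hy3 : σ*(1-β) ≤ y := by
        rcases min_cases (σ*α) (σ*(1-β)) with ⟨he, hc⟩ | ⟨he, hc⟩ <;> rw [he] at hy1 <;> linarith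
      refine ⟨1 - y/σ, ⟨?_, ?_⟩, ?_⟩
      · have : y/σ ≤ 1/2 := by rw [div_le_iff₀ hσ]; nlinarith
        linarith
      · have : 1 - β ≤ y/σ := by rw [le_div_iff₀ hσ]; nlinarith
        linarith
      · have h2 : 1/2 ≤ 1 - y/σ := by
          have : y/σ ≤ 1/2 := by rw [div_le_iff₀ hσ]; nlinarith
          linarith
        rw [tentm_of_ge (le_of_lt hσ) h2]
        field_simp; ring

lemma image_subset_tcore {σ : ℝ} (h1 : 1 < σ) (h2 : σ ≤ 2) {S : Set ℝ} (hS : S ⊆ tcore σ) :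
    tentm σ '' S ⊆ tcore σ := by
  rintro y ⟨x, hx, rfl⟩
  exact tentm_mem_tcore h1 h2 (hS hx)

/-- The core maps onto itself (in particular into the image). -/
lemma tcore_subset_image {σ : ℝ} (h1 : 1 < σ) (h2 : σ ≤ 2) :
    tcore σ ⊆ tentm σ '' tcore σ := by
  have hσ : (0:ℝ) < σ := by linarith
  have hmid := img_mid (α := σ*(1-σ/2)) (β := σ/2) hσ
    (le_of_lt (c2_lt_half h1 h2)) (le_of_lt (half_lt_c1 h1))
  unfold tcore
  rw [hmid]
  intro y hy
  rcases hy with ⟨hy1, hy2⟩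
  refine ⟨?_, hy2⟩
  have e1 : σ*(1 - σ/2) ≤ σ*(σ*(1-σ/2)) := by nlinarith [c2_nonneg h1 h2]
  have e2 : min (σ*(σ*(1-σ/2))) (σ*(1-σ/2)) = σ*(1-σ/2) := min_eq_right e1
  calc min (σ*(σ*(1-σ/2))) (σ*(1-σ/2)) = σ*(1-σ/2) := e2
    _ ≤ y := hy1

lemma tcore_subset_iter_image {σ : ℝ} (h1 : 1 < σ) (h2 : σ ≤ 2) (k : ℕ) :
    tcore σ ⊆ (tentm σ)^[k] '' tcore σ := by
  induction k with
  | zero => simp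
  | succ n ih =>
    intro y hy
    rcases ih hy with ⟨x, hx, rfl⟩
    rcases tcore_subset_image h1 h2 hx with ⟨w, hw, hwx⟩
    refine ⟨w, hw, ?_⟩
    rw [Function.iterate_succ_apply, hwx]

lemma iter_image_succ {σ : ℝ} (j : ℕ) (S : Set ℝ) :
    (tentm σ)^[j+1] '' S = (tentm σ)^[j] '' (tentm σ '' S) := by
  rw [← Set.image_comp, ← Function.iterate_succ]

/-- Core covering lemma: any nondegenerate interval in the core eventually covers the core. -/
lemma cover_aux {σ : ℝ} (h1 : 1 < σ) (h2 : σ ≤ 2) (hs : 2 < σ^2) :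
    ∀ k : ℕ, ∀ α β : ℝ, Icc α β ⊆ tcore σ → α < β →
      σ/2 - σ*(1-σ/2) ≤ (σ^2/2)^k * (β - α) →
      ∃ j, tcore σ ⊆ (tentm σ)^[j] '' Icc α β := by
  have hσ : (0:ℝ) < σ := by linarith
  intro k
  induction k with
  | zero =>
    intro α β hsub hlt hlen
    simp only [pow_zero, one_mul] at hlen
    have hmemα : α ∈ tcore σ := hsub ⟨le_rfl, le_of_lt hlt⟩
    have hmemβ : β ∈ tcore σ := hsub ⟨le_of_lt hlt, le_rfl⟩
    have hα : α = σ*(1-σ/2) := le_antisymm (by linarith [hmemβ.2]) hmemα.1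
    have hβ : β = σ/2 := le_antisymm hmemβ.2 (by linarith [hmemα.1])
    refine ⟨0, ?_⟩
    subst hα hβ
    simp [tcore]
  | succ n ih =>
    intro α β hsub hlt hlen
    have hg : σ^2/2 ≤ σ := by nlinarith
    have hgpos : (0:ℝ) < σ^2/2 := by nlinarith
    have hpowpos : (0:ℝ) < (σ^2/2)^n := pow_pos hgpos n
    rcases le_or_gt β (1/2) with hβ | hβ
    · -- left monotone case
      have himg := img_le hσ (le_of_lt hlt) hβ
      have hsub' : Icc (σ*α) (σ*β) ⊆ tcore σ := by
        rw [← himg]; exact image_subset_tcore h1 h2 hsub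
      have hlt' : σ*α < σ*β := by nlinarith
      have hlen' : σ/2 - σ*(1-σ/2) ≤ (σ^2/2)^n * (σ*β - σ*α) := by
        calc σ/2 - σ*(1-σ/2) ≤ (σ^2/2)^(n+1) * (β - α) := hlen
          _ = (σ^2/2)^n * ((σ^2/2) * (β-α)) := by ring
          _ ≤ (σ^2/2)^n * (σ*β - σ*α) := by
              apply mul_le_mul_of_nonneg_left _ (le_of_lt hpowpos)
              nlinarith
      rcases ih _ _ hsub' hlt' hlen' with ⟨j, hj⟩
      refine ⟨j+1, ?_⟩
      rw [iter_image_succ, himg]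
      exact hj
    rcases le_or_gt (1/2) α with hα | hα
    · -- right antitone case
      have himg := img_ge hσ (le_of_lt hlt) hα
      have hsub' : Icc (σ*(1-β)) (σ*(1-α)) ⊆ tcore σ := by
        rw [← himg]; exact image_subset_tcore h1 h2 hsub
      have hlt' : σ*(1-β) < σ*(1-α) := by nlinarith
      have hlen' : σ/2 - σ*(1-σ/2) ≤ (σ^2/2)^n * (σ*(1-α) - σ*(1-β)) := by
        calc σ/2 - σ*(1-σ/2) ≤ (σ^2/2)^(n+1) * (β - α) := hlen
          _ = (σ^2/2)^n * ((σ^2/2) * (β-α)) := by ring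
          _ ≤ (σ^2/2)^n * (σ*(1-α) - σ*(1-β)) := by
              apply mul_le_mul_of_nonneg_left _ (le_of_lt hpowpos)
              nlinarith
      rcases ih _ _ hsub' hlt' hlen' with ⟨j, hj⟩
      refine ⟨j+1, ?_⟩
      rw [iter_image_succ, himg]
      exact hj
    · -- straddle case
      have hαle : α ≤ 1/2 := le_of_lt hα
      have hβge : (1:ℝ)/2 ≤ β := le_of_lt hβ
      have himg := img_mid hσ hαle hβge
      set m := min (σ*α) (σ*(1-β)) with hm
      rcases le_or_gt m (1/2) with hm2 | hm2
      · -- reach [1/2, σ/2] in one more step, then cover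
        refine ⟨2, ?_⟩
        have hsub2 : Icc (1/2) (σ/2) ⊆ Icc m (σ/2) := Icc_subset_Icc hm2 le_rfl
        have himg2 : tentm σ '' Icc (1/2) (σ/2) = tcore σ := by
          rw [img_ge hσ (by linarith) le_rfl]
          unfold tcore
          congr 1 <;> ring
        intro y hy
        rw [show (2:ℕ) = 1 + 1 by norm_num, iter_image_succ, himg]
        rw [← himg2] at hy
        rcases hy with ⟨x, hx, rfl⟩
        exact ⟨x, hsub2 hx, by simp⟩
      · -- interval Icc m (σ/2) is in the right half; two steps growth
        have hmm : σ/2 - m ≥ σ * (β - α) / 2 := by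
          rcases min_cases (σ*α) (σ*(1-β)) with ⟨he, hc⟩ | ⟨he, hc⟩ <;> rw [hm, he] <;> nlinarith
        have him2 := img_ge (α := m) (β := σ/2) hσ (by nlinarith) (le_of_lt hm2)
        have hsubm : Icc m (σ/2) ⊆ tcore σ := by
          rw [← himg]; exact image_subset_tcore h1 h2 hsub
        have hsub' : Icc (σ*(1-σ/2)) (σ*(1-m)) ⊆ tcore σ := by
          rw [← him2]; exact image_subset_tcore h1 h2 hsubm
        have hlt' : σ*(1-σ/2) < σ*(1-m) := by nlinarith
        have hlen' : σ/2 - σ*(1-σ/2) ≤ (σ^2/2)^n * (σ*(1-m) - σ*(1-σ/2)) := by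
          calc σ/2 - σ*(1-σ/2) ≤ (σ^2/2)^(n+1) * (β - α) := hlen
            _ = (σ^2/2)^n * ((σ^2/2) * (β-α)) := by ring
            _ ≤ (σ^2/2)^n * (σ*(1-m) - σ*(1-σ/2)) := by
                apply mul_le_mul_of_nonneg_left _ (le_of_lt hpowpos)
                nlinarith
        rcases ih _ _ hsub' hlt' hlen' with ⟨j, hj⟩
        refine ⟨j+2, ?_⟩
        rw [show j+2 = (j+1)+1 by ring, iter_image_succ, himg, iter_image_succ, him2]
        exact hj

/-- Main covering: any nondegenerate subinterval of the core covers the core after some time,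
and from then on forever. -/
lemma cover_main {σ : ℝ} (h1 : 1 < σ) (h2 : σ ≤ 2) (hs : 2 < σ^2) {α β : ℝ}
    (hsub : Icc α β ⊆ tcore σ) (hlt : α < β) :
    ∃ j₀, ∀ j ≥ j₀, tcore σ ⊆ (tentm σ)^[j] '' Icc α β := by
  have hgone : (1:ℝ) < σ^2/2 := by nlinarith
  obtain ⟨k, hk⟩ := pow_unbounded_of_one_lt ((σ/2 - σ*(1-σ/2))/(β-α)) hgone
  have hlen : σ/2 - σ*(1-σ/2) ≤ (σ^2/2)^k * (β - α) := by
    rw [div_lt_iff₀ (by linarith)] at hk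
    nlinarith
  obtain ⟨j₀, hj₀⟩ := cover_aux h1 h2 hs k α β hsub hlt hlen
  refine ⟨j₀, fun j hj => ?_⟩
  intro y hy
  have : y ∈ (tentm σ)^[j - j₀] '' tcore σ := tcore_subset_iter_image h1 h2 _ hy
  rcases this with ⟨x, hx, rfl⟩
  rcases hj₀ hx with ⟨w, hw, rfl⟩
  refine ⟨w, hw, ?_⟩
  rw [← Function.iterate_add_apply]
  congr 1
  omega

/-- The backward thread through the core anchored at level `L` with value `u`. -/
noncomputable def threadF (σ : ℝ) (L : ℕ) (u : ℝ) : ℕ → ℝ :=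
  fun j => if j ≤ L then (tentm σ)^[L - j] u else (rbr σ)^[j - L] u

lemma threadF_apply_L (σ : ℝ) (L : ℕ) (u : ℝ) : threadF σ L u L = u := by
  simp [threadF]

lemma threadF_coord_le (σ : ℝ) {L j : ℕ} (h : j ≤ L) (u : ℝ) :
    threadF σ L u j = (tentm σ)^[L - j] u := by
  simp [threadF, h]

lemma threadF_mem {σ : ℝ} (h1 : 1 < σ) (h2 : σ ≤ 2) {u : ℝ} (hu : u ∈ tcore σ) (L j : ℕ) :
    threadF σ L u j ∈ tcore σ := by
  unfold threadF
  split
  · exact tentm_iter_mem_tcore h1 h2 hu _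
  · exact rbr_iter_mem_tcore h1 h2 hu _

lemma threadF_rel {σ : ℝ} (h1 : 1 < σ) (h2 : σ ≤ 2) {u : ℝ} (hu : u ∈ tcore σ) (L j : ℕ) :
    tentm σ (threadF σ L u (j+1)) = threadF σ L u j := by
  unfold threadF
  rcases le_or_gt (j+1) L with h | h
  · rw [if_pos h, if_pos (by omega)]
    rw [← Function.iterate_succ_apply' (tentm σ)]
    congr 1
    omega
  · rw [if_neg (by omega)]
    rcases le_or_gt j L with h' | h'
    · have hjL : j = L := by omega
      subst hjL
      rw [if_pos h']
      have e1 : j + 1 - j = 1 := by omega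
      have e2 : j - j = 0 := by omega
      rw [e1, e2]
      simp only [Function.iterate_one, Function.iterate_zero, id_eq]
      exact tentm_rbr h1 hu.2
    · rw [if_neg (by omega)]
      have : j + 1 - L = (j - L) + 1 := by omega
      rw [this, Function.iterate_succ_apply' (rbr σ)]
      exact tentm_rbr h1 (rbr_iter_mem_tcore h1 h2 hu _).2

lemma threadF_continuous (σ : ℝ) (L j : ℕ) : Continuous (fun u => threadF σ L u j) := by
  unfold threadF
  split
  · exact (tentm_continuous σ).iterate _
  · exact (rbr_continuous σ).iterate _

lemma threadF_mirror {σ : ℝ} {L j : ℕ} (h : j < L) (u : ℝ) :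
    threadF σ L (1/2 + u) j = threadF σ L (1/2 - u) j := by
  rw [threadF_coord_le σ (le_of_lt h), threadF_coord_le σ (le_of_lt h)]
  have hd : L - j = (L - j - 1) + 1 := by omega
  rw [hd, Function.iterate_succ_apply, Function.iterate_succ_apply]
  congr 1
  have : (1:ℝ)/2 - u = 1 - (1/2 + u) := by ring
  rw [this, tentm_mirror]

/-- Clamping to an interval. -/
noncomputable def clampI (p q u : ℝ) : ℝ := max p (min q u)

lemma clampI_continuous (p q : ℝ) : Continuous (clampI p q) := by
  unfold clampI; fun_prop

lemma clampI_mem {p q : ℝ} (h : p ≤ q) (u : ℝ) : clampI p q u ∈ Icc p q := by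
  unfold clampI
  constructor
  · exact le_max_left _ _
  · exact max_le h (min_le_left _ _)

lemma clampI_of_mem {p q u : ℝ} (h : u ∈ Icc p q) : clampI p q u = u := by
  unfold clampI
  rw [min_eq_right h.2, max_eq_right h.1]

/-- Generic inverse limit facts -/
lemma invLim_coord_det {f : ℝ → ℝ} {K : Set ℝ} (x : InvLim f K) (i d : ℕ) :
    x.1 i = f^[d] (x.1 (i + d)) := by
  induction d with
  | zero => simp
  | succ n ih =>
    rw [ih, ← x.2.2 (i+n), ← Function.iterate_succ_apply f]
    rfl

lemma invLim_ext {f : ℝ → ℝ} {K : Set ℝ} {x y : InvLim f K} (h : ∀ n, x.1 n = y.1 n) :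
    x = y := Subtype.ext (funext h)

def invLimCongr {f : ℝ → ℝ} {K K' : Set ℝ} (h : K = K') : InvLim f K ≃ₜ InvLim f K' := by
  subst h; exact Homeomorph.refl _

lemma invLim_compactSpace {σ : ℝ} : CompactSpace (InvLim (tentm σ) (tcore σ)) := by
  have h1 : {x : ℕ → ℝ | (∀ n, x n ∈ tcore σ) ∧ ∀ n, tentm σ (x (n + 1)) = x n}
      = (univ.pi (fun _ : ℕ => tcore σ)) ∩ (⋂ n, {x : ℕ → ℝ | tentm σ (x (n+1)) = x n}) := by
    ext x
    simp [Set.mem_pi, Set.mem_iInter]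
  have hC : IsCompact {x : ℕ → ℝ | (∀ n, x n ∈ tcore σ) ∧ ∀ n, tentm σ (x (n + 1)) = x n} := by
    rw [h1]
    apply IsCompact.inter_right
    · exact isCompact_univ_pi (fun _ => isCompact_Icc)
    · exact isClosed_iInter (fun n => isClosed_eq
        ((tentm_continuous σ).comp (continuous_apply (n+1))) (continuous_apply n))
  exact isCompact_iff_compactSpace.mp hC

/-- The thread as an element of the inverse limit. -/
noncomputable def threadY {σ : ℝ} (h1 : 1 < σ) (h2 : σ ≤ 2) (L : ℕ) {u : ℝ}
    (hu : u ∈ tcore σ) : InvLim (tentm σ) (tcore σ) :=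
  ⟨threadF σ L u, fun j => threadF_mem h1 h2 hu L j, fun j => threadF_rel h1 h2 hu L j⟩

lemma coordY_continuous {f : ℝ → ℝ} {K : Set ℝ} (n : ℕ) :
    Continuous (fun x : InvLim f K => x.1 n) :=
  (continuous_apply n).comp continuous_subtype_val

lemma finset_ball_uniform (w : ℕ → ℝ) (I : Finset ℕ) (u : ℕ → Set ℝ)
    (h : ∀ a ∈ I, IsOpen (u a) ∧ w a ∈ u a) :
    ∃ η > 0, ∀ a ∈ I, Metric.ball (w a) η ⊆ u a := by
  classical
  induction I using Finset.induction_on with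
  | empty => exact ⟨1, one_pos, by simp⟩
  | @insert a I ha ih =>
    obtain ⟨η, hη, hball⟩ := ih (fun b hb => h b (Finset.mem_insert_of_mem hb))
    obtain ⟨ho, hm⟩ := h a (Finset.mem_insert_self a I)
    obtain ⟨ε, hε, hba⟩ := Metric.isOpen_iff.mp ho _ hm
    refine ⟨min η ε, lt_min hη hε, ?_⟩
    intro b hb
    rcases Finset.mem_insert.mp hb with rfl | hb
    · exact fun z hz => hba (Metric.ball_subset_ball (min_le_right _ _) hz)
    · exact fun z hz => hball b hb (Metric.ball_subset_ball (min_le_left _ _) hz)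

/-- Open sets in the inverse limit contain one-coordinate cylinders. -/
lemma cylinder_subset_open {σ : ℝ} (h1 : 1 < σ)
    {U : Set (InvLim (tentm σ) (tcore σ))} (hU : IsOpen U)
    {y : InvLim (tentm σ) (tcore σ)} (hy : y ∈ U) :
    ∃ M : ℕ, ∃ η > 0, ∀ z : InvLim (tentm σ) (tcore σ), |z.1 M - y.1 M| < η → z ∈ U := by
  obtain ⟨O, hO, hUO⟩ := isOpen_induced_iff.mp hU
  have hyO : y.1 ∈ O := by rw [← hUO] at hy; exact hy
  obtain ⟨I, u, hu, hsub⟩ := isOpen_pi_iff.mp hO y.1 hyO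
  obtain ⟨η, hη, hball⟩ := finset_ball_uniform y.1 I u hu
  set M := I.sup id + 1 with hM
  refine ⟨M, η / σ^M, by positivity, ?_⟩
  intro z hz
  have hzO : z.1 ∈ O := by
    apply hsub
    intro a ha
    have haM : a ≤ M := le_trans (Finset.le_sup (f := id) ha) (by omega)
    apply hball a ha
    rw [Metric.mem_ball, Real.dist_eq]
    have hda : z.1 a = (tentm σ)^[M - a] (z.1 M) := by
      have := invLim_coord_det z a (M - a)
      rwa [show a + (M - a) = M by omega] at this
    have hdy : y.1 a = (tentm σ)^[M - a] (y.1 M) := by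
      have := invLim_coord_det y a (M - a)
      rwa [show a + (M - a) = M by omega] at this
    rw [hda, hdy]
    calc |(tentm σ)^[M-a] (z.1 M) - (tentm σ)^[M-a] (y.1 M)|
        ≤ σ^(M-a) * |z.1 M - y.1 M| := tentm_iter_lipschitz (by linarith) _ _ _
      _ ≤ σ^M * |z.1 M - y.1 M| := by
          apply mul_le_mul_of_nonneg_right _ (abs_nonneg _)
          exact pow_le_pow_right₀ (by linarith) (by omega)
      _ < σ^M * (η / σ^M) := by
          apply mul_lt_mul_of_pos_left hz
          positivity
      _ = η := by field_simp
  rw [← hUO]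
  exact hzO

/-- Returns of the critical orbit into any open subinterval of the core, at arbitrarily
late times. -/
lemma orbit_returns {σ : ℝ} {p q : ℝ} (hpq : p < q) (hsub : Ioo p q ⊆ tcore σ)
    (hdense : tcore σ ⊆ closure {y : ℝ | ∃ n : ℕ, 1 ≤ n ∧ y = (tentm σ)^[n] (1/2)}) :
    ∀ N₀ : ℕ, ∃ N, N₀ ≤ N ∧ 1 ≤ N ∧ (tentm σ)^[N] (1/2) ∈ Ioo p q := by
  intro N₀
  set head : Set ℝ := (fun n => (tentm σ)^[n] (1/2)) '' (Iio N₀) with hhead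
  have hheadfin : head.Finite := Set.Finite.image _ (Set.finite_Iio N₀)
  have hO : IsOpen (Ioo p q \ head) := IsOpen.sdiff isOpen_Ioo hheadfin.isClosed
  have hOne : (Ioo p q \ head).Nonempty := by
    apply Set.Infinite.nonempty
    exact Set.Infinite.diff (Set.Ioo_infinite hpq) hheadfin
  obtain ⟨w, hw⟩ := hOne
  have hwc : w ∈ closure {y : ℝ | ∃ n : ℕ, 1 ≤ n ∧ y = (tentm σ)^[n] (1/2)} :=
    hdense (hsub hw.1)
  rw [mem_closure_iff] at hwc
  obtain ⟨y, hyO, n, hn1, rfl⟩ := hwc _ hO hw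
  refine ⟨n, ?_, hn1, hyO.1⟩
  by_contra hcon
  exact hyO.2 ⟨n, Set.mem_Iio.mpr (by omega), rfl⟩

/-- Extraction of a subsequence along which an unbounded ℕ-valued sequence is strictly
monotone. -/
lemma exists_strictMono_subseq {m : ℕ → ℕ} (hm : ∀ K, ∃ n, K < m n) :
    ∃ φ : ℕ → ℕ, StrictMono φ ∧ StrictMono (m ∘ φ) := by
  classical
  have h : ∀ n : ℕ, ∃ n', ∀ i ≤ n, m i < m n' := by
    intro n
    obtain ⟨n', hn'⟩ := hm ((Finset.range (n+1)).sup m)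
    refine ⟨n', fun i hi => ?_⟩
    exact lt_of_le_of_lt (Finset.le_sup (Finset.mem_range.mpr (by omega))) hn'
  choose F hF using h
  have hFgt : ∀ n, n < F n := by
    intro n
    by_contra hcon
    push_neg at hcon
    exact lt_irrefl _ (hF n (F n) hcon)
  set φ : ℕ → ℕ := fun k => F^[k] 0 with hφ
  have hφs : StrictMono φ := by
    apply strictMono_nat_of_lt_succ
    intro k
    rw [hφ]
    simp only [Function.iterate_succ_apply']
    exact hFgt _
  refine ⟨φ, hφs, ?_⟩
  apply strictMono_nat_of_lt_succ
  intro k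
  simp only [Function.comp_apply, hφ, Function.iterate_succ_apply']
  exact hF _ _ le_rfl

/-- The closure of the critical orbit has empty interior when the ω-limit set is closed and
totally disconnected. -/
lemma orbitClosure_interior_empty {f : ℝ → ℝ} {c : ℝ}
    (hωc : IsClosed (omegaSet f c)) (htd : IsTotallyDisconnected (omegaSet f c)) :
    interior (closure (range fun n : ℕ => f^[n] c)) = ∅ := by
  classical
  -- ω has empty interior
  have hωint : interior (omegaSet f c) = ∅ := by
    by_contra hcon
    obtain ⟨x, hx⟩ := Set.nonempty_iff_ne_empty.mpr hcon
    obtain ⟨ε, hε, hball⟩ := Metric.isOpen_iff.mp isOpen_interior x hx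
    have hsub : Ioo (x - ε) (x + ε) ⊆ omegaSet f c := by
      intro z hz
      apply interior_subset
      apply hball
      rw [Metric.mem_ball, Real.dist_eq, abs_lt]
      constructor <;> [linarith [hz.1]; linarith [hz.2]]
    have := htd _ hsub isPreconnected_Ioo
    have h1 : x - ε/2 ∈ Ioo (x-ε) (x+ε) := by constructor <;> linarith
    have h2 : x + ε/2 ∈ Ioo (x-ε) (x+ε) := by constructor <;> linarith
    have := this h1 h2
    linarith
  -- closure of orbit is contained in orbit ∪ ω
  have hPsub : closure (range fun n : ℕ => f^[n] c) ⊆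
      (range fun n : ℕ => f^[n] c) ∪ omegaSet f c := by
    intro x hx
    rw [mem_closure_iff_seq_limit] at hx
    obtain ⟨u, hu, hconv⟩ := hx
    choose m hmu using hu
    by_cases hb : ∃ K, ∀ n, m n ≤ K
    · obtain ⟨K, hK⟩ := hb
      left
      have hF : ((fun k : ℕ => f^[k] c) '' (Iic K)).Finite :=
        Set.Finite.image _ (Set.finite_Iic K)
      have hmem : x ∈ (fun k : ℕ => f^[k] c) '' (Iic K) := by
        apply hF.isClosed.mem_of_tendsto hconv
        filter_upwards with n
        exact ⟨m n, Set.mem_Iic.mpr (hK n), hmu n⟩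
      obtain ⟨k, _, hk⟩ := hmem
      exact ⟨k, hk⟩
    · push_neg at hb
      right
      obtain ⟨φ, hφ, hmφ⟩ := exists_strictMono_subseq (fun K => hb K)
      refine ⟨m ∘ φ, hmφ, ?_⟩
      have : (fun n => f^[(m ∘ φ) n] c) = u ∘ φ := by
        funext n
        simp [Function.comp_apply, ← hmu (φ n)]
      rw [this]
      exact hconv.comp hφ.tendsto_atTop
  -- combine
  by_contra hcon
  obtain ⟨x, hx⟩ := Set.nonempty_iff_ne_empty.mpr hcon
  have hOopen : IsOpen (interior (closure (range fun n : ℕ => f^[n] c)) \ omegaSet f c) :=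
    IsOpen.sdiff isOpen_interior hωc
  have hOsub : interior (closure (range fun n : ℕ => f^[n] c)) \ omegaSet f c ⊆
      (range fun n : ℕ => f^[n] c) := by
    intro z hz
    rcases hPsub (interior_subset hz.1) with h | h
    · exact h
    · exact absurd h hz.2
  have hOne : (interior (closure (range fun n : ℕ => f^[n] c)) \ omegaSet f c).Nonempty := by
    by_contra hemp
    rw [Set.not_nonempty_iff_eq_empty, Set.diff_eq_empty] at hemp
    have : interior (closure (range fun n : ℕ => f^[n] c)) ⊆ interior (omegaSet f c) := by
      nth_rewrite 1 [← interior_interior]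
      exact interior_mono hemp
    rw [hωint] at this
    exact this hx
  have hcnt : (range fun n : ℕ => f^[n] c).Countable := Set.countable_range _
  have hdense := (Set.Countable.dense_compl ℝ hcnt)
  obtain ⟨w, hw⟩ := hOne
  obtain ⟨z, hz1, hz2⟩ := hdense.exists_mem_open hOopen ⟨w, hw⟩
  exact hz1 (hOsub hz2)

/-- If the tent map takes equal values at two distinct points, the critical point lies
strictly between them. -/
lemma tentm_eq_imp {σ u v : ℝ} (hσ : 0 < σ) (huv : u ≠ v) (he : tentm σ u = tentm σ v) :
    (u < 1/2 ∧ 1/2 < v) ∨ (v < 1/2 ∧ 1/2 < u) := by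
  rcases le_or_gt u (1/2) with hu | hu <;> rcases le_or_gt v (1/2) with hv | hv
  · exfalso
    rw [tentm_of_le (le_of_lt hσ) hu, tentm_of_le (le_of_lt hσ) hv] at he
    exact huv (by nlinarith)
  · left
    refine ⟨?_, hv⟩
    rcases lt_or_eq_of_le hu with h | h
    · exact h
    · exfalso
      rw [tentm_of_le (le_of_lt hσ) hu, tentm_of_ge (le_of_lt hσ) (le_of_lt hv)] at he
      subst h
      exact absurd (by nlinarith : v = 1/2) (by intro hh; rw [hh] at hv; linarith)
  · right
    refine ⟨?_, hu⟩
    rcases lt_or_eq_of_le hv with h | h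
    · exact h
    · exfalso
      rw [tentm_of_ge (le_of_lt hσ) (le_of_lt hu), tentm_of_le (le_of_lt hσ) hv] at he
      subst h
      exact absurd (by nlinarith : u = 1/2) (by intro hh; rw [hh] at hu; linarith)
  · exfalso
    rw [tentm_of_ge (le_of_lt hσ) (le_of_lt hu), tentm_of_ge (le_of_lt hσ) (le_of_lt hv)] at he
    exact huv (by nlinarith)

/-- The gap lemma: on a preconnected set of backward orbits whose `n`-th coordinates lie in a
window avoiding the critical orbit, the `n`-th coordinate is injective. -/
lemma gap_lemma {σ : ℝ} (hσ : 0 < σ) {K : Set ℝ} {S : Set (InvLim (tentm σ) K)}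
    (hS : IsPreconnected S) {n : ℕ} {a b : ℝ}
    (hwin : ∀ x ∈ S, x.1 n ∈ Icc a b)
    (hdisj : ∀ k : ℕ, (tentm σ)^[k] (1/2) ∉ Icc a b) :
    ∀ x ∈ S, ∀ y ∈ S, x.1 n = y.1 n → x = y := by
  classical
  intro x hx y hy hxy
  by_contra hne
  have hD : ∃ j, x.1 j ≠ y.1 j := by
    by_contra hcon
    push_neg at hcon
    exact hne (invLim_ext hcon)
  set j₀ := Nat.find hD with hj₀
  have hj₀ne : x.1 j₀ ≠ y.1 j₀ := Nat.find_spec hD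
  have hmin : ∀ i < j₀, x.1 i = y.1 i := fun i hi => by
    by_contra hcon
    rw [hj₀] at hi
    exact absurd (Nat.find_le hcon) (Nat.not_le.mpr hi)
  have hgt : n < j₀ := by
    by_contra hcon
    push_neg at hcon
    apply hj₀ne
    have hxd := invLim_coord_det x j₀ (n - j₀)
    have hyd := invLim_coord_det y j₀ (n - j₀)
    rw [show j₀ + (n - j₀) = n by omega] at hxd hyd
    rw [hxd, hyd, hxy]
  have heq : tentm σ (x.1 j₀) = tentm σ (y.1 j₀) := by
    have hx2 := x.2.2 (j₀ - 1)
    have hy2 := y.2.2 (j₀ - 1)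
    rw [show j₀ - 1 + 1 = j₀ by omega] at hx2 hy2
    rw [hx2, hy2]
    exact hmin (j₀ - 1) (by omega)
  have himg : IsPreconnected ((fun z : InvLim (tentm σ) K => z.1 j₀) '' S) :=
    hS.image _ (coordY_continuous j₀).continuousOn
  have hmemx : x.1 j₀ ∈ (fun z : InvLim (tentm σ) K => z.1 j₀) '' S := ⟨x, hx, rfl⟩
  have hmemy : y.1 j₀ ∈ (fun z : InvLim (tentm σ) K => z.1 j₀) '' S := ⟨y, hy, rfl⟩
  have hhalf : (1:ℝ)/2 ∈ (fun z : InvLim (tentm σ) K => z.1 j₀) '' S := by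
    rcases tentm_eq_imp hσ hj₀ne heq with ⟨h1, h2⟩ | ⟨h1, h2⟩
    · exact himg.Icc_subset hmemx hmemy ⟨le_of_lt h1, le_of_lt h2⟩
    · exact himg.Icc_subset hmemy hmemx ⟨le_of_lt h1, le_of_lt h2⟩
  obtain ⟨z, hz, hz12⟩ := hhalf
  have hz12' : z.1 j₀ = 1/2 := hz12
  have hzd := invLim_coord_det z n (j₀ - n)
  rw [show n + (j₀ - n) = j₀ by omega] at hzd
  rw [hz12'] at hzd
  exact hdisj (j₀ - n) (hzd ▸ hwin z hz)

/-- If all coordinates of a preconnected family lie in a set with empty interior, the family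
is a single point. -/
lemma allP_subsingleton {f : ℝ → ℝ} {K : Set ℝ} {S : Set (InvLim f K)}
    (hS : IsPreconnected S) {P : Set ℝ} (hP : interior P = ∅)
    (hall : ∀ x ∈ S, ∀ n, x.1 n ∈ P) :
    ∀ x ∈ S, ∀ y ∈ S, x = y := by
  intro x hx y hy
  apply invLim_ext
  intro n
  by_contra hne
  have himg : IsPreconnected ((fun z : InvLim f K => z.1 n) '' S) :=
    hS.image _ (coordY_continuous n).continuousOn
  have himgP : (fun z : InvLim f K => z.1 n) '' S ⊆ P := by
    rintro w ⟨z, hz, rfl⟩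
    exact hall z hz n
  have key : ∀ u v : ℝ, u ∈ (fun z : InvLim f K => z.1 n) '' S →
      v ∈ (fun z : InvLim f K => z.1 n) '' S → u < v → False := by
    intro u v hu hv huv
    have hIcc : Icc u v ⊆ P := fun w hw => himgP (himg.Icc_subset hu hv hw)
    have hIoo : Ioo u v ⊆ interior P := by
      rw [← interior_Icc]
      exact interior_mono hIcc
    rw [hP] at hIoo
    exact hIoo (⟨by linarith, by linarith⟩ : (u+v)/2 ∈ Ioo u v)
  rcases lt_or_gt_of_ne hne with h | h
  · exact key _ _ ⟨x, hx, rfl⟩ ⟨y, hy, rfl⟩ h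
  · exact key _ _ ⟨y, hy, rfl⟩ ⟨x, hx, rfl⟩ h

section Kuratowski

variable {X : Type*} [TopologicalSpace X] [CompactSpace X] [T2Space X]
  [FirstCountableTopology X]

/-- The tail union. -/
def tailUnion (C : ℕ → Set X) (K : ℕ) : Set X := ⋃ k ∈ {k : ℕ | K ≤ k}, C k

lemma mem_tailUnion {C : ℕ → Set X} {K k : ℕ} (hk : K ≤ k) {x : X} (hx : x ∈ C k) :
    x ∈ tailUnion C K := by
  exact Set.mem_biUnion hk hx

/-- The limit superior of the sequence of sets. -/
def limsupSet (C : ℕ → Set X) : Set X := ⋂ K : ℕ, closure (tailUnion C K)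

lemma limsupSet_isClosed (C : ℕ → Set X) : IsClosed (limsupSet C) :=
  isClosed_iInter (fun _ => isClosed_closure)

/-- Subsequential limits of points in the sets belong to the limit superior. -/
lemma mem_limsupSet_of_tendsto {C : ℕ → Set X} {p : ℕ → X} {m : ℕ → ℕ}
    (hm : ∀ i, i ≤ m i) (hp : ∀ i, p i ∈ C (m i)) {z : X}
    (hconv : Tendsto p atTop (𝓝 z)) : z ∈ limsupSet C := by
  apply Set.mem_iInter.mpr
  intro K
  apply mem_closure_of_tendsto hconv
  filter_upwards [Filter.eventually_ge_atTop K] with i hi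
  exact mem_tailUnion (le_trans hi (hm i)) (hp i)

lemma limsupSet_subset_of_tail {C : ℕ → Set X} {K : ℕ} {A : Set X} (hA : IsClosed A)
    (h : ∀ k ≥ K, C k ⊆ A) : limsupSet C ⊆ A := by
  intro z hz
  have h1 : z ∈ closure (tailUnion C K) := Set.mem_iInter.mp hz K
  have h2 : tailUnion C K ⊆ A := by
    intro w hw
    obtain ⟨k, hk, hwk⟩ := Set.mem_iUnion₂.mp hw
    exact h k hk hwk
  rw [← hA.closure_eq]
  exact closure_mono h2 h1

/-- Kuratowski: the limit superior of a sequence of preconnected sets having a convergent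
sequence of marked points is preconnected. -/
lemma limsupSet_preconnected (C : ℕ → Set X) (hC : ∀ k, IsPreconnected (C k))
    (a : ℕ → X) (ha : ∀ k, a k ∈ C k) {l : X} (hconv : Tendsto a atTop (𝓝 l)) :
    IsPreconnected (limsupSet C) := by
  classical
  set S := limsupSet C with hSdef
  have hlmem : l ∈ S := mem_limsupSet_of_tendsto (fun i => le_rfl) ha hconv
  -- key asymmetric step
  have key : ∀ U V : Set X, IsOpen U → IsOpen V → S ⊆ U ∪ V → l ∈ U →
      (S ∩ (U ∩ V) = ∅) → (S ∩ V).Nonempty → False := by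
    intro U V hU hV hUV hlU hdisj ⟨w, hwS, hwV⟩
    have hF1closed : IsClosed (S ∩ U) := by
      have : S ∩ U = S \ V := by
        apply Set.eq_of_subset_of_subset
        · rintro z ⟨hz1, hz2⟩
          refine ⟨hz1, fun hzV => ?_⟩
          have : z ∈ S ∩ (U ∩ V) := ⟨hz1, hz2, hzV⟩
          rw [hdisj] at this
          exact this
        · rintro z ⟨hz1, hz2⟩
          rcases hUV hz1 with h | h
          · exact ⟨hz1, h⟩
          · exact absurd h hz2
      rw [this]
      exact IsClosed.sdiff (limsupSet_isClosed C) hV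
    have hF2closed : IsClosed (S ∩ V) := by
      have : S ∩ V = S \ U := by
        apply Set.eq_of_subset_of_subset
        · rintro z ⟨hz1, hz2⟩
          refine ⟨hz1, fun hzU => ?_⟩
          have : z ∈ S ∩ (U ∩ V) := ⟨hz1, hzU, hz2⟩
          rw [hdisj] at this
          exact this
        · rintro z ⟨hz1, hz2⟩
          rcases hUV hz1 with h | h
          · exact absurd h hz2
          · exact ⟨hz1, h⟩
      rw [this]
      exact IsClosed.sdiff (limsupSet_isClosed C) hU
    have hdisjF : Disjoint (S ∩ U) (S ∩ V) := by
      rw [Set.disjoint_iff_inter_eq_empty]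
      rw [← hdisj]
      ext z
      constructor
      · rintro ⟨⟨h1, h2⟩, ⟨h3, h4⟩⟩
        exact ⟨h1, h2, h4⟩
      · rintro ⟨h1, h2, h3⟩
        exact ⟨⟨h1, h2⟩, ⟨h1, h3⟩⟩
    obtain ⟨O₁, O₂, hO₁, hO₂, hsub₁, hsub₂, hOdisj⟩ :=
      NormalSpace.normal _ _ hF1closed hF2closed hdisjF
    obtain ⟨O₁', hO₁', hsub₁', hclosub⟩ :=
      normal_exists_closure_subset hF1closed hO₁ hsub₁
    have hO₁'O₂ : Disjoint O₁' O₂ :=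
      Set.disjoint_of_subset_left (subset_closure.trans hclosub) hOdisj
    -- eventually the sets are inside O₁' ∪ O₂
    have hclaim1 : ∃ K₁, ∀ k ≥ K₁, C k ⊆ O₁' ∪ O₂ := by
      by_contra hcon
      push_neg at hcon
      simp only [Set.not_subset] at hcon
      choose m hm p hp hpn using hcon
      obtain ⟨z, _, ψ, hψ, hψconv⟩ := isCompact_univ.tendsto_subseq
        (x := p) (fun i => Set.mem_univ _)
      have hzS : z ∈ S := mem_limsupSet_of_tendsto
        (m := fun i => m (ψ i)) (fun i => le_trans (hψ.id_le i) (hm (ψ i)))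
        (fun i => hp (ψ i)) hψconv
      have hznot : z ∉ O₁' ∪ O₂ := by
        have hcl : IsClosed (O₁' ∪ O₂)ᶜ := (IsOpen.union hO₁' hO₂).isClosed_compl
        have : z ∈ (O₁' ∪ O₂)ᶜ :=
          hcl.mem_of_tendsto hψconv (Filter.Eventually.of_forall (fun i => hpn (ψ i)))
        exact this
      apply hznot
      rcases hUV hzS with h | h
      · exact Or.inl (hsub₁' ⟨hzS, h⟩)
      · exact Or.inr (hsub₂ ⟨hzS, h⟩)
    obtain ⟨K₁, hK₁⟩ := hclaim1
    -- eventually the marked points are in O₁'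
    have hclaim2 : ∀ᶠ k in atTop, a k ∈ O₁' := by
      apply hconv.eventually
      exact hO₁'.mem_nhds (hsub₁' ⟨hlmem, hlU⟩)
    obtain ⟨K₂, hK₂⟩ := Filter.eventually_atTop.mp hclaim2
    set K₀ := max K₁ K₂ with hK₀
    have hCin : ∀ k ≥ K₀, C k ⊆ O₁' := by
      intro k hk
      apply IsPreconnected.subset_left_of_subset_union hO₁' hO₂ hO₁'O₂
        (hK₁ k (le_trans (le_max_left _ _) hk)) _ (hC k)
      exact ⟨a k, ha k, hK₂ k (le_trans (le_max_right _ _) hk)⟩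
    have hSsub : S ⊆ closure O₁' := by
      apply limsupSet_subset_of_tail isClosed_closure
      intro k hk
      exact (hCin k hk).trans subset_closure
    have hwO₂ : w ∈ O₂ := hsub₂ ⟨hwS, hwV⟩
    have hwO₁ : w ∈ O₁ := hclosub (hSsub hwS)
    exact Set.disjoint_iff.mp hOdisj ⟨hwO₁, hwO₂⟩ |>.elim
  -- conclude preconnectedness
  intro U V hU hV hUV hne1 hne2
  by_contra hcon
  rw [Set.not_nonempty_iff_eq_empty] at hcon
  rcases hUV hlmem with h | h
  · exact key U V hU hV hUV h hcon hne2
  · apply key V U hV hU (by rwa [Set.union_comm]) h _ hne1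
    rw [← hcon]
    ext z
    constructor
    · rintro ⟨h1, h2, h3⟩; exact ⟨h1, h3, h2⟩
    · rintro ⟨h1, h2, h3⟩; exact ⟨h1, h3, h2⟩

end Kuratowski

lemma cover_Istar {σ : ℝ} (h1 : 1 < σ) (h2 : σ ≤ 2) (hs : 2 < σ^2) :
    ∃ j₀, ∀ j ≥ j₀, tcore σ ⊆ (tentm σ)^[j] '' Icc (σ*(σ*(1-σ/2))) (σ/2) := by
  apply cover_main h1 h2 hs
  · intro x hx
    rcases hx with ⟨hl, hr⟩
    have hc2 := c2_nonneg h1 h2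
    refine ⟨?_, hr⟩
    nlinarith
  · have := c2_lt_half h1 h2
    nlinarith

lemma stopping {σ : ℝ} (h1 : 1 < σ) (h2 : σ ≤ 2) {v ρ : ℝ} (hρ : 0 < ρ)
    (hJin : Icc (v - ρ) (v + ρ) ⊆ Ioo (σ*(1-σ/2)) (σ/2))
    {j₀ : ℕ} (hcov : ∀ j ≥ j₀, tcore σ ⊆ (tentm σ)^[j] '' Icc (σ*(σ*(1-σ/2))) (σ/2))
    {N : ℕ} (hN : j₀ + 1 ≤ N) (hq : (tentm σ)^[N] (1/2) ∈ Icc (v - ρ/3) (v + ρ/3)) :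
    ∃ dd : ℝ, 0 ≤ dd ∧ dd ≤ (σ-1)^2/2 ∧
      (∀ u : ℝ, |u - 1/2| ≤ dd → (tentm σ)^[N] u ∈ Icc (v - ρ) (v + ρ)) ∧
      (∃ w : ℝ, |w - 1/2| ≤ dd ∧
        ((tentm σ)^[N] w = v - ρ ∨ (tentm σ)^[N] w = v + ρ)) := by
  classical
  have hσ : (0:ℝ) < σ := by linarith
  set δmax : ℝ := (σ-1)^2/2 with hδmax
  have hc2δ : σ*(1-σ/2) = 1/2 - δmax := by rw [hδmax]; ring
  have hδmaxpos : 0 < δmax := by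
    rw [hδmax]
    nlinarith
  set A : Set ℝ := {δ : ℝ | 0 ≤ δ ∧ δ ≤ δmax ∧
    ∀ u : ℝ, |u - 1/2| ≤ δ → (tentm σ)^[N] u ∈ Icc (v - ρ) (v + ρ)} with hA
  have hmidsub : Icc (v - ρ/3) (v + ρ/3) ⊆ Icc (v - ρ) (v + ρ) :=
    Icc_subset_Icc (by linarith) (by linarith)
  have h0A : (0:ℝ) ∈ A := by
    refine ⟨le_rfl, le_of_lt hδmaxpos, fun u hu => ?_⟩
    have : u = 1/2 := by
      have := abs_nonpos_iff.mp hu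
      linarith [sub_eq_zero.mp this]
    rw [this]
    exact hmidsub hq
  have hbdd : BddAbove A := ⟨δmax, fun δ hδ => hδ.2.1⟩
  have hAne : A.Nonempty := ⟨0, h0A⟩
  set dd := sSup A with hdd
  have hdd0 : 0 ≤ dd := le_csSup hbdd h0A
  have hddmax : dd ≤ δmax := csSup_le hAne (fun δ hδ => hδ.2.1)
  have hcond_lt : ∀ u : ℝ, |u - 1/2| < dd → (tentm σ)^[N] u ∈ Icc (v - ρ) (v + ρ) := by
    intro u hu
    obtain ⟨δ, hδA, hltδ⟩ := exists_lt_of_lt_csSup hAne hu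
    exact hδA.2.2 u (le_of_lt hltδ)
  have hcond : ∀ u : ℝ, |u - 1/2| ≤ dd → (tentm σ)^[N] u ∈ Icc (v - ρ) (v + ρ) := by
    intro u hu
    rcases lt_or_eq_of_le hu with h | h
    · exact hcond_lt u h
    · rcases eq_or_lt_of_le hdd0 with h0 | h0
      · have hu0 : |u - 1/2| = 0 := by rw [h, ← h0]
        have : u = 1/2 := by
          have := abs_eq_zero.mp hu0
          linarith [sub_eq_zero.mp this]
        rw [this]
        exact hmidsub hq
      · -- approximate u from inside
        set t : ℕ → ℝ := fun k => 1/2 + (1 - 1/((k:ℝ)+1)) * (u - 1/2) with ht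
        have htmem : ∀ k, (tentm σ)^[N] (t k) ∈ Icc (v - ρ) (v + ρ) := by
          intro k
          apply hcond_lt
          have hf0 : (0:ℝ) ≤ 1 - 1/((k:ℝ)+1) := by
            have : 1/((k:ℝ)+1) ≤ 1 := by
              rw [div_le_one (by positivity)]
              linarith [Nat.cast_nonneg (α := ℝ) k]
            linarith
          have hf1 : 1 - 1/((k:ℝ)+1) < 1 := by
            have : 0 < 1/((k:ℝ)+1) := by positivity
            linarith
          have : |t k - 1/2| = (1 - 1/((k:ℝ)+1)) * |u - 1/2| := by
            rw [ht]
            simp only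
            rw [show 1/2 + (1 - 1/((k:ℝ)+1)) * (u - 1/2) - 1/2
              = (1 - 1/((k:ℝ)+1)) * (u - 1/2) by ring, abs_mul, abs_of_nonneg hf0]
          rw [this, h]
          nlinarith
        have htt : Tendsto t atTop (𝓝 u) := by
          have hrec : Tendsto (fun k : ℕ => 1/((k:ℝ)+1)) atTop (𝓝 0) :=
            tendsto_one_div_add_atTop_nhds_zero_nat
          have : Tendsto t atTop (𝓝 (1/2 + (1 - 0) * (u - 1/2))) := by
            apply Tendsto.const_add
            apply Tendsto.mul_const
            exact tendsto_const_nhds.sub hrec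
          convert this using 2
          ring
        have : Tendsto (fun k => (tentm σ)^[N] (t k)) atTop (𝓝 ((tentm σ)^[N] u)) :=
          (((tentm_continuous σ).iterate N).continuousAt).tendsto.comp htt
        exact isClosed_Icc.mem_of_tendsto this (Filter.Eventually.of_forall htmem)
  have hddlt : dd < δmax := by
    rcases lt_or_eq_of_le hddmax with h | h
    · exact h
    · exfalso
      -- the big symmetric interval covers the core at time N, exiting the window
      have hc1mem : σ/2 ∈ tcore σ := ⟨by nlinarith [c2_lt_half h1 h2], le_rfl⟩
      have hNcov := hcov (N-1) (by omega)
      have hIstar : Icc (σ*(σ*(1-σ/2))) (σ/2) = tentm σ '' Icc (σ*(1-σ/2)) (1/2) := by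
        rw [img_le hσ (le_of_lt (c2_lt_half h1 h2)) le_rfl]
        rw [show σ*(1/2) = σ/2 by ring]
      have : σ/2 ∈ (tentm σ)^[N] '' Icc (σ*(1-σ/2)) (1/2) := by
        have h1' := hNcov hc1mem
        rw [hIstar] at h1'
        rw [← iter_image_succ] at h1'
        rwa [show N - 1 + 1 = N by omega] at h1'
      obtain ⟨u, hu, huv⟩ := this
      have habs : |u - 1/2| ≤ dd := by
        rw [h]
        rw [abs_le]
        constructor
        · linarith [hu.1, hc2δ ▸ hu.1]
        · linarith [hu.2]
      have := hcond u habs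
      rw [huv] at this
      have hvρ : v + ρ < σ/2 := (hJin ⟨by linarith, le_rfl⟩).2
      linarith [this.2]
  -- construct the exit point w
  have hnotA : ∀ i : ℕ, ∃ u : ℝ, |u - 1/2| ≤ min (dd + 1/((i:ℝ)+1)) δmax ∧
      (tentm σ)^[N] u ∉ Icc (v - ρ) (v + ρ) := by
    intro i
    have hgt : dd < min (dd + 1/((i:ℝ)+1)) δmax := by
      apply lt_min _ hddlt
      have : (0:ℝ) < 1/((i:ℝ)+1) := by positivity
      linarith
    have hnot : min (dd + 1/((i:ℝ)+1)) δmax ∉ A := by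
      intro hmem
      exact absurd (le_csSup hbdd hmem) (not_le.mpr hgt)
    by_contra hcon
    push_neg at hcon
    exact hnot ⟨by positivity, min_le_right _ _, fun u hu => hcon u hu⟩
  choose U hU1 hU2 using hnotA
  have hUmem : ∀ i, U i ∈ Icc (1/2 - δmax) (1/2 + δmax) := by
    intro i
    have h := le_trans (hU1 i) (min_le_right _ _)
    rw [abs_le] at h
    constructor <;> [linarith [h.1]; linarith [h.2]]
  obtain ⟨w, hwmem, ψ, hψ, hwconv⟩ := isCompact_Icc.tendsto_subseq hUmem
  have hwabs : |w - 1/2| ≤ dd := by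
    have hle : ∀ i, |U (ψ i) - 1/2| ≤ dd + 1/((i:ℝ)+1) := by
      intro i
      refine le_trans (hU1 (ψ i)) (le_trans (min_le_left _ _) ?_)
      have hψi : (i:ℝ) ≤ (ψ i : ℝ) := by exact_mod_cast hψ.id_le i
      have : 1/((ψ i:ℝ)+1) ≤ 1/((i:ℝ)+1) := by
        apply div_le_div_of_nonneg_left (by norm_num) (by positivity)
        linarith
      linarith
    have hlim1 : Tendsto (fun i => |U (ψ i) - 1/2|) atTop (𝓝 (|w - 1/2|)) := by
      apply Tendsto.abs
      exact Tendsto.sub_const hwconv _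
    have hlim2 : Tendsto (fun i : ℕ => dd + 1/((i:ℝ)+1)) atTop (𝓝 (dd + 0)) :=
      tendsto_const_nhds.add tendsto_one_div_add_atTop_nhds_zero_nat
    rw [add_zero] at hlim2
    exact le_of_tendsto_of_tendsto' hlim1 hlim2 hle
  refine ⟨dd, hdd0, hddmax, hcond, w, hwabs, ?_⟩
  have htmem : (tentm σ)^[N] w ∈ Icc (v - ρ) (v + ρ) := hcond w hwabs
  have htnot : (tentm σ)^[N] w ∉ Ioo (v - ρ) (v + ρ) := by
    have hcl : IsClosed (Ioo (v-ρ) (v+ρ))ᶜ := isOpen_Ioo.isClosed_compl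
    have hconv2 : Tendsto (fun i => (tentm σ)^[N] (U (ψ i))) atTop
        (𝓝 ((tentm σ)^[N] w)) :=
      (((tentm_continuous σ).iterate N).continuousAt).tendsto.comp hwconv
    apply hcl.mem_of_tendsto hconv2
    filter_upwards with i
    intro hin
    exact hU2 (ψ i) (Ioo_subset_Icc_self hin)
  rcases htmem with ⟨hl, hr⟩
  by_contra hcon
  push_neg at hcon
  apply htnot
  constructor
  · rcases lt_or_eq_of_le hl with h | h
    · exact h
    · exact absurd h.symm hcon.1
  · rcases lt_or_eq_of_le hr with h | h
    · exact h
    · exact absurd h hcon.2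

/-- A continuous injective function on an interval takes values between its endpoint values. -/
lemma between_of_injOn {F : ℝ → ℝ} {p q : ℝ} (hpq : p ≤ q) (hcont : ContinuousOn F (Icc p q))
    (hinj : ∀ x ∈ Icc p q, ∀ y ∈ Icc p q, F x = F y → x = y) :
    ∀ z ∈ Icc p q, min (F p) (F q) ≤ F z ∧ F z ≤ max (F p) (F q) := by
  intro z hz
  constructor
  · by_contra hcon
    push_neg at hcon
    set w := (F z + min (F p) (F q))/2 with hw
    have hw1 : F z < w := by
      rw [hw]; linarith
    have hw2 : w < min (F p) (F q) := by
      rw [hw]; linarith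
    have hr₁ : w ∈ F '' Icc p z := by
      apply intermediate_value_Icc' hz.1 (hcont.mono (Icc_subset_Icc le_rfl hz.2))
      exact ⟨le_of_lt hw1, le_of_lt (lt_of_lt_of_le hw2 (min_le_left _ _))⟩
    have hr₂ : w ∈ F '' Icc z q := by
      apply intermediate_value_Icc hz.2 (hcont.mono (Icc_subset_Icc hz.1 le_rfl))
      exact ⟨le_of_lt hw1, le_of_lt (lt_of_lt_of_le hw2 (min_le_right _ _))⟩
    obtain ⟨r₁, hr₁m, hr₁v⟩ := hr₁
    obtain ⟨r₂, hr₂m, hr₂v⟩ := hr₂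
    have he : r₁ = r₂ := by
      apply hinj r₁ ⟨hr₁m.1, le_trans hr₁m.2 hz.2⟩ r₂ ⟨le_trans hz.1 hr₂m.1, hr₂m.2⟩
      rw [hr₁v, hr₂v]
    have hzr : r₁ = z := le_antisymm hr₁m.2 (he ▸ hr₂m.1)
    rw [hzr] at hr₁v
    linarith [hr₁v ▸ hw1]
  · by_contra hcon
    push_neg at hcon
    set w := (max (F p) (F q) + F z)/2 with hw
    have hw1 : w < F z := by
      rw [hw]; linarith
    have hw2 : max (F p) (F q) < w := by
      rw [hw]; linarith
    have hr₁ : w ∈ F '' Icc p z := by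
      apply intermediate_value_Icc hz.1 (hcont.mono (Icc_subset_Icc le_rfl hz.2))
      exact ⟨le_of_lt (lt_of_le_of_lt (le_max_left _ _) hw2), le_of_lt hw1⟩
    have hr₂ : w ∈ F '' Icc z q := by
      apply intermediate_value_Icc' hz.2 (hcont.mono (Icc_subset_Icc hz.1 le_rfl))
      exact ⟨le_of_lt (lt_of_le_of_lt (le_max_right _ _) hw2), le_of_lt hw1⟩
    obtain ⟨r₁, hr₁m, hr₁v⟩ := hr₁
    obtain ⟨r₂, hr₂m, hr₂v⟩ := hr₂
    have he : r₁ = r₂ := by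
      apply hinj r₁ ⟨hr₁m.1, le_trans hr₁m.2 hz.2⟩ r₂ ⟨le_trans hz.1 hr₂m.1, hr₂m.2⟩
      rw [hr₁v, hr₂v]
    have hzr : r₁ = z := le_antisymm hr₁m.2 (he ▸ hr₂m.1)
    rw [hzr] at hr₁v
    linarith [hr₁v ▸ hw1]

lemma abs_diff_le_of_between {x P Q : ℝ} (h1 : min Q P ≤ x) (h2 : x ≤ max Q P) :
    |x - P| ≤ |P - Q| := by
  rcases le_total Q P with h | h
  · rw [min_eq_left h] at h1
    rw [max_eq_right h] at h2
    rw [abs_of_nonneg (by linarith : (0:ℝ) ≤ P - Q)]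
    rw [abs_le]
    constructor <;> linarith
  · rw [min_eq_right h] at h1
    rw [max_eq_left h] at h2
    rw [abs_of_nonpos (by linarith : P - Q ≤ 0), abs_le]
    constructor <;> linarith

/-- Selection of a window strictly inside an interval, close to a given point. -/
lemma window_selection {c2 c1 w η : ℝ} (hcc : c2 < c1) (hw : c2 ≤ w) (hw2 : w ≤ c1)
    (hη : 0 < η) :
    ∃ v ρ : ℝ, 0 < ρ ∧ Icc (v - ρ) (v + ρ) ⊆ Ioo c2 c1 ∧
      ∀ x ∈ Icc (v - ρ) (v + ρ), |x - w| < η := by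
  set m := min η (c1 - c2) / 4 with hm
  have hm0 : 0 < m := by
    rw [hm]
    have : 0 < min η (c1 - c2) := lt_min hη (by linarith)
    linarith
  have hmη : m ≤ η / 4 := by
    rw [hm]
    have := min_le_left η (c1 - c2)
    linarith
  have hmc : m ≤ (c1 - c2)/4 := by
    rw [hm]
    have := min_le_right η (c1 - c2)
    linarith
  rcases le_total w ((c2 + c1)/2) with hcase | hcase
  · refine ⟨w + m, m/4, by linarith, ?_, ?_⟩
    · intro x hx
      rcases hx with ⟨hx1, hx2⟩
      constructor
      · linarith
      · linarith
    · intro x hx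
      rcases hx with ⟨hx1, hx2⟩
      rw [abs_lt]
      constructor <;> linarith
  · refine ⟨w - m, m/4, by linarith, ?_, ?_⟩
    · intro x hx
      rcases hx with ⟨hx1, hx2⟩
      constructor
      · linarith
      · linarith
    · intro x hx
      rcases hx with ⟨hx1, hx2⟩
      rw [abs_lt]
      constructor <;> linarith

/-- If the critical orbit closure `ω(c)` of a tent map `T` is a Cantor
set with `c` recurrent, then the inverse limit `X` of `T` contains no subcontinuum
homeomorphic to the core inverse limit of a tent map whose critical orbit is dense in
its core. -/
theorem stmt18 (s : ℝ) (hs : s ∈ Set.Ioc (Real.sqrt 2) 2) (T : ℝ → ℝ)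
    (hT : ∀ x, T x = min (s * x) (s * (1 - x))) (c : ℝ) (hc : c = 1/2)
    (hinf : Function.Injective fun n : ℕ => T^[n] c)
    (hrec : c ∈ omegaSet T c)
    (hCantor : Perfect (omegaSet T c) ∧ IsTotallyDisconnected (omegaSet T c))
    (s' : ℝ) (hs' : s' ∈ Set.Ioc (Real.sqrt 2) 2) (T' : ℝ → ℝ)
    (hT' : ∀ x, T' x = min (s' * x) (s' * (1 - x)))
    (hdense : Set.Icc (T'^[2] c) (T' c) ⊆ closure {y | ∃ n : ℕ, 1 ≤ n ∧ y = T'^[n] c})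
    (H : Set (InvLim T (Set.Icc 0 1))) (hne : H.Nonempty)
    (hcomp : IsCompact H) (hconn : IsConnected H) :
    ¬ Nonempty (H ≃ₜ InvLim T' (Set.Icc (T'^[2] c) (T' c))) := by
  intro hnon
  obtain ⟨e0⟩ := hnon
  subst hc
  have hTf : T = tentm s := funext fun x => by rw [hT x]; rfl
  have hT'f : T' = tentm s' := funext fun x => by rw [hT' x]; rfl
  subst hTf
  subst hT'f
  obtain ⟨hs1, hs2⟩ := hs
  obtain ⟨hs'1, hs'2⟩ := hs'
  have hsqrt2 : (1:ℝ) < Real.sqrt 2 := by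
    rw [show (1:ℝ) = Real.sqrt 1 by simp]
    exact Real.sqrt_lt_sqrt (by norm_num) (by norm_num)
  have hs1' : 1 < s := lt_trans hsqrt2 hs1
  have hs'1' : 1 < s' := lt_trans hsqrt2 hs'1
  have hsq' : 2 < s'^2 := by
    have h0 : (0:ℝ) ≤ Real.sqrt 2 := Real.sqrt_nonneg 2
    nlinarith [Real.sq_sqrt (by norm_num : (0:ℝ) ≤ 2)]
  have hspos : (0:ℝ) < s := by linarith
  have hKeq : Icc ((tentm s')^[2] (1/2)) (tentm s' (1/2)) = tcore s' :=
    tcore_eq (le_of_lt hs'1')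
  rw [hKeq] at hdense
  set e : ↥H ≃ₜ InvLim (tentm s') (tcore s') := e0.trans (invLimCongr hKeq) with he
  haveI : CompactSpace (InvLim (tentm s') (tcore s')) := invLim_compactSpace
  haveI : FirstCountableTopology (InvLim (tentm s') (tcore s')) :=
    (Topology.IsEmbedding.subtypeVal (X := ℕ → ℝ)).firstCountableTopology
  -- X-side data
  set P := closure (range fun n : ℕ => (tentm s)^[n] (1/2)) with hPdef
  have hPint : interior P = ∅ := orbitClosure_interior_empty hCantor.1.closed hCantor.2
  have hPclosed : IsClosed P := isClosed_closure
  -- two distinct points downstairs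
  have h12 : (1:ℝ)/2 ∈ tcore s' := half_mem_tcore hs'1' hs'2
  have hc1m : s'/2 ∈ tcore s' := ⟨by nlinarith [c2_lt_half hs'1' hs'2], le_rfl⟩
  have hy12 : threadY hs'1' hs'2 0 h12 ≠ threadY hs'1' hs'2 0 hc1m := by
    intro hcon
    have h0 : (threadY hs'1' hs'2 0 h12).1 0 = (threadY hs'1' hs'2 0 hc1m).1 0 := by rw [hcon]
    have e1 : (threadY hs'1' hs'2 0 h12).1 0 = 1/2 := threadF_apply_L s' 0 _
    have e2 : (threadY hs'1' hs'2 0 hc1m).1 0 = s'/2 := threadF_apply_L s' 0 _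
    rw [e1, e2] at h0
    linarith
  set x₁ : ↥H := e.symm (threadY hs'1' hs'2 0 h12) with hx₁
  set x₂ : ↥H := e.symm (threadY hs'1' hs'2 0 hc1m) with hx₂
  have hx12 : (x₁ : InvLim (tentm s) (Icc 0 1)) ≠ (x₂ : InvLim (tentm s) (Icc 0 1)) := by
    intro hcon
    apply hy12
    have hxx : x₁ = x₂ := Subtype.ext hcon
    calc threadY hs'1' hs'2 0 h12 = e x₁ := (e.apply_symm_apply _).symm
      _ = e x₂ := by rw [hxx]
      _ = threadY hs'1' hs'2 0 hc1m := e.apply_symm_apply _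
  -- a coordinate escaping the orbit closure
  have hex : ∃ xs : InvLim (tentm s) (Icc 0 1), xs ∈ H ∧ ∃ n : ℕ, xs.1 n ∉ P := by
    by_contra hcon
    push_neg at hcon
    have hsub := allP_subsingleton hconn.isPreconnected hPint hcon
    exact hx12 (hsub _ x₁.2 _ x₂.2)
  obtain ⟨xs, hxsH, n, hxn⟩ := hex
  obtain ⟨ε, hε, hball⟩ := Metric.isOpen_iff.mp hPclosed.isOpen_compl _ hxn
  set aw := xs.1 n - ε/2 with haw
  set bw := xs.1 n + ε/2 with hbw
  have hwinP : ∀ w ∈ Icc aw bw, w ∉ P := by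
    intro w hw
    apply hball
    rw [Metric.mem_ball, Real.dist_eq, abs_lt]
    constructor
    · rw [haw] at hw; linarith [hw.1]
    · rw [hbw] at hw; linarith [hw.2]
  have hdisjorb : ∀ k : ℕ, (tentm s)^[k] (1/2) ∉ Icc aw bw := by
    intro k hk
    exact hwinP _ hk (subset_closure ⟨k, rfl⟩)
  -- open set V in H and its image
  set V : Set ↥H := {x : ↥H | x.1.1 n ∈ Ioo aw bw} with hV
  have hVopen : IsOpen V := by
    have hcont : Continuous (fun x : ↥H => x.1.1 n) :=
      (continuous_apply n).comp (continuous_subtype_val.comp continuous_subtype_val)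
    exact hcont.isOpen_preimage _ isOpen_Ioo
  have hVx : (⟨xs, hxsH⟩ : ↥H) ∈ V := by
    constructor
    · rw [haw]; linarith
    · rw [hbw]; linarith
  set UY := e '' V with hUY
  have hUYopen : IsOpen UY := e.isOpen_image.mpr hVopen
  have hystar : e ⟨xs, hxsH⟩ ∈ UY := ⟨_, hVx, rfl⟩
  obtain ⟨M, η, hη, hcyl⟩ := cylinder_subset_open hs'1' hUYopen hystar
  have hyM : (e ⟨xs, hxsH⟩).1 M ∈ tcore s' := (e ⟨xs, hxsH⟩).2.1 M
  obtain ⟨v, ρ, hρ, hJin, hJnear⟩ := window_selection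
    (by nlinarith [c2_lt_half hs'1' hs'2] : s'*(1-s'/2) < s'/2) hyM.1 hyM.2 hη
  set cylY : Set (InvLim (tentm s') (tcore s')) :=
    {y | y.1 M ∈ Icc (v - ρ) (v + ρ)} with hcylYdef
  have hcylclosed : IsClosed cylY := IsClosed.preimage (coordY_continuous M) isClosed_Icc
  have hcylsub : cylY ⊆ UY := fun z hz => hcyl z (hJnear _ hz)
  -- transported coordinate function
  set g : InvLim (tentm s') (tcore s') → ℝ :=
    fun z => ((e.symm z : ↥H) : InvLim (tentm s) (Icc 0 1)).1 n with hgdef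
  have hgcont : Continuous g :=
    (continuous_apply n).comp (continuous_subtype_val.comp
      (continuous_subtype_val.comp e.symm.continuous))
  have hwinY : ∀ z ∈ cylY, g z ∈ Ioo aw bw := by
    intro z hz
    obtain ⟨x, hxV, hxe⟩ := hcylsub hz
    have hzz : e.symm z = x := by rw [← hxe, e.symm_apply_apply]
    show ((e.symm z : ↥H) : InvLim (tentm s) (Icc 0 1)).1 n ∈ Ioo aw bw
    rw [hzz]
    exact hxV
  -- injectivity of g on preconnected subsets of the cylinder
  have hginj : ∀ SS : Set (InvLim (tentm s') (tcore s')), IsPreconnected SS → SS ⊆ cylY →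
      ∀ z₁ ∈ SS, ∀ z₂ ∈ SS, g z₁ = g z₂ → z₁ = z₂ := by
    intro SS hpre hsubc z₁ h₁ z₂ h₂ hgz
    set G : InvLim (tentm s') (tcore s') → InvLim (tentm s) (Icc 0 1) :=
      fun z => ((e.symm z : ↥H) : InvLim (tentm s) (Icc 0 1)) with hGdef
    have hGcont : Continuous G :=
      continuous_subtype_val.comp e.symm.continuous
    have hpre' : IsPreconnected (G '' SS) := hpre.image G hGcont.continuousOn
    have hwin' : ∀ x ∈ G '' SS, x.1 n ∈ Icc aw bw := by
      rintro x ⟨z, hz, rfl⟩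
      exact Ioo_subset_Icc_self (hwinY z (hsubc hz))
    have hGeq := gap_lemma hspos hpre' hwin' hdisjorb (G z₁) ⟨z₁, h₁, rfl⟩
      (G z₂) ⟨z₂, h₂, rfl⟩ hgz
    have h2 : e.symm z₁ = e.symm z₂ := Subtype.ext hGeq
    calc z₁ = e (e.symm z₁) := (e.apply_symm_apply _).symm
      _ = e (e.symm z₂) := by rw [h2]
      _ = z₂ := e.apply_symm_apply _
  -- covering exponent and returns
  obtain ⟨j₀, hcov⟩ := cover_Istar hs'1' hs'2 hsq'
  have hIoosub : Ioo (v - ρ/3) (v + ρ/3) ⊆ tcore s' := by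
    intro x hx
    have hxin : x ∈ Icc (v - ρ) (v + ρ) := ⟨by linarith [hx.1], by linarith [hx.2]⟩
    exact Ioo_subset_Icc_self (hJin hxin)
  have hNex : ∀ k : ℕ, ∃ N, (max k (j₀+1)) ≤ N ∧ 1 ≤ N ∧
      (tentm s')^[N] (1/2) ∈ Ioo (v - ρ/3) (v + ρ/3) :=
    fun k => orbit_returns (by linarith : v - ρ/3 < v + ρ/3) hIoosub hdense (max k (j₀+1))
  choose NN hNN1 hNN2 hNN3 using hNex
  have hNNk : ∀ k, k ≤ NN k := fun k => le_trans (le_max_left _ _) (hNN1 k)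
  have hNNj : ∀ k, j₀ + 1 ≤ NN k := fun k => le_trans (le_max_right _ _) (hNN1 k)
  -- stopping data
  have hstop : ∀ k, ∃ dd, 0 ≤ dd ∧ dd ≤ (s'-1)^2/2 ∧
      (∀ u, |u - 1/2| ≤ dd → (tentm s')^[NN k] u ∈ Icc (v - ρ) (v + ρ)) ∧
      ∃ w, |w - 1/2| ≤ dd ∧
        ((tentm s')^[NN k] w = v - ρ ∨ (tentm s')^[NN k] w = v + ρ) :=
    fun k => stopping hs'1' hs'2 hρ hJin hcov (hNNj k) (Ioo_subset_Icc_self (hNN3 k))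
  choose dd hdd0 hddm hddcond WW hWW1 hWW2 using hstop
  have hdom : ∀ (k : ℕ) (u : ℝ), |u - 1/2| ≤ dd k → u ∈ tcore s' := by
    intro k u hu
    have h1 := le_trans hu (hddm k)
    rw [abs_le] at h1
    constructor
    · nlinarith [h1.1]
    · nlinarith [h1.2]
  have hclamp : ∀ (k : ℕ) (u : ℝ), |clampI (1/2 - dd k) (1/2 + dd k) u - 1/2| ≤ dd k := by
    intro k u
    have hm := clampI_mem (by linarith [hdd0 k] : 1/2 - dd k ≤ 1/2 + dd k) u
    rw [abs_le]
    constructor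
    · linarith [hm.1]
    · linarith [hm.2]
  -- hairpin maps
  set θ : ℕ → ℝ → InvLim (tentm s') (tcore s') := fun k u =>
    ⟨threadF s' (M + NN k) (clampI (1/2 - dd k) (1/2 + dd k) u),
     fun j => threadF_mem hs'1' hs'2 (hdom k _ (hclamp k u)) (M + NN k) j,
     fun j => threadF_rel hs'1' hs'2 (hdom k _ (hclamp k u)) (M + NN k) j⟩ with hθ
  have hθcont : ∀ k, Continuous (θ k) := by
    intro k
    apply Continuous.subtype_mk
    exact continuous_pi (fun j =>
      (threadF_continuous s' (M + NN k) j).comp (clampI_continuous _ _))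
  have hθval : ∀ k u, u ∈ Icc (1/2 - dd k) (1/2 + dd k) →
      (θ k u).1 = threadF s' (M + NN k) u := by
    intro k u hu
    simp only [hθ]
    rw [clampI_of_mem hu]
  have hθcoordM : ∀ k u, u ∈ Icc (1/2 - dd k) (1/2 + dd k) →
      (θ k u).1 M = (tentm s')^[NN k] u := by
    intro k u hu
    rw [hθval k u hu, threadF_coord_le s' (by omega : M ≤ M + NN k) u,
      show M + NN k - M = NN k by omega]
  set HC : ℕ → Set (InvLim (tentm s') (tcore s')) :=
    fun k => θ k '' Icc (1/2 - dd k) (1/2 + dd k) with hHCdef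
  have hHCpre : ∀ k, IsPreconnected (HC k) := fun k =>
    isPreconnected_Icc.image _ (hθcont k).continuousOn
  have hHCsub : ∀ k, HC k ⊆ cylY := by
    rintro k z ⟨u, hu, rfl⟩
    show (θ k u).1 M ∈ Icc (v - ρ) (v + ρ)
    rw [hθcoordM k u hu]
    apply hddcond k u
    rw [abs_le]
    constructor
    · linarith [hu.1]
    · linarith [hu.2]
  -- marked points
  set aP : ℕ → InvLim (tentm s') (tcore s') := fun k => θ k (1/2) with haPdef
  set bP : ℕ → InvLim (tentm s') (tcore s') := fun k => θ k (WW k) with hbPdef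
  set AP : ℕ → InvLim (tentm s') (tcore s') := fun k => θ k (1/2 + dd k) with hAPdef
  set BP : ℕ → InvLim (tentm s') (tcore s') := fun k => θ k (1/2 - dd k) with hBPdef
  have hmem12 : ∀ k, (1:ℝ)/2 ∈ Icc (1/2 - dd k) (1/2 + dd k) :=
    fun k => ⟨by linarith [hdd0 k], by linarith [hdd0 k]⟩
  have hmemW : ∀ k, WW k ∈ Icc (1/2 - dd k) (1/2 + dd k) := by
    intro k
    have := hWW1 k
    rw [abs_le] at this
    constructor
    · linarith [this.1]
    · linarith [this.2]
  have hmemA : ∀ k, (1:ℝ)/2 + dd k ∈ Icc (1/2 - dd k) (1/2 + dd k) :=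
    fun k => ⟨by linarith [hdd0 k], le_rfl⟩
  have hmemB : ∀ k, (1:ℝ)/2 - dd k ∈ Icc (1/2 - dd k) (1/2 + dd k) :=
    fun k => ⟨le_rfl, by linarith [hdd0 k]⟩
  have haPmem : ∀ k, aP k ∈ HC k := fun k => ⟨1/2, hmem12 k, rfl⟩
  have hbPmem : ∀ k, bP k ∈ HC k := fun k => ⟨WW k, hmemW k, rfl⟩
  have haPcoord : ∀ k, (aP k).1 M ∈ Icc (v - ρ/3) (v + ρ/3) := by
    intro k
    show (θ k (1/2)).1 M ∈ Icc (v - ρ/3) (v + ρ/3)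
    rw [hθcoordM k _ (hmem12 k)]
    exact Ioo_subset_Icc_self (hNN3 k)
  have hbPcoord : ∀ k, (bP k).1 M = v - ρ ∨ (bP k).1 M = v + ρ := by
    intro k
    show (θ k (WW k)).1 M = v - ρ ∨ (θ k (WW k)).1 M = v + ρ
    rw [hθcoordM k _ (hmemW k)]
    exact hWW2 k
  have hmirror : ∀ k j, j < M + NN k → (AP k).1 j = (BP k).1 j := by
    intro k j hj
    show (θ k (1/2 + dd k)).1 j = (θ k (1/2 - dd k)).1 j
    rw [hθval k _ (hmemA k), hθval k _ (hmemB k)]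
    exact threadF_mirror hj (dd k)
  -- subsequence extraction
  obtain ⟨aL, -, φ₁, hφ₁, ha1⟩ := isCompact_univ.tendsto_subseq (x := aP)
    (fun _ => Set.mem_univ _)
  obtain ⟨bL, -, φ₂, hφ₂, hb1⟩ := isCompact_univ.tendsto_subseq
    (x := fun i => bP (φ₁ i)) (fun _ => Set.mem_univ _)
  obtain ⟨AL, -, φ₃, hφ₃, hA1⟩ := isCompact_univ.tendsto_subseq
    (x := fun i => AP (φ₁ (φ₂ i))) (fun _ => Set.mem_univ _)
  obtain ⟨BL, -, φ₄, hφ₄, hB1⟩ := isCompact_univ.tendsto_subseq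
    (x := fun i => BP (φ₁ (φ₂ (φ₃ i)))) (fun _ => Set.mem_univ _)
  set ψ : ℕ → ℕ := fun i => φ₁ (φ₂ (φ₃ (φ₄ i))) with hψdef
  have hψ : StrictMono ψ := hφ₁.comp (hφ₂.comp (hφ₃.comp hφ₄))
  have haψ : Tendsto (fun i => aP (ψ i)) atTop (𝓝 aL) :=
    ha1.comp ((hφ₂.comp (hφ₃.comp hφ₄)).tendsto_atTop)
  have hbψ : Tendsto (fun i => bP (ψ i)) atTop (𝓝 bL) :=
    hb1.comp ((hφ₃.comp hφ₄).tendsto_atTop)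
  have hAψ : Tendsto (fun i => AP (ψ i)) atTop (𝓝 AL) :=
    hA1.comp (hφ₄.tendsto_atTop)
  have hBψ : Tendsto (fun i => BP (ψ i)) atTop (𝓝 BL) := hB1
  -- limit superior continuum
  set C : ℕ → Set (InvLim (tentm s') (tcore s')) := fun i => HC (ψ i) with hCdef
  have hSpre : IsPreconnected (limsupSet C) :=
    limsupSet_preconnected C (fun i => hHCpre _) (fun i => aP (ψ i))
      (fun i => haPmem _) haψ
  have haLS : aL ∈ limsupSet C :=
    mem_limsupSet_of_tendsto (fun i => le_rfl) (fun i => haPmem (ψ i)) haψ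
  have hbLS : bL ∈ limsupSet C :=
    mem_limsupSet_of_tendsto (fun i => le_rfl) (fun i => hbPmem (ψ i)) hbψ
  have hSsubcyl : limsupSet C ⊆ cylY :=
    limsupSet_subset_of_tail (K := 0) hcylclosed (fun k _ => hHCsub (ψ k))
  -- the marked limits are distinct
  have haLM : aL.1 M ∈ Icc (v - ρ/3) (v + ρ/3) :=
    isClosed_Icc.mem_of_tendsto ((coordY_continuous M).continuousAt.tendsto.comp haψ)
      (Filter.Eventually.of_forall (fun i => haPcoord (ψ i)))
  have hbLM : bL.1 M ∈ ({v - ρ, v + ρ} : Set ℝ) := by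
    have hfin : ({v - ρ, v + ρ} : Set ℝ).Finite := Set.Finite.insert _ (Set.finite_singleton _)
    apply hfin.isClosed.mem_of_tendsto
      ((coordY_continuous M).continuousAt.tendsto.comp hbψ)
    filter_upwards with i
    rcases hbPcoord (ψ i) with h | h
    · exact Or.inl h
    · exact Or.inr h
  have habne : aL ≠ bL := by
    intro hcon
    rw [hcon] at haLM
    rcases hbLM with h | h
    · rw [h] at haLM
      linarith [haLM.1]
    · rw [Set.mem_singleton_iff.mp h] at haLM
      linarith [haLM.2]
  -- the hairpin endpoints have the same limit
  have hALBL : AL = BL := by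
    apply invLim_ext
    intro j
    have h1 : Tendsto (fun i => (AP (ψ i)).1 j) atTop (𝓝 (AL.1 j)) :=
      (coordY_continuous j).continuousAt.tendsto.comp hAψ
    have h2 : Tendsto (fun i => (BP (ψ i)).1 j) atTop (𝓝 (BL.1 j)) :=
      (coordY_continuous j).continuousAt.tendsto.comp hBψ
    have heq : (fun i => (AP (ψ i)).1 j) =ᶠ[atTop] (fun i => (BP (ψ i)).1 j) := by
      filter_upwards [Filter.eventually_ge_atTop (j+1)] with i hi
      apply hmirror
      have e1 : i ≤ ψ i := hψ.id_le i
      have e2 : ψ i ≤ NN (ψ i) := hNNk _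
      omega
    exact tendsto_nhds_unique (h1.congr' heq) h2
  set ℓv := g AL with hℓv
  have hgA : Tendsto (fun i => g (AP (ψ i))) atTop (𝓝 ℓv) :=
    hgcont.continuousAt.tendsto.comp hAψ
  have hgB : Tendsto (fun i => g (BP (ψ i))) atTop (𝓝 ℓv) := by
    rw [hℓv, hALBL]
    exact hgcont.continuousAt.tendsto.comp hBψ
  -- betweenness control
  have hbetween : ∀ k, ∀ z ∈ HC k, |g z - g (AP k)| ≤ |g (AP k) - g (BP k)| := by
    intro k z hz
    obtain ⟨u, hu, rfl⟩ := hz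
    have hFcont : ContinuousOn (fun u => g (θ k u)) (Icc (1/2 - dd k) (1/2 + dd k)) :=
      (hgcont.comp (hθcont k)).continuousOn
    have hFinj : ∀ x ∈ Icc (1/2 - dd k) (1/2 + dd k),
        ∀ y ∈ Icc (1/2 - dd k) (1/2 + dd k), g (θ k x) = g (θ k y) → x = y := by
      intro x hx y hy hFxy
      have hθeq : θ k x = θ k y :=
        hginj (HC k) (hHCpre k) (hHCsub k) _ ⟨x, hx, rfl⟩ _ ⟨y, hy, rfl⟩ hFxy
      have hLc : (θ k x).1 (M + NN k) = (θ k y).1 (M + NN k) := by rw [hθeq]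
      rw [hθval k x hx, hθval k y hy, threadF_apply_L, threadF_apply_L] at hLc
      exact hLc
    have hb := between_of_injOn (by linarith [hdd0 k]) hFcont hFinj u hu
    have hFA : g (θ k (1/2 + dd k)) = g (AP k) := rfl
    have hFB : g (θ k (1/2 - dd k)) = g (BP k) := rfl
    rw [hFA, hFB] at hb
    exact abs_diff_le_of_between hb.1 hb.2
  have hdiam : Tendsto (fun i => |g (AP (ψ i)) - g (BP (ψ i))|) atTop (𝓝 0) := by
    have := (hgA.sub hgB).abs
    simpa using this
  -- g is constant on the limsup
  have hgconst : ∀ z ∈ limsupSet C, g z = ℓv := by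
    intro z hz
    obtain ⟨Bb, hBb⟩ := (nhds (X := InvLim (tentm s') (tcore s')) z).exists_antitone_basis
    have hpick : ∀ i : ℕ, ∃ w, w ∈ Bb i ∧ ∃ kk, i ≤ kk ∧ w ∈ C kk := by
      intro i
      have hzi : z ∈ closure (tailUnion C i) := Set.mem_iInter.mp hz i
      rw [mem_closure_iff_nhds] at hzi
      obtain ⟨w, hw1, hw2⟩ := hzi (Bb i) (hBb.toHasBasis.mem_of_mem trivial)
      obtain ⟨kk, hkk, hwkk⟩ := Set.mem_iUnion₂.mp hw2
      exact ⟨w, hw1, kk, hkk, hwkk⟩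
    choose w hw1 kk hkk hw2 using hpick
    have hwz : Tendsto w atTop (𝓝 z) := hBb.tendsto hw1
    have hkkatTop : Tendsto kk atTop atTop := tendsto_atTop_mono hkk tendsto_id
    have h1 : Tendsto (fun i => |g (AP (ψ (kk i))) - ℓv|) atTop (𝓝 0) := by
      have ht : Tendsto (fun i => g (AP (ψ (kk i)))) atTop (𝓝 ℓv) := hgA.comp hkkatTop
      have := (ht.sub (tendsto_const_nhds (x := ℓv))).abs
      simpa using this
    have h2 : Tendsto (fun i => |g (w i) - g (AP (ψ (kk i)))|) atTop (𝓝 0) := by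
      apply squeeze_zero (fun i => abs_nonneg _)
        (fun i => hbetween (ψ (kk i)) _ (hw2 i)) (hdiam.comp hkkatTop)
    have h3 : Tendsto (fun i => |g (w i) - ℓv|) atTop (𝓝 0) := by
      apply squeeze_zero (fun i => abs_nonneg _)
        (fun i => abs_sub_le (g (w i)) (g (AP (ψ (kk i)))) ℓv)
      have := h2.add h1
      simpa using this
    have h4 : Tendsto (fun i => g (w i)) atTop (𝓝 ℓv) := by
      rw [tendsto_iff_dist_tendsto_zero]
      simpa [Real.dist_eq] using h3
    have h5 : Tendsto (fun i => g (w i)) atTop (𝓝 (g z)) :=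
      hgcont.continuousAt.tendsto.comp hwz
    exact tendsto_nhds_unique h5 h4
  exact habne (hginj _ hSpre hSsubcyl aL haLS bL hbLS
    (by rw [hgconst aL haLS, hgconst bL hbLS]))
end
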